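/- arXiv:1912.03228 — 14 statements merged into one kernel-verified Lean document; each statement's English description precedes it below -/
import Mathlib

section
/- Let N be a finite-dimensional complex vector space, M ⊂ N a hyperplane, and L ⊂ N a line with N = M ⊕ L. Let {M_i}_{i∈I} and {M'_i}_{i∈I} be two collections of subspaces of M indexed by a set I, and let I₀ ⊂ I. If there exists g ∈ GL(N) such that g(M_i) = M'_i for all i ∈ I₀ and g(M_i ⊕ L) = M'_i ⊕ L for all i ∈ I \ I₀, then there exists h ∈ GL(M) with h(M_i) = M'_i for all i ∈ I. -/
open Submodule Module

/-- Helper: if a linear map fixes a submodule pointwise, it maps it to itself. -/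
private theorem map_eq_self_of_fix {R N : Type*} [CommRing R] [AddCommGroup N] [Module R N]
    (f : N →ₗ[R] N) (S : Submodule R N) (hfS : ∀ x ∈ S, f x = x) :
    Submodule.map f S = S := by
  apply le_antisymm
  · rintro y ⟨x, hx, rfl⟩
    rw [hfS x hx]; exact hx
  · intro y hy
    exact ⟨y, hy, hfS y hy⟩

/-- The key special case: if moreover `g(M) ∩ L = 0`, then `h := π ∘ g ∘ ι` works,
where `π : N → M` is the projection along `L`. -/
private theorem auxA {N : Type*} [AddCommGroup N] [Module ℂ N] [FiniteDimensional ℂ N]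
    (M L : Submodule ℂ N) (hcompl : IsCompl M L)
    {I : Type*} (I₀ : Set I) (Mi Mi' : I → Submodule ℂ ↥M)
    (g : N ≃ₗ[ℂ] N)
    (hdisj : Submodule.map (g : N →ₗ[ℂ] N) M ⊓ L = ⊥)
    (hg₀ : ∀ i ∈ I₀, Submodule.map (g : N →ₗ[ℂ] N) (Submodule.map M.subtype (Mi i)) =
        Submodule.map M.subtype (Mi' i))
    (hg₁ : ∀ i ∉ I₀, Submodule.map (g : N →ₗ[ℂ] N) (Submodule.map M.subtype (Mi i) ⊔ L) =
        Submodule.map M.subtype (Mi' i) ⊔ L) :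
    ∃ h : ↥M ≃ₗ[ℂ] ↥M, ∀ i, Submodule.map (h : ↥M →ₗ[ℂ] ↥M) (Mi i) = Mi' i := by
  set π : N →ₗ[ℂ] ↥M := M.linearProjOfIsCompl L hcompl with hπdef
  set f : ↥M →ₗ[ℂ] ↥M := π ∘ₗ (g : N →ₗ[ℂ] N) ∘ₗ M.subtype with hfdef
  -- f is injective
  have hinj : Function.Injective f := by
    rw [← LinearMap.ker_eq_bot, eq_bot_iff]
    intro x hx
    have hx' : π ((g : N →ₗ[ℂ] N) (x : N)) = 0 := hx
    have h1 : (g : N →ₗ[ℂ] N) (x : N) ∈ L := by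
      have : (g : N →ₗ[ℂ] N) (x : N) ∈ LinearMap.ker π :=
        LinearMap.mem_ker.mpr hx'
      rwa [hπdef, show M.linearProjOfIsCompl L hcompl = M.projectionOnto L hcompl from rfl, Submodule.ker_projectionOnto] at this
    have h2 : (g : N →ₗ[ℂ] N) (x : N) ∈ Submodule.map (g : N →ₗ[ℂ] N) M :=
      Submodule.mem_map_of_mem x.2
    have h3 : (g : N →ₗ[ℂ] N) (x : N) = 0 := by
      have := Submodule.mem_inf.mpr ⟨h2, h1⟩
      rwa [hdisj, Submodule.mem_bot] at this
    have h4 : (x : N) = 0 := by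
      have := g.injective (a₁ := (x : N)) (a₂ := 0) (by simpa using h3)
      simpa using this
    simpa [Submodule.mem_bot] using Submodule.coe_eq_zero.mp h4
  -- π ∘ ι = id on submodules of M
  have hπι : ∀ S : Submodule ℂ ↥M, Submodule.map π (Submodule.map M.subtype S) = S := by
    intro S
    rw [← Submodule.map_comp, hπdef, show M.linearProjOfIsCompl L hcompl = M.projectionOnto L hcompl from rfl,
      Submodule.projectionOnto_comp_subtype,
      Submodule.map_id]
  -- π kills L
  have hπL : Submodule.map π L = ⊥ := by
    rw [eq_bot_iff]
    rintro y ⟨l, hl, rfl⟩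
    simp [Submodule.mem_bot, hπdef, show M.linearProjOfIsCompl L hcompl = M.projectionOnto L hcompl from rfl, Submodule.projectionOnto_apply_of_mem_right hcompl hl]
  have hmapf : ∀ S : Submodule ℂ ↥M, Submodule.map f S =
      Submodule.map π (Submodule.map (g : N →ₗ[ℂ] N) (Submodule.map M.subtype S)) := by
    intro S
    rw [hfdef, Submodule.map_comp, Submodule.map_comp]
  refine ⟨LinearEquiv.ofInjectiveEndo f hinj, fun i => ?_⟩
  have hcoe : ((LinearEquiv.ofInjectiveEndo f hinj : ↥M ≃ₗ[ℂ] ↥M) : ↥M →ₗ[ℂ] ↥M) = f := by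
    ext x; rfl
  rw [hcoe]
  by_cases hi : i ∈ I₀
  · rw [hmapf, hg₀ i hi, hπι]
  · -- the inclusion
    have hle : Submodule.map f (Mi i) ≤ Mi' i := by
      rw [hmapf]
      calc Submodule.map π (Submodule.map (g : N →ₗ[ℂ] N) (Submodule.map M.subtype (Mi i)))
          ≤ Submodule.map π (Submodule.map (g : N →ₗ[ℂ] N)
              (Submodule.map M.subtype (Mi i) ⊔ L)) :=
            Submodule.map_mono (Submodule.map_mono le_sup_left)
        _ = Submodule.map π (Submodule.map M.subtype (Mi' i) ⊔ L) := by rw [hg₁ i hi]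
        _ = Mi' i := by rw [Submodule.map_sup, hπL, hπι, sup_bot_eq]
    -- equality of dimensions
    have hd1 : ∀ S : Submodule ℂ ↥M,
        finrank ℂ (Submodule.map M.subtype S) = finrank ℂ S :=
      fun S => (LinearEquiv.finrank_eq
        (Submodule.equivMapOfInjective M.subtype (Submodule.injective_subtype M) S)).symm
    have hd2 : ∀ S : Submodule ℂ ↥M,
        finrank ℂ ↥(Submodule.map M.subtype S ⊔ L) =
          finrank ℂ (Submodule.map M.subtype S) + finrank ℂ L := by
      intro S
      have hDisj : Submodule.map M.subtype S ⊓ L = ⊥ := by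
        rw [eq_bot_iff]
        intro y hy
        exact (hcompl.disjoint.eq_bot ▸
          Submodule.mem_inf.mpr ⟨Submodule.map_subtype_le M S hy.1, hy.2⟩ : y ∈ (⊥ : Submodule ℂ N))
      have := Submodule.finrank_sup_add_finrank_inf_eq (Submodule.map M.subtype S) L
      rw [hDisj, finrank_bot, add_zero] at this
      exact this
    have hrank : finrank ℂ (Mi i) = finrank ℂ (Mi' i) := by
      have h1 := LinearEquiv.finrank_map_eq g (Submodule.map M.subtype (Mi i) ⊔ L)
      rw [hg₁ i hi, hd2, hd2, hd1, hd1] at h1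
      omega
    have hrank2 : finrank ℂ (Submodule.map f (Mi i)) = finrank ℂ (Mi' i) := by
      rw [← hrank]
      exact (LinearEquiv.finrank_eq (Submodule.equivMapOfInjective f hinj (Mi i))).symm
    exact Submodule.eq_of_le_of_finrank_eq hle hrank2

/-- If `N` is a finite-dimensional complex vector space, `M ⊂ N` a hyperplane,
`L ⊂ N` a line with `N = M ⊕ L`, and `{M_i}`, `{M'_i}` are collections of subspaces of `M`
such that some `g ∈ GL(N)` satisfies `g(M_i) = M'_i` for `i ∈ I₀` and
`g(M_i ⊕ L) = M'_i ⊕ L` for `i ∉ I₀`, then some `h ∈ GL(M)` satisfies `h(M_i) = M'_i` for all `i`. -/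
theorem stmt0 {N : Type*} [AddCommGroup N] [Module ℂ N] [FiniteDimensional ℂ N]
    (M L : Submodule ℂ N) (hcompl : IsCompl M L) (hL : Module.finrank ℂ L = 1)
    {I : Type*} (I₀ : Set I) (Mi Mi' : I → Submodule ℂ ↥M)
    (hg : ∃ g : N ≃ₗ[ℂ] N,
      (∀ i ∈ I₀, Submodule.map (g : N →ₗ[ℂ] N) (Submodule.map M.subtype (Mi i)) =
        Submodule.map M.subtype (Mi' i)) ∧
      (∀ i ∉ I₀, Submodule.map (g : N →ₗ[ℂ] N) (Submodule.map M.subtype (Mi i) ⊔ L) =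
        Submodule.map M.subtype (Mi' i) ⊔ L)) :
    ∃ h : ↥M ≃ₗ[ℂ] ↥M, ∀ i, Submodule.map (h : ↥M →ₗ[ℂ] ↥M) (Mi i) = Mi' i := by
  obtain ⟨g, hg₀, hg₁⟩ := hg
  by_cases hdisj : Submodule.map (g : N →ₗ[ℂ] N) M ⊓ L = ⊥
  · exact auxA M L hcompl I₀ Mi Mi' g hdisj hg₀ hg₁
  · -- fix up g by composing with a transvection
    obtain ⟨x, hx, hx0⟩ := Submodule.exists_mem_ne_zero_of_ne_bot hdisj
    obtain ⟨hxg, hxL⟩ := Submodule.mem_inf.mp hx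
    obtain ⟨v, hvM, hvg⟩ := hxg
    have hLbot : L ≠ ⊥ := by
      intro h
      rw [h, finrank_bot] at hL
      exact zero_ne_one hL
    obtain ⟨e, heL, he0⟩ := Submodule.exists_mem_ne_zero_of_ne_bot hLbot
    set W : Submodule ℂ N := ⨆ i : I₀, Submodule.map M.subtype (Mi i) with hWdef
    have hWM : W ≤ M := iSup_le fun i => Submodule.map_subtype_le _ _
    have hgW : Submodule.map (g : N →ₗ[ℂ] N) W ≤ M := by
      rw [hWdef, Submodule.map_iSup]
      exact iSup_le fun i => le_of_eq_of_le (hg₀ i i.2) (Submodule.map_subtype_le _ _)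
    have hv0 : v ≠ 0 := by
      intro h
      exact hx0 (by rw [← hvg, h, map_zero])
    have hvWL : v ∉ W ⊔ L := by
      intro hmem
      have hvW : v ∈ W := by
        have h1 : v ∈ (W ⊔ L) ⊓ M := Submodule.mem_inf.mpr ⟨hmem, hvM⟩
        rw [sup_inf_assoc_of_le L hWM, (disjoint_comm.mp hcompl.disjoint).eq_bot,
          sup_bot_eq] at h1
        exact h1
      have hxM : x ∈ M := hvg ▸ hgW (Submodule.mem_map_of_mem hvW)
      have : x ∈ (⊥ : Submodule ℂ N) := by
        rw [← hcompl.disjoint.eq_bot]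
        exact Submodule.mem_inf.mpr ⟨hxM, hxL⟩
      exact hx0 (Submodule.mem_bot ℂ |>.mp this)
    obtain ⟨φ, hφv, hφWL⟩ := Submodule.exists_dual_map_eq_bot_of_notMem hvWL inferInstance
    have hφzero : ∀ y ∈ W ⊔ L, φ y = 0 := by
      intro y hy
      have : φ y ∈ (⊥ : Submodule ℂ ℂ) := hφWL ▸ Submodule.mem_map_of_mem hy
      simpa using this
    have hφe : φ e = 0 := hφzero e (Submodule.mem_sup_right heL)
    set u : N →ₗ[ℂ] N := (LinearMap.toSpanSingleton ℂ N e) ∘ₗ φ with hudef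
    have huapp : ∀ x : N, u x = φ x • e := fun x => rfl
    have huu : ∀ x : N, u (u x) = 0 := by
      intro x
      rw [huapp, huapp, map_smul, smul_eq_mul, ← smul_smul, hφe, zero_smul, smul_zero]
    set t : N ≃ₗ[ℂ] N := LinearEquiv.ofLinear (LinearMap.id + u) (LinearMap.id - u)
      (by ext y; simp [LinearMap.add_apply, LinearMap.sub_apply, map_sub, huu y])
      (by ext y; simp [LinearMap.add_apply, LinearMap.sub_apply, map_add, huu y])
      with htdef
    have htapp : ∀ y : N, t y = y + φ y • e := fun y => rfl
    have htsymm : ∀ y : N, t.symm y = y - φ y • e := fun y => rfl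
    -- t preserves any subspace containing L
    have hmapt : ∀ S : Submodule ℂ N, L ≤ S →
        Submodule.map (t : N →ₗ[ℂ] N) S = S := by
      intro S hLS
      apply le_antisymm
      · rintro y ⟨z, hz, rfl⟩
        show t z ∈ S
        rw [htapp]
        exact S.add_mem hz (S.smul_mem _ (hLS heL))
      · intro y hy
        refine ⟨t.symm y, ?_, t.apply_symm_apply y⟩
        rw [htsymm]
        exact S.sub_mem hy (S.smul_mem _ (hLS heL))
    -- t fixes each M_i (i ∈ I₀) pointwise
    have hfix : ∀ i ∈ I₀,
        Submodule.map (t : N →ₗ[ℂ] N) (Submodule.map M.subtype (Mi i)) =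
          Submodule.map M.subtype (Mi i) := by
      intro i hi
      apply map_eq_self_of_fix
      intro z hz
      have hzW : z ∈ W := by
        have : Submodule.map M.subtype (Mi i) ≤ W :=
          le_iSup (fun j : I₀ => Submodule.map M.subtype (Mi j)) ⟨i, hi⟩
        exact this hz
      show t z = z
      rw [htapp, hφzero z (Submodule.mem_sup_left hzW), zero_smul, add_zero]
    set g' : N ≃ₗ[ℂ] N := t.trans g with hg'def
    have hg'coe : (g' : N →ₗ[ℂ] N) = (g : N →ₗ[ℂ] N) ∘ₗ (t : N →ₗ[ℂ] N) := rfl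
    have hg'map : ∀ S : Submodule ℂ N, Submodule.map (g' : N →ₗ[ℂ] N) S =
        Submodule.map (g : N →ₗ[ℂ] N) (Submodule.map (t : N →ₗ[ℂ] N) S) := by
      intro S
      rw [hg'coe, Submodule.map_comp]
    -- the new hypotheses
    have hg₀' : ∀ i ∈ I₀, Submodule.map (g' : N →ₗ[ℂ] N) (Submodule.map M.subtype (Mi i)) =
        Submodule.map M.subtype (Mi' i) := by
      intro i hi
      rw [hg'map, hfix i hi, hg₀ i hi]
    have hg₁' : ∀ i ∉ I₀,
        Submodule.map (g' : N →ₗ[ℂ] N) (Submodule.map M.subtype (Mi i) ⊔ L) =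
          Submodule.map M.subtype (Mi' i) ⊔ L := by
      intro i hi
      rw [hg'map, hmapt _ le_sup_right, hg₁ i hi]
    -- g'⁻¹(L) is spanned by v - φ(v) • e, which is not in M
    have hK : Submodule.map (g.symm : N →ₗ[ℂ] N) L = Submodule.span ℂ {v} := by
      symm
      apply Submodule.eq_of_le_of_finrank_eq
      · rw [Submodule.span_le, Set.singleton_subset_iff]
        exact ⟨x, hxL, by rw [← hvg]; exact g.symm_apply_apply v⟩
      · rw [finrank_span_singleton hv0, LinearEquiv.finrank_map_eq g.symm L, hL]
    have hdisj' : Submodule.map (g' : N →ₗ[ℂ] N) M ⊓ L = ⊥ := by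
      rw [eq_bot_iff]
      intro y hy
      obtain ⟨hy1, hy2⟩ := Submodule.mem_inf.mp hy
      obtain ⟨m, hm, rfl⟩ := hy1
      -- g'(m) ∈ L, so t(m) ∈ g⁻¹(L) = span {v}
      have htm : t m ∈ Submodule.span ℂ {v} := by
        rw [← hK]
        refine ⟨(g' : N →ₗ[ℂ] N) m, hy2, ?_⟩
        show g.symm (g (t m)) = t m
        exact g.symm_apply_apply (t m)
      obtain ⟨c, hc⟩ := Submodule.mem_span_singleton.mp htm
      -- t m = m + φ m • e = c • v
      have hmc : m + φ m • e = c • v := by rw [← htapp]; exact hc.symm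
      have hsmul : φ m • e ∈ M := by
        have : φ m • e = c • v - m := by
          rw [← hmc]; abel
        rw [this]
        exact M.sub_mem (M.smul_mem c hvM) hm
      have hφm : φ m = 0 := by
        have h1 : φ m • e ∈ (⊥ : Submodule ℂ N) := by
          rw [← hcompl.disjoint.eq_bot]
          exact Submodule.mem_inf.mpr ⟨hsmul, L.smul_mem _ heL⟩
        rcases smul_eq_zero.mp (Submodule.mem_bot ℂ |>.mp h1) with h | h
        · exact h
        · exact absurd h he0
      have hmv : m = c • v := by
        rw [← hmc, hφm, zero_smul, add_zero]
      have hc0 : c = 0 := by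
        have : c * φ v = 0 := by
          rw [← smul_eq_mul, ← map_smul, ← hmv, hφm]
        rcases mul_eq_zero.mp this with h | h
        · exact h
        · exact absurd h hφv
      have hm0 : m = 0 := by rw [hmv, hc0, zero_smul]
      rw [hm0, map_zero]
      exact Submodule.zero_mem ⊥
    exact auxA M L hcompl I₀ Mi Mi' g' hdisj' hg₀' hg₁'
end

section
/- Let V be a countable-dimensional complex vector space and let G = GL(E) be the group of linear automorphisms of V fixing all but finitely many vectors of a fixed basis E of V. If A ⊊ B are subspaces of V with A strictly contained in B, then there is no g ∈ G with g(A) = B. -/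
/-- If `V` is a countable-dimensional complex vector space with basis `E`
and `G = GL(E)` is the group of automorphisms fixing all but finitely many basis vectors,
then no element of `G` can map a subspace `A` onto a strictly larger subspace `B`. -/
theorem stmt1 {ι V : Type*} [Countable ι] [AddCommGroup V] [Module ℂ V]
    (E : Module.Basis ι ℂ V) (A B : Submodule ℂ V) (hAB : A < B) :
    ¬ ∃ g : V ≃ₗ[ℂ] V, {i | g (E i) ≠ E i}.Finite ∧
      Submodule.map (g : V →ₗ[ℂ] V) A = B := by
  rintro ⟨g, hfin, hmap⟩
  set f : V →ₗ[ℂ] V := (g : V →ₗ[ℂ] V) with hf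
  have hinj : Function.Injective f := g.injective
  set d : V →ₗ[ℂ] V := f - LinearMap.id with hd
  set F : Submodule ℂ V := LinearMap.range d with hFdef
  -- F is finite dimensional
  have hFle : F ≤ Submodule.span ℂ (d '' (E '' hfin.toFinset)) := by
    rw [hFdef, LinearMap.range_eq_map, ← E.span_eq, Submodule.map_span, Submodule.span_le]
    rintro y ⟨v, ⟨i, rfl⟩, rfl⟩
    by_cases hi : g (E i) ≠ E i
    · exact Submodule.subset_span ⟨E i, ⟨i, hfin.mem_toFinset.mpr hi, rfl⟩, rfl⟩
    · push_neg at hi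
      have : d (E i) = 0 := by
        simp [hd, hf, hi]
      rw [this]; exact Submodule.zero_mem _
  have hFfd : FiniteDimensional ℂ F := by
    have h1 : (⇑d '' (⇑E '' (hfin.toFinset : Set ι))).Finite :=
      (hfin.toFinset.finite_toSet.image _).image _
    have h2 : FiniteDimensional ℂ
        (Submodule.span ℂ (d '' (E '' hfin.toFinset))) :=
      FiniteDimensional.span_of_finite ℂ h1
    exact Submodule.finiteDimensional_of_le hFle
  -- iterates
  set Ak : ℕ → Submodule ℂ V := fun k => Submodule.map (f ^ k) A with hAk
  have hAk0 : Ak 0 = A := by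
    show Submodule.map (f ^ 0) A = A
    rw [pow_zero]
    exact Submodule.map_id A
  have hAksucc : ∀ k, Ak (k + 1) = Submodule.map (f ^ k) B := by
    intro k
    show Submodule.map (f ^ (k + 1)) A = Submodule.map (f ^ k) B
    rw [← hmap, pow_succ, Module.End.mul_eq_comp, Submodule.map_comp]
  have hlt : ∀ k, Ak k < Ak (k + 1) := by
    intro k
    rw [hAksucc]
    exact Submodule.map_strictMono_of_injective (Module.End.iterate_injective hinj k) hAB
  have hAle : ∀ k, A ≤ Ak k := by
    intro k
    induction k with
    | zero => rw [hAk0]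
    | succ n ih => exact ih.trans (hlt n).le
  -- each Ak is contained in A ⊔ F
  have hdiff : ∀ (k : ℕ) (v : V), (f ^ k) v - v ∈ F := by
    intro k
    induction k with
    | zero => intro v; simp
    | succ n ih =>
      intro v
      have h1 : (f ^ (n+1)) v - v = (f ((f ^ n) v) - (f ^ n) v) + ((f ^ n) v - v) := by
        rw [pow_succ', Module.End.mul_apply]
        abel
      rw [h1]
      exact F.add_mem ⟨(f ^ n) v, by simp [hd]⟩ (ih v)
  have hAkle : ∀ k, Ak k ≤ A ⊔ F := by
    rintro k x ⟨a, ha, rfl⟩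
    have : (f ^ k) a = a + ((f ^ k) a - a) := by abel
    rw [this]
    exact Submodule.add_mem _ (Submodule.mem_sup_left ha)
      (Submodule.mem_sup_right (hdiff k a))
  -- pass to quotient V/A
  set π : V →ₗ[ℂ] V ⧸ A := A.mkQ with hπ
  set N : Submodule ℂ (V ⧸ A) := Submodule.map π F with hN
  have hNfd : FiniteDimensional ℂ N := Module.Finite.map F π
  have hQle : ∀ k, Submodule.map π (Ak k) ≤ N := by
    intro k
    refine le_trans (Submodule.map_mono (hAkle k)) ?_
    rw [Submodule.map_sup]
    have hA0 : Submodule.map π A = ⊥ := by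
      refine le_bot_iff.mp ?_
      rintro x ⟨a, ha, rfl⟩
      simp [hπ, (Submodule.Quotient.mk_eq_zero A).mpr ha]
    rw [hA0, bot_sup_eq]
  have hQlt : ∀ k, Submodule.map π (Ak k) < Submodule.map π (Ak (k + 1)) := by
    intro k
    refine lt_of_le_of_ne (Submodule.map_mono (hlt k).le) ?_
    intro heq
    have h1 : Submodule.comap π (Submodule.map π (Ak k))
        = Submodule.comap π (Submodule.map π (Ak (k+1))) := by rw [heq]
    rw [Submodule.comap_map_eq, Submodule.comap_map_eq] at h1
    simp [hπ, Submodule.ker_mkQ, sup_eq_left.mpr (hAle k),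
      sup_eq_left.mpr (hAle (k+1))] at h1
    exact (hlt k).ne h1
  -- finrank argument
  have hfd : ∀ k, FiniteDimensional ℂ (Submodule.map π (Ak k)) := fun k =>
    Submodule.finiteDimensional_of_le (hQle k)
  have hrank : ∀ k, k ≤ Module.finrank ℂ (Submodule.map π (Ak k)) := by
    intro k
    induction k with
    | zero => exact Nat.zero_le _
    | succ n ih =>
      have := hfd (n + 1)
      have h2 : Module.finrank ℂ (Submodule.map π (Ak n))
          < Module.finrank ℂ (Submodule.map π (Ak (n+1))) :=
        Submodule.finrank_lt_finrank_of_lt (hQlt n)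
      omega
  have hbound : ∀ k, Module.finrank ℂ (Submodule.map π (Ak k)) ≤ Module.finrank ℂ N :=
    fun k => Submodule.finrank_mono (hQle k)
  have := hrank (Module.finrank ℂ N + 1)
  have := hbound (Module.finrank ℂ N + 1)
  omega
end

section
/- Let c₁,…,c_p and d₁,…,d_q be positive integers with c₁+⋯+c_p = d₁+⋯+d_q = m. Fix p₀ ∈ {1,…,p} and let C = Σ_{k≠p₀} c_k. Then the number of double cosets 𝔖_{c₁}×⋯×𝔖_{c_p} \ 𝔖_m / 𝔖_{d₁}×⋯×𝔖_{d_q} is at most q^C. -/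
/-- The Young subgroup of `Perm (Fin m)` determined by a block-assignment function
`b : Fin m → Fin p`: permutations preserving each block. -/
def Young {m p : ℕ} (b : Fin m → Fin p) : Subgroup (Equiv.Perm (Fin m)) where
  carrier := {σ | ∀ i, b (σ i) = b i}
  one_mem' := fun _ => rfl
  mul_mem' := by
    intro σ τ hσ hτ i
    simp only [Set.mem_setOf_eq] at *
    rw [Equiv.Perm.mul_apply, hσ, hτ]
  inv_mem' := by
    intro σ hσ i
    simp only [Set.mem_setOf_eq] at *
    conv_rhs => rw [← Equiv.apply_symm_apply σ i]
    rw [hσ]; rfl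

open Finset in
lemma exists_perm_comp_eq {α β : Type*} [Fintype α] [DecidableEq α] [DecidableEq β]
    (f f' : α → β)
    (h : ∀ j, (univ.filter fun x => f x = j).card = (univ.filter fun x => f' x = j).card) :
    ∃ π : Equiv.Perm α, ∀ x, f (π x) = f' x := by
  have e : ∀ j, {x // f' x = j} ≃ {x // f x = j} := fun j =>
    Fintype.equivOfCardEq (by
      simp only [Fintype.card_subtype]
      exact (h j).symm)
  refine ⟨(Equiv.sigmaFiberEquiv f').symm.trans ((Equiv.sigmaCongrRight e).trans
    (Equiv.sigmaFiberEquiv f)), fun x => ?_⟩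
  exact (e (f' x) ⟨x, rfl⟩).2

open Finset in
lemma card_filter_perm {α : Type*} [Fintype α] [DecidableEq α] (σ : Equiv.Perm α)
    (P : α → Prop) [DecidablePred P] :
    (univ.filter fun x => P (σ x)).card = (univ.filter P).card := by
  rw [← Fintype.card_subtype, ← Fintype.card_subtype]
  exact Fintype.card_congr (σ.subtypeEquiv fun a => Iff.rfl)

open Finset in
lemma key_doset_eq {m p q : ℕ} (b₁ : Fin m → Fin p) (b₂ : Fin m → Fin q) (p₀ : Fin p)
    (σ τ : Equiv.Perm (Fin m))
    (hag : ∀ i, b₁ i ≠ p₀ → b₂ (σ⁻¹ i) = b₂ (τ⁻¹ i)) :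
    DoubleCoset.mk (Young b₁) (Young b₂) σ = DoubleCoset.mk (Young b₁) (Young b₂) τ := by
  have hcount : ∀ z : Fin p × Fin q,
      (univ.filter fun i => (b₁ i, b₂ (σ⁻¹ i)) = z).card
        = (univ.filter fun i => (b₁ i, b₂ (τ⁻¹ i)) = z).card := by
    rintro ⟨k, j⟩
    by_cases hk : k = p₀
    · have hag' : ∀ i, b₁ i ≠ k → b₂ (σ⁻¹ i) = b₂ (τ⁻¹ i) := fun i hi =>
        hag i (by rw [← hk]; exact hi)
      have e1 : (univ.filter fun i => (b₁ i, b₂ (σ⁻¹ i)) = (k, j))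
          = (univ.filter fun i => b₂ (σ⁻¹ i) = j).filter fun i => b₁ i = k := by
        rw [Finset.filter_filter]
        ext i
        simp [Prod.ext_iff, and_comm]
      have e1' : (univ.filter fun i => (b₁ i, b₂ (τ⁻¹ i)) = (k, j))
          = (univ.filter fun i => b₂ (τ⁻¹ i) = j).filter fun i => b₁ i = k := by
        rw [Finset.filter_filter]
        ext i
        simp [Prod.ext_iff, and_comm]
      have h1 := Finset.card_filter_add_card_filter_not
        (s := univ.filter fun i => b₂ (σ⁻¹ i) = j) (p := fun i => b₁ i = k)
      have h1' := Finset.card_filter_add_card_filter_not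
        (s := univ.filter fun i => b₂ (τ⁻¹ i) = j) (p := fun i => b₁ i = k)
      have h2 : (univ.filter fun i => b₂ (σ⁻¹ i) = j).card
          = (univ.filter fun i => b₂ (τ⁻¹ i) = j).card := by
        rw [card_filter_perm σ⁻¹ (fun y => b₂ y = j), card_filter_perm τ⁻¹ (fun y => b₂ y = j)]
      have h3 : ((univ.filter fun i => b₂ (σ⁻¹ i) = j).filter fun i => ¬ b₁ i = k)
          = ((univ.filter fun i => b₂ (τ⁻¹ i) = j).filter fun i => ¬ b₁ i = k) := by
        ext i
        simp only [Finset.mem_filter, Finset.mem_univ, true_and]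
        constructor
        · rintro ⟨h4, h5⟩; exact ⟨by rw [← hag' i h5]; exact h4, h5⟩
        · rintro ⟨h4, h5⟩; exact ⟨by rw [hag' i h5]; exact h4, h5⟩
      rw [e1, e1']
      rw [h3] at h1
      omega
    · congr 1
      ext i
      simp only [Finset.mem_filter, Finset.mem_univ, true_and, Prod.mk.injEq]
      constructor
      · rintro ⟨h4, h5⟩
        exact ⟨h4, by rw [← hag i (by rw [h4]; exact hk)]; exact h5⟩
      · rintro ⟨h4, h5⟩
        exact ⟨h4, by rw [hag i (by rw [h4]; exact hk)]; exact h5⟩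
  obtain ⟨π, hπ⟩ := exists_perm_comp_eq (fun i => (b₁ i, b₂ (σ⁻¹ i)))
    (fun i => (b₁ i, b₂ (τ⁻¹ i))) hcount
  have hπ1 : ∀ x, b₁ (π x) = b₁ x := fun x => (Prod.mk.injEq _ _ _ _ ▸ hπ x).1
  have hπ2 : ∀ x, b₂ (σ⁻¹ (π x)) = b₂ (τ⁻¹ x) := fun x => (Prod.mk.injEq _ _ _ _ ▸ hπ x).2
  have hπY : π ∈ Young b₁ := hπ1
  have hbY : σ⁻¹ * π * τ ∈ Young b₂ := by
    intro x
    have := hπ2 (τ x)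
    simpa [Equiv.Perm.mul_apply] using this
  rw [DoubleCoset.eq]
  refine ⟨π⁻¹, (Young b₁).inv_mem hπY, σ⁻¹ * π * τ, hbY, ?_⟩
  group

/-- With `c₁ + ⋯ + c_p = d₁ + ⋯ + d_q = m` (all parts positive), and Young
subgroups given by monotone block functions with fibers of sizes `c_k`, resp. `d_j`,
the number of double cosets `𝔖_c \ 𝔖_m / 𝔖_d` is at most `q ^ C` where
`C = ∑_{k ≠ p₀} c_k`. -/
theorem stmt2 {m p q : ℕ} (c : Fin p → ℕ) (d : Fin q → ℕ)
    (hc : ∀ k, 0 < c k) (hd : ∀ j, 0 < d j)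
    (hcm : ∑ k, c k = m) (hdm : ∑ j, d j = m)
    (b₁ : Fin m → Fin p) (b₂ : Fin m → Fin q)
    (hb₁ : Monotone b₁) (hb₂ : Monotone b₂)
    (hfib₁ : ∀ k, (Finset.univ.filter fun i => b₁ i = k).card = c k)
    (hfib₂ : ∀ j, (Finset.univ.filter fun i => b₂ i = j).card = d j)
    (p₀ : Fin p) :
    Nat.card (DoubleCoset.Quotient (Young b₁ : Set (Equiv.Perm (Fin m)))
        (Young b₂ : Set (Equiv.Perm (Fin m)))) ≤
      q ^ (∑ k ∈ Finset.univ.erase p₀, c k) := by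
  classical
  set S := {i : Fin m // b₁ i ≠ p₀}
  set Φ : (S → Fin q) → DoubleCoset.Quotient (Young b₁ : Set (Equiv.Perm (Fin m)))
      (Young b₂ : Set (Equiv.Perm (Fin m))) := fun g =>
    if h : ∃ σ : Equiv.Perm (Fin m), ∀ i : S, b₂ (σ⁻¹ i.1) = g i then
      DoubleCoset.mk (Young b₁) (Young b₂) h.choose
    else DoubleCoset.mk (Young b₁) (Young b₂) 1 with hΦ
  have hsurj : Function.Surjective Φ := by
    intro x
    induction x using Quotient.inductionOn' with
    | h σ =>
      refine ⟨fun i => b₂ (σ⁻¹ i.1), ?_⟩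
      have h : ∃ ρ : Equiv.Perm (Fin m), ∀ i : S, b₂ (ρ⁻¹ i.1) = b₂ (σ⁻¹ i.1) :=
        ⟨σ, fun _ => rfl⟩
      rw [hΦ]
      simp only [dif_pos h]
      exact key_doset_eq b₁ b₂ p₀ h.choose σ fun i hi => h.choose_spec ⟨i, hi⟩
  have hle := Nat.card_le_card_of_surjective Φ hsurj
  refine hle.trans ?_
  rw [Nat.card_fun, Nat.card_eq_fintype_card (α := Fin q), Fintype.card_fin,
    Nat.card_eq_fintype_card (α := S)]
  have hcard : Fintype.card S = ∑ k ∈ Finset.univ.erase p₀, c k := by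
    have h1 : Fintype.card S = (Finset.univ.filter fun i : Fin m => ¬ b₁ i = p₀).card := by
      rw [Fintype.card_subtype]
    have h2 := Finset.card_filter_add_card_filter_not
      (s := (Finset.univ : Finset (Fin m))) (p := fun i => b₁ i = p₀)
    have h3 : c p₀ + ∑ k ∈ Finset.univ.erase p₀, c k = m := by
      rw [Finset.add_sum_erase _ c (Finset.mem_univ p₀), hcm]
    have h4 := hfib₁ p₀
    have h5 : (Finset.univ : Finset (Fin m)).card = m := by simp
    omega
  rw [hcard]
end

section
/- A map τ : {1,…,m} → {1,…,q} such that |τ⁻¹(j)| = d_j for each j is determined, among all maps in its orbit under the Young subgroup 𝔖_{c₁}×⋯×𝔖_{c_p} that are nondecreasing on each block [c̄_{k−1}+1, c̄_k] (where c̄_k = c₁+⋯+c_k), uniquely by its restriction to the complement of one block [c̄_{p₀−1}+1, c̄_{p₀}]. Consequently the number of orbits of the Young subgroup on such maps τ is at most q^C where C = Σ_{k≠p₀} c_k. -/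
open Finset

/-- A perm-invariance of filter-cardinalities. -/
lemma stmt4_card_filter_perm {m : ℕ} (σ : Equiv.Perm (Fin m)) (P : Fin m → Prop)
    [DecidablePred P] :
    (Finset.univ.filter fun i => P (σ i)).card = (Finset.univ.filter P).card := by
  apply Finset.card_bij (fun i _ => σ i)
  · intro a ha; simp only [mem_filter, mem_univ, true_and] at *; exact ha
  · intro a _ b _ h; exact σ.injective h
  · intro bb hb
    refine ⟨σ.symm bb, ?_, by simp⟩
    simp only [mem_filter, mem_univ, true_and] at *
    simpa using hb

/-- rank characterization of value of monotone-on-S function -/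
lemma stmt4_rank {m q : ℕ} {S : Finset (Fin m)} {f : Fin m → Fin q}
    (hf : ∀ i ∈ S, ∀ j ∈ S, i ≤ j → f i ≤ f j) {a : Fin m} (ha : a ∈ S) (v : Fin q) :
    f a ≤ v ↔ (S.filter fun x => x ≤ a).card ≤ (S.filter fun x => f x ≤ v).card := by
  constructor
  · intro h
    apply Finset.card_le_card
    intro x hx
    simp only [mem_filter] at *
    exact ⟨hx.1, le_trans (hf x hx.1 a ha hx.2) h⟩
  · intro h
    by_contra hv
    push_neg at hv
    have hsub : S.filter (fun x => f x ≤ v) ⊆ S.filter (fun x => x < a) := by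
      intro x hx
      simp only [mem_filter] at *
      refine ⟨hx.1, ?_⟩
      by_contra hax
      push_neg at hax
      exact absurd (le_trans (hf a ha x hx.1 hax) hx.2) (not_le.2 hv)
    have hlt : (S.filter fun x => x < a).card < (S.filter fun x => x ≤ a).card := by
      apply Finset.card_lt_card
      rw [Finset.ssubset_iff_of_subset]
      · exact ⟨a, by simp [ha], by simp⟩
      · intro x hx
        simp only [mem_filter] at *
        exact ⟨hx.1, le_of_lt hx.2⟩
    have := lt_of_le_of_lt (Finset.card_le_card hsub) hlt
    omega

lemma stmt4_card_le_filter {m q : ℕ} (S : Finset (Fin m)) (f g : Fin m → Fin q)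
    (hcount : ∀ v, (S.filter fun i => f i = v).card = (S.filter fun i => g i = v).card)
    (v : Fin q) :
    (S.filter fun x => f x ≤ v).card = (S.filter fun x => g x ≤ v).card := by
  have h1 : ∀ (h : Fin m → Fin q), (S.filter fun x => h x ≤ v).card
      = ∑ w ∈ Finset.Iic v, (S.filter fun i => h i = w).card := by
    intro h
    rw [Finset.card_eq_sum_card_fiberwise (f := h) (t := Finset.Iic v)
      (fun x hx => by simpa using (Finset.mem_filter.mp hx).2)]
    refine Finset.sum_congr rfl fun w hw => ?_
    congr 1
    rw [Finset.filter_filter]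
    apply Finset.filter_congr
    intro x _
    simp only [Finset.mem_Iic] at hw
    constructor
    · exact fun hx => hx.2
    · exact fun hx => ⟨hx ▸ hw, hx⟩
  rw [h1 f, h1 g]
  exact Finset.sum_congr rfl fun w _ => hcount w

/-- two functions monotone on S with equal fiber counts on S agree on S -/
lemma stmt4_monoOn_eq {m q : ℕ} (S : Finset (Fin m)) (f g : Fin m → Fin q)
    (hf : ∀ i ∈ S, ∀ j ∈ S, i ≤ j → f i ≤ f j)
    (hg : ∀ i ∈ S, ∀ j ∈ S, i ≤ j → g i ≤ g j)
    (hcount : ∀ v, (S.filter fun i => f i = v).card = (S.filter fun i => g i = v).card) :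
    ∀ a ∈ S, f a = g a := by
  intro a ha
  have key : ∀ v, f a ≤ v ↔ g a ≤ v := fun v => by
    rw [stmt4_rank hf ha v, stmt4_rank hg ha v, stmt4_card_le_filter S f g hcount v]
  exact le_antisymm ((key (g a)).2 le_rfl) ((key (f a)).1 le_rfl)

/-- Part 1 core: equal total fiber counts + agreement off block p₀ + blockwise monotone ⇒ equal. -/
lemma stmt4_determined {m p q : ℕ} (b : Fin m → Fin p) (p₀ : Fin p)
    (τ τ' : Fin m → Fin q)
    (hcnt : ∀ j, (Finset.univ.filter fun i => τ i = j).card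
      = (Finset.univ.filter fun i => τ' i = j).card)
    (hmono : ∀ i j : Fin m, i ≤ j → b i = b j → τ i ≤ τ j)
    (hmono' : ∀ i j : Fin m, i ≤ j → b i = b j → τ' i ≤ τ' j)
    (hagree : ∀ i, b i ≠ p₀ → τ i = τ' i) : τ = τ' := by
  classical
  funext a
  by_cases hba : b a = p₀
  · set S : Finset (Fin m) := Finset.univ.filter fun i => b i = p₀ with hS
    have haS : a ∈ S := by simp [hS, hba]
    refine stmt4_monoOn_eq S τ τ' ?_ ?_ ?_ a haS
    · intro i hi j hj hij
      simp only [hS, mem_filter] at hi hj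
      exact hmono i j hij (hi.2.trans hj.2.symm)
    · intro i hi j hj hij
      simp only [hS, mem_filter] at hi hj
      exact hmono' i j hij (hi.2.trans hj.2.symm)
    · intro v
      have split : ∀ h : Fin m → Fin q,
          (S.filter fun i => h i = v).card
            + ((Finset.univ.filter fun i => ¬ b i = p₀).filter fun i => h i = v).card
            = (Finset.univ.filter fun i => h i = v).card := by
        intro h
        have := Finset.card_filter_add_card_filter_not
          (s := Finset.univ.filter fun i => h i = v) (fun i => b i = p₀)
        rw [Finset.filter_comm (fun i => h i = v) (fun i => b i = p₀) Finset.univ,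
          Finset.filter_comm (fun i => h i = v) (fun i => ¬ b i = p₀) Finset.univ] at this
        exact this
      have hoff : ((Finset.univ.filter fun i => ¬ b i = p₀).filter fun i => τ i = v)
          = ((Finset.univ.filter fun i => ¬ b i = p₀).filter fun i => τ' i = v) := by
        apply Finset.filter_congr
        intro x hx
        simp only [mem_filter, mem_univ, true_and] at hx
        rw [hagree x hx]
      have h1 := split τ
      have h2 := split τ'
      rw [hoff] at h1
      have := hcnt v
      omega
  · exact hagree a hba

lemma stmt4_count_comp {m p q : ℕ} (b : Fin m → Fin p) (τ : Fin m → Fin q)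
    (σ : Equiv.Perm (Fin m)) (hσ : ∀ i, b (σ i) = b i) (k : Fin p) (v : Fin q) :
    (Finset.univ.filter fun i => b i = k ∧ τ (σ i) = v).card
      = (Finset.univ.filter fun i => b i = k ∧ τ i = v).card := by
  rw [← stmt4_card_filter_perm σ (fun i => b i = k ∧ τ i = v)]
  congr 1
  apply Finset.filter_congr
  intro x _
  rw [hσ x]



/-- Fix a monotone block function `b : Fin m → Fin p` with fibers of sizes
`c_k` and a distinguished block `p₀`.  (1) A map `τ : Fin m → Fin q` with fibers of sizes `d_j`
which is nondecreasing on each block is determined, among the blockwise-nondecreasing maps in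
its orbit under the Young subgroup, by its restriction to the complement of the block `p₀`.
(2) The number of Young-subgroup orbits on such maps `τ` is at most `q ^ C`,
`C = ∑_{k ≠ p₀} c_k`. -/
theorem stmt4 {m p q : ℕ} (c : Fin p → ℕ) (d : Fin q → ℕ)
    (hc : ∀ k, 0 < c k) (hd : ∀ j, 0 < d j)
    (hcm : ∑ k, c k = m) (hdm : ∑ j, d j = m)
    (b : Fin m → Fin p) (hb : Monotone b)
    (hfib : ∀ k, (Finset.univ.filter fun i => b i = k).card = c k)
    (p₀ : Fin p) :
    (∀ τ τ' : Fin m → Fin q,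
      (∀ j, (Finset.univ.filter fun i => τ i = j).card = d j) →
      (∀ i j : Fin m, i ≤ j → b i = b j → τ i ≤ τ j) →
      (∀ i j : Fin m, i ≤ j → b i = b j → τ' i ≤ τ' j) →
      (∃ σ : Equiv.Perm (Fin m), (∀ i, b (σ i) = b i) ∧ τ' = τ ∘ σ) →
      (∀ i, b i ≠ p₀ → τ i = τ' i) → τ = τ') ∧
    Nat.card (Quot fun
        (τ τ' : {τ : Fin m → Fin q // ∀ j, (Finset.univ.filter fun i => τ i = j).card = d j}) =>
        ∃ σ : Equiv.Perm (Fin m), (∀ i, b (σ i) = b i) ∧ τ'.1 = τ.1 ∘ σ) ≤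
      q ^ (∑ k ∈ Finset.univ.erase p₀, c k) := by
  classical
  constructor
  · rintro τ τ' hτd hm hm' ⟨σ, hσb, hστ⟩ hagree
    refine stmt4_determined b p₀ τ τ' (fun j => ?_) hm hm' hagree
    rw [hστ]
    exact (stmt4_card_filter_perm σ (fun i => τ i = j)).symm
  · -- Part 2
    set srtσ : (Fin m → Fin q) → Equiv.Perm (Fin m) :=
      fun τ => Tuple.sort (fun i => toLex (b i, τ i)) with hsrtσ
    have hσb : ∀ τ : Fin m → Fin q, ∀ i, b (srtσ τ i) = b i := by
      intro τ
      have hmono : Monotone ((fun i => toLex (b i, τ i)) ∘ (srtσ τ)) := Tuple.monotone_sort _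
      have hbmono : ∀ i j : Fin m, i ≤ j → b (srtσ τ i) ≤ b (srtσ τ j) := by
        intro i j hij
        rcases Prod.Lex.le_iff.1 (hmono hij) with h | h
        · exact le_of_lt h
        · exact le_of_eq h.1
      have := stmt4_monoOn_eq Finset.univ (fun i => b (srtσ τ i)) b
        (fun i _ j _ hij => hbmono i j hij)
        (fun i _ j _ hij => hb hij)
        (fun v => stmt4_card_filter_perm (srtσ τ) (fun i => b i = v))
      exact fun i => this i (Finset.mem_univ i)
    have hsrtmono : ∀ τ : Fin m → Fin q, ∀ i j : Fin m, i ≤ j → b i = b j →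
        τ (srtσ τ i) ≤ τ (srtσ τ j) := by
      intro τ i j hij hbij
      have hmono : Monotone ((fun i => toLex (b i, τ i)) ∘ (srtσ τ)) := Tuple.monotone_sort _
      rcases Prod.Lex.le_iff.1 (hmono hij) with h | h
      · exfalso
        have h1 : b (srtσ τ i) = b (srtσ τ j) := by rw [hσb τ i, hσb τ j, hbij]
        simp only [Function.comp_apply, ofLex_toLex] at h
        rw [h1] at h
        exact lt_irrefl _ h
      · exact h.2
    have hsrtcnt : ∀ (τ : Fin m → Fin q),
        (∀ j, (Finset.univ.filter fun i => τ i = j).card = d j) →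
        ∀ j, (Finset.univ.filter fun i => τ (srtσ τ i) = j).card = d j := by
      intro τ hτ j
      rw [stmt4_card_filter_perm (srtσ τ) (fun i => τ i = j)]
      exact hτ j
    -- invariance of the sorted representative
    have hsrt_eq : ∀ τ τ' : Fin m → Fin q,
        (∀ k v, (Finset.univ.filter fun i => b i = k ∧ τ i = v).card
          = (Finset.univ.filter fun i => b i = k ∧ τ' i = v).card) →
        (fun i => τ (srtσ τ i)) = (fun i => τ' (srtσ τ' i)) := by
      intro τ τ' hkv
      funext a
      refine stmt4_monoOn_eq (Finset.univ.filter fun i => b i = b a)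
        (fun i => τ (srtσ τ i)) (fun i => τ' (srtσ τ' i)) ?_ ?_ ?_ a (by simp)
      · intro i hi j hj hij
        simp only [Finset.mem_filter] at hi hj
        exact hsrtmono τ i j hij (hi.2.trans hj.2.symm)
      · intro i hi j hj hij
        simp only [Finset.mem_filter] at hi hj
        exact hsrtmono τ' i j hij (hi.2.trans hj.2.symm)
      · intro v
        rw [Finset.filter_filter, Finset.filter_filter]
        rw [stmt4_count_comp b τ (srtσ τ) (hσb τ) (b a) v,
          stmt4_count_comp b τ' (srtσ τ') (hσb τ') (b a) v]
        exact hkv (b a) v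
    -- the injection
    set T := {τ : Fin m → Fin q // ∀ j, (Finset.univ.filter fun i => τ i = j).card = d j}
      with hT
    set R : T → T → Prop := fun τ τ' =>
      ∃ σ : Equiv.Perm (Fin m), (∀ i, b (σ i) = b i) ∧ τ'.1 = τ.1 ∘ σ with hR
    set F : T → ({i : Fin m // b i ≠ p₀} → Fin q) :=
      fun τ x => τ.1 (srtσ τ.1 x.1) with hF
    have hFwd : ∀ τ τ' : T, R τ τ' → F τ = F τ' := by
      rintro τ τ' ⟨σ₀, hσ₀b, hστ⟩
      have key : (fun i => τ.1 (srtσ τ.1 i)) = (fun i => τ'.1 (srtσ τ'.1 i)) := by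
        apply hsrt_eq
        intro k v
        conv_rhs => rw [hστ]
        exact (stmt4_count_comp b τ.1 σ₀ hσ₀b k v).symm
      funext x
      exact congrFun key x.1
    set G := Quot.lift F hFwd with hG
    have hkey : ∀ τ τ' : T, G (Quot.mk R τ) = G (Quot.mk R τ') →
        Quot.mk R τ = Quot.mk R τ' := by
      intro τ τ' h
      have hs : (fun i => τ.1 (srtσ τ.1 i)) = (fun i => τ'.1 (srtσ τ'.1 i)) := by
        refine stmt4_determined b p₀ _ _ (fun j => ?_)
          (fun i j hij hbij => hsrtmono τ.1 i j hij hbij)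
          (fun i j hij hbij => hsrtmono τ'.1 i j hij hbij)
          (fun i hbi => congrFun h (⟨i, hbi⟩ : {i : Fin m // b i ≠ p₀}))
        rw [hsrtcnt τ.1 τ.2 j, hsrtcnt τ'.1 τ'.2 j]
      have h1 : Quot.mk R τ = Quot.mk R
          (⟨fun i => τ.1 (srtσ τ.1 i), hsrtcnt τ.1 τ.2⟩ : T) :=
        Quot.sound ⟨srtσ τ.1, hσb τ.1, rfl⟩
      have h2 : Quot.mk R τ' = Quot.mk R
          (⟨fun i => τ'.1 (srtσ τ'.1 i), hsrtcnt τ'.1 τ'.2⟩ : T) :=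
        Quot.sound ⟨srtσ τ'.1, hσb τ'.1, rfl⟩
      rw [h1, h2]
      congr 1
      exact Subtype.ext hs
    have hGinj : Function.Injective G := by
      intro x y h
      obtain ⟨τ, rfl⟩ := Quot.exists_rep x
      obtain ⟨τ', rfl⟩ := Quot.exists_rep y
      exact hkey τ τ' h
    have hle := Nat.card_le_card_of_injective G hGinj
    refine hle.trans (le_of_eq ?_)
    rw [Nat.card_eq_fintype_card, Fintype.card_fun, Fintype.card_fin, Fintype.card_subtype]
    congr 1
    rw [Finset.card_eq_sum_card_fiberwise (f := b) (t := Finset.univ.erase p₀)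
      (fun x hx => Finset.mem_erase.2
        ⟨by simpa using (Finset.mem_filter.mp hx).2, Finset.mem_univ _⟩)]
    refine Finset.sum_congr rfl fun k hk => ?_
    rw [Finset.filter_filter]
    rw [show (Finset.univ.filter fun i => ¬ b i = p₀ ∧ b i = k)
        = Finset.univ.filter fun i => b i = k from
      Finset.filter_congr fun x _ => ⟨And.right,
        fun h => ⟨fun hp => (Finset.mem_erase.1 hk).1 (hp.symm.trans h).symm, h⟩⟩]
    exact hfib k
end

section
/- Let V be a countable-dimensional complex vector space and V_* ⊂ V^* a countable-dimensional subspace with nondegenerate pairing V_* × V → ℂ. Let E be a basis of V whose dual family {φ_e : e ∈ E} spans V_*. Then the group GL(∞) := {g ∈ GL(V) : g(V_*) = V_*, and g fixes pointwise finite-codimensional subspaces of V and V_*} coincides with GL(E) := {g ∈ GL(V) : g(e) = e for almost all e ∈ E}. -/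
lemma mem_span_coord_iff {ι V : Type*} [AddCommGroup V] [Module ℂ V]
    (E : Module.Basis ι ℂ V) (φ : Module.Dual ℂ V) :
    φ ∈ Submodule.span ℂ (Set.range fun i => E.coord i) ↔ {i | φ (E i) ≠ 0}.Finite := by
  classical
  have coordval : ∀ i j : ι, E.coord i (E j) = if i = j then 1 else 0 := by
    intro i j
    rw [Module.Basis.coord_apply, Module.Basis.repr_self, Finsupp.single_apply]
    simp [eq_comm]
  constructor
  · intro h
    rw [Finsupp.mem_span_range_iff_exists_finsupp] at h
    obtain ⟨c, hc⟩ := h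
    apply c.finite_support.subset
    intro i hi
    simp only [Set.mem_setOf_eq] at hi
    rw [← hc] at hi
    contrapose! hi
    rw [Finsupp.sum, LinearMap.coe_sum, Finset.sum_apply]
    apply Finset.sum_eq_zero
    intro j hj
    have hji : j ≠ i := fun h => hi (h ▸ Finsupp.mem_support_iff.mp hj)
    simp [coordval, hji]
  · intro hf
    have key : φ = ∑ i ∈ hf.toFinset, φ (E i) • E.coord i := by
      apply E.ext
      intro j
      rw [LinearMap.sum_apply]
      by_cases hj : j ∈ hf.toFinset
      · rw [Finset.sum_eq_single j]
        · simp [coordval]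
        · intro b _ hbj; simp [coordval, hbj]
        · intro h; exact absurd hj h
      · have h0 : φ (E j) = 0 := by
          simpa using fun h => hj (hf.mem_toFinset.mpr h)
        rw [h0]
        symm
        apply Finset.sum_eq_zero
        intro b hb
        have hbj : b ≠ j := fun h => hj (h ▸ hb)
        simp [coordval, hbj]
    rw [key]
    exact Submodule.sum_mem _ fun i _ => Submodule.smul_mem _ _ (Submodule.subset_span ⟨i, rfl⟩)

/-- Let `V` be countable-dimensional over `ℂ`, `V_* ⊂ V^*` the span of the
dual family of a basis `E` (an admissible basis).  Then `g ∈ GL(V)` satisfies the defining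
conditions of `GL(∞)` (the transpose of `g` preserves `V_*`, and `g` fixes pointwise a
finite-codimensional subspace of `V` and of `V_*`) if and only if `g` fixes all but finitely
many vectors of `E`. -/
theorem stmt5 {ι V : Type*} [Countable ι] [AddCommGroup V] [Module ℂ V]
    (E : Module.Basis ι ℂ V) (Vs : Submodule ℂ (Module.Dual ℂ V))
    (hVs : Vs = Submodule.span ℂ (Set.range fun i => E.coord i))
    (g : V ≃ₗ[ℂ] V) :
    (Submodule.map (LinearMap.dualMap (g.symm : V →ₗ[ℂ] V)) Vs = Vs ∧
      (∃ W : Submodule ℂ V, FiniteDimensional ℂ (V ⧸ W) ∧ ∀ v ∈ W, g v = v) ∧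
      (∃ Ws : Submodule ℂ (Module.Dual ℂ V), Ws ≤ Vs ∧
        FiniteDimensional ℂ (↥Vs ⧸ Submodule.comap Vs.subtype Ws) ∧
        ∀ φ ∈ Ws, φ.comp (g : V →ₗ[ℂ] V) = φ)) ↔
    {i | g (E i) ≠ E i}.Finite := by
  classical
  have coordval : ∀ i j : ι, E.coord i (E j) = if i = j then 1 else 0 := by
    intro i j
    rw [Module.Basis.coord_apply, Module.Basis.repr_self, Finsupp.single_apply]
    simp [eq_comm]
  have hmem : ∀ φ, φ ∈ Vs ↔ {i | φ (E i) ≠ 0}.Finite := fun φ => by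
    rw [hVs, mem_span_coord_iff]
  constructor
  · rintro ⟨hA, -, Ws, hWsle, hWsfd, hWsfix⟩
    have hcoordmem : ∀ i, E.coord i ∈ Vs := fun i => hVs ▸ Submodule.subset_span ⟨i, rfl⟩
    have hcompg : ∀ φ ∈ Vs, φ.comp (g : V →ₗ[ℂ] V) ∈ Vs := by
      intro φ hφ
      have hφ' : φ ∈ Submodule.map (LinearMap.dualMap (g.symm : V →ₗ[ℂ] V)) Vs := hA.symm ▸ hφ
      obtain ⟨ψ, hψ, hψeq⟩ := hφ'
      have heq : φ.comp (g : V →ₗ[ℂ] V) = ψ := by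
        rw [← hψeq]; ext v
        simp [LinearMap.dualMap_apply]
      rwa [heq]
    set D : ↥Vs →ₗ[ℂ] Module.Dual ℂ V :=
      ((g : V →ₗ[ℂ] V).dualMap - LinearMap.id).comp Vs.subtype with hDdef
    have hDapp : ∀ x : ↥Vs, D x = (x : Module.Dual ℂ V).comp (g : V →ₗ[ℂ] V) - x := by
      intro x
      ext v
      simp [hDdef, LinearMap.dualMap_apply]
    have hker : Submodule.comap Vs.subtype Ws ≤ LinearMap.ker D := by
      intro x hx
      rw [LinearMap.mem_ker, hDapp, hWsfix (↑x) hx, sub_self]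
    have hrangele : LinearMap.range D ≤ Vs := by
      rintro _ ⟨x, rfl⟩
      rw [hDapp]
      exact Submodule.sub_mem _ (hcompg _ x.2) x.2
    have hrangefd : FiniteDimensional ℂ (LinearMap.range D) := by
      have heq : LinearMap.range D =
          LinearMap.range ((Submodule.comap Vs.subtype Ws).liftQ D hker) := by
        conv_lhs => rw [← Submodule.liftQ_mkQ (Submodule.comap Vs.subtype Ws) D hker]
        rw [LinearMap.range_comp, Submodule.range_mkQ, Submodule.map_top]
      rw [heq]
      infer_instance
    obtain ⟨t, ht⟩ : (LinearMap.range D).FG := Module.Finite.iff_fg.mp hrangefd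
    have hN : (⋃ ψ ∈ (t : Set (Module.Dual ℂ V)), {i | ψ (E i) ≠ 0}).Finite := by
      apply Set.Finite.biUnion t.finite_toSet
      intro ψ hψ
      have : ψ ∈ Vs := hrangele (ht ▸ Submodule.subset_span hψ)
      exact (hmem ψ).mp this
    apply hN.subset
    intro i hi
    simp only [Set.mem_setOf_eq] at hi
    by_contra hiN
    apply hi
    have hvan : ∀ ψ ∈ LinearMap.range D, ψ (E i) = 0 := by
      intro ψ hψ
      rw [← ht] at hψ
      have hsub : (t : Set (Module.Dual ℂ V)) ⊆
          ↑(LinearMap.ker (Module.Dual.eval ℂ V (E i))) := by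
        intro ψ' hψ'
        simp only [SetLike.mem_coe, LinearMap.mem_ker, Module.Dual.eval_apply]
        by_contra h0
        exact hiN (Set.mem_biUnion hψ' h0)
      have := Submodule.span_le.mpr hsub hψ
      simpa using this
    apply E.ext_elem
    intro j
    have h0 : D ⟨E.coord j, hcoordmem j⟩ (E i) = 0 :=
      hvan _ (LinearMap.mem_range_self D _)
    rw [hDapp] at h0
    simp only [LinearMap.sub_apply, LinearMap.comp_apply, LinearEquiv.coe_coe,
      Module.Basis.coord_apply, sub_eq_zero] at h0
    exact h0
  · intro hS
    set S := {i | g (E i) ≠ E i} with hSdef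
    have hfix : ∀ i, i ∉ S → g (E i) = E i := fun i hi => not_not.mp hi
    have hsymmfix : ∀ i, i ∉ S → g.symm (E i) = E i := by
      intro i hi
      rw [← hfix i hi, LinearEquiv.symm_apply_apply, hfix i hi]
    refine ⟨?_, ?_, ?_⟩
    · -- (A)
      have hcomp : ∀ i : ι, (E.coord i).comp (g : V →ₗ[ℂ] V) ∈ Vs := by
        intro i
        rw [hmem]
        apply (hS.union (Set.finite_singleton i)).subset
        intro j hj
        simp only [Set.mem_setOf_eq, LinearMap.comp_apply, LinearEquiv.coe_coe] at hj
        by_contra hjn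
        simp only [Set.mem_union, Set.mem_singleton_iff, not_or] at hjn
        apply hj
        rw [hfix j hjn.1, coordval, if_neg (Ne.symm hjn.2)]
      apply le_antisymm
      · rw [Submodule.map_le_iff_le_comap, hVs, Submodule.span_le]
        rintro _ ⟨i, rfl⟩
        simp only [SetLike.mem_coe, Submodule.mem_comap]
        rw [mem_span_coord_iff]
        apply (hS.union (Set.finite_singleton i)).subset
        intro j hj
        simp only [Set.mem_setOf_eq, LinearMap.dualMap_apply, LinearEquiv.coe_coe] at hj
        by_contra hjn
        simp only [Set.mem_union, Set.mem_singleton_iff, not_or] at hjn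
        apply hj
        rw [hsymmfix j hjn.1, coordval, if_neg (Ne.symm hjn.2)]
      · conv_lhs => rw [hVs]
        rw [Submodule.span_le]
        rintro _ ⟨i, rfl⟩
        refine ⟨(E.coord i).comp (g : V →ₗ[ℂ] V), hcomp i, ?_⟩
        ext v
        simp
    · -- (B)
      refine ⟨Submodule.span ℂ (⇑E '' Sᶜ), ?_, ?_⟩
      · refine Module.finite_def.mpr ⟨hS.toFinset.image fun i => Submodule.mkQ _ (E i), ?_⟩
        have htop : Submodule.span ℂ (⇑(Submodule.span ℂ (⇑E '' Sᶜ)).mkQ '' Set.range ⇑E) = ⊤ := by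
          rw [← Submodule.map_span _ (Set.range ⇑E), E.span_eq, Submodule.map_top, Submodule.range_mkQ]
        rw [eq_top_iff, ← htop, Submodule.span_le]
        rintro _ ⟨_, ⟨i, rfl⟩, rfl⟩
        by_cases hi : i ∈ S
        · apply Submodule.subset_span
          simp only [Finset.coe_image]
          exact ⟨i, by simpa using hi, rfl⟩
        · have : (Submodule.span ℂ (⇑E '' Sᶜ)).mkQ (E i) = 0 := by
            rw [Submodule.mkQ_apply, Submodule.Quotient.mk_eq_zero]
            exact Submodule.subset_span ⟨i, hi, rfl⟩
          rw [this]
          exact Submodule.zero_mem _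
      · intro v hv
        have hle : Submodule.span ℂ (⇑E '' Sᶜ) ≤
            LinearMap.ker ((g : V →ₗ[ℂ] V) - LinearMap.id) := by
          rw [Submodule.span_le]
          rintro _ ⟨i, hi, rfl⟩
          simp only [SetLike.mem_coe, LinearMap.mem_ker, LinearMap.sub_apply,
            LinearMap.id_apply, LinearEquiv.coe_coe]
          rw [hfix i hi, sub_self]
        have := hle hv
        simp only [LinearMap.mem_ker, LinearMap.sub_apply, LinearMap.id_apply,
          LinearEquiv.coe_coe] at this
        exact sub_eq_zero.mp this
    · -- (C)
      set T : Set ι := S ∪ ⋃ j ∈ S, ((E.repr (g (E j))).support : Set ι) with hTdef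
      have hT : T.Finite := hS.union (hS.biUnion fun j _ => (E.repr (g (E j))).support.finite_toSet)
      refine ⟨Submodule.span ℂ ((fun i => E.coord i) '' Tᶜ), ?_, ?_, ?_⟩
      · rw [hVs]
        exact Submodule.span_mono (Set.image_subset_range _ _)
      · -- finite codim
        set F := Submodule.span ℂ ((fun i => E.coord i) '' T) with hFdef
        have hFfd : FiniteDimensional ℂ F := FiniteDimensional.span_of_finite ℂ (hT.image _)
        have hFle : F ≤ Vs := by rw [hVs]; exact Submodule.span_mono (Set.image_subset_range _ _)
        set Ws' := Submodule.comap Vs.subtype (Submodule.span ℂ ((fun i => E.coord i) '' Tᶜ))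
        have hsup : Vs ≤ Submodule.span ℂ ((fun i => E.coord i) '' Tᶜ) ⊔ F := by
          rw [hVs, Submodule.span_le]
          rintro _ ⟨i, rfl⟩
          by_cases hi : i ∈ T
          · exact Submodule.mem_sup_right (Submodule.subset_span ⟨i, hi, rfl⟩)
          · exact Submodule.mem_sup_left (Submodule.subset_span ⟨i, hi, rfl⟩)
        apply Module.Finite.of_surjective (Ws'.mkQ.comp (Submodule.inclusion hFle))
        intro q
        obtain ⟨x, rfl⟩ := Submodule.mkQ_surjective _ q
        obtain ⟨w, hw, f, hf, hwf⟩ := Submodule.mem_sup.mp (hsup x.2)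
        refine ⟨⟨f, hf⟩, ?_⟩
        simp only [LinearMap.comp_apply, Submodule.mkQ_apply]
        rw [Submodule.Quotient.eq, Submodule.mem_comap]
        simp only [Submodule.subtype_apply, Submodule.coe_sub, Submodule.coe_inclusion]
        have : f - x.1 = -w := by rw [← hwf]; abel
        rw [this]
        exact neg_mem hw
      · -- pointwise fix
        intro φ hφ
        have hle : Submodule.span ℂ ((fun i => E.coord i) '' Tᶜ) ≤
            LinearMap.ker ((g : V →ₗ[ℂ] V).dualMap - LinearMap.id) := by
          rw [Submodule.span_le]
          rintro _ ⟨i, hi, rfl⟩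
          simp only [SetLike.mem_coe, LinearMap.mem_ker, LinearMap.sub_apply,
            LinearMap.id_apply]
          rw [sub_eq_zero]
          apply E.ext
          intro j
          simp only [LinearMap.dualMap_apply, LinearEquiv.coe_coe]
          by_cases hj : j ∈ S
          · have hiS : i ∉ S := fun h => hi (Or.inl h)
            have hij : i ≠ j := fun h => hiS (h ▸ hj)
            rw [coordval, if_neg hij, Module.Basis.coord_apply]
            have : i ∉ ((E.repr (g (E j))).support : Set ι) := by
              intro h
              exact hi (Or.inr (Set.mem_biUnion hj h))
            simpa using Finsupp.notMem_support_iff.mp (by simpa using this)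
          · rw [hfix j hj]
        have := hle hφ
        simp only [LinearMap.mem_ker, LinearMap.sub_apply, LinearMap.id_apply] at this
        have h2 := sub_eq_zero.mp this
        have h3 : φ.comp (g : V →ₗ[ℂ] V) = (g : V →ₗ[ℂ] V).dualMap φ := by
          ext v; simp [LinearMap.dualMap_apply]
        rw [h3, h2]
end

section
/- Let V be a countable-dimensional complex vector space with basis E, and let {e_n, e'_n}_{n≥1} ⊂ E be a double infinite sequence of pairwise distinct basis vectors. Define ẽ_n := e_n + e'_n, ẽ'_n := e_n − e'_n, and Ẽ := (E \ {e_n, e'_n}_{n≥1}) ∪ {ẽ_n, ẽ'_n}_{n≥1}, a new basis of V, and let H' := H(Ẽ) be the subgroup of GL(V) of elements diagonal in Ẽ. Then for every g ∈ GL(E) := {g ∈ GL(V) : g(e)=e for almost all e ∈ E}, we have g H' g⁻¹ ⊄ H(E); in particular the subgroups H(E) and H(Ẽ) of GL(E) are not conjugate in GL(E). -/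
/-- Let `E` be a basis of a countable-dimensional complex vector space `V`,
`{e_n, e'_n}` a double sequence of pairwise distinct basis vectors, and `Ẽ` a basis of `V`
whose set of vectors is obtained from that of `E` by replacing the vectors `e_n, e'_n`
(`n ∈ ℕ`) by `e_n + e'_n, e_n − e'_n`.  Then for every `g ∈ GL(E)` the conjugate
`g H(Ẽ) g⁻¹` of the diagonal subgroup of `Ẽ` is not contained in `H(E)`; in particular
`H(E)` and `H(Ẽ)` are not conjugate in `GL(E)`. -/
theorem stmt7 {ι ι' V : Type*} [AddCommGroup V] [Module ℂ V]
    (E : Module.Basis ι ℂ V) (f : ℕ × Bool → ι) (hf : Function.Injective f)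
    (Et : Module.Basis ι' ℂ V)
    (hEt : Set.range ⇑Et =
      (Set.range ⇑E \ Set.range fun x : ℕ × Bool => E (f x)) ∪
      ((Set.range fun n : ℕ => E (f (n, true)) + E (f (n, false))) ∪
       (Set.range fun n : ℕ => E (f (n, true)) - E (f (n, false))))) :
    ∀ g : V ≃ₗ[ℂ] V, {i | g (E i) ≠ E i}.Finite →
      ∃ h : V ≃ₗ[ℂ] V, (∀ j, ∃ c : ℂ, h (Et j) = c • Et j) ∧
        ¬ (∀ i, ∃ c : ℂ, (g.symm.trans (h.trans g)) (E i) = c • E i) := by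
  classical
  intro g hg
  -- choose n with g fixing e_n and e'_n
  have hT : (Prod.fst '' (f ⁻¹' {i | g (E i) ≠ E i})).Finite :=
    ((hg.preimage hf.injOn).image _)
  obtain ⟨n, hn⟩ := hT.infinite_compl.nonempty
  have hgen : g (E (f (n, true))) = E (f (n, true)) := by
    by_contra hne
    exact hn ⟨(n, true), hne, rfl⟩
  have hgen' : g (E (f (n, false))) = E (f (n, false)) := by
    by_contra hne
    exact hn ⟨(n, false), hne, rfl⟩
  set e := E (f (n, true)) with he
  set e' := E (f (n, false)) with he'
  -- indices of ẽ_n and ẽ'_n in Et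
  have hj : e + e' ∈ Set.range ⇑Et := by
    rw [hEt]; exact Or.inr (Or.inl ⟨n, rfl⟩)
  have hj' : e - e' ∈ Set.range ⇑Et := by
    rw [hEt]; exact Or.inr (Or.inr ⟨n, rfl⟩)
  obtain ⟨j, hjv⟩ := hj
  obtain ⟨j', hjv'⟩ := hj'
  have hne' : e' ≠ 0 := E.ne_zero _
  have hjj' : j ≠ j' := by
    intro h
    rw [h, hjv'] at hjv
    have : (2 : ℂ) • e' = 0 := by
      rw [two_smul]; linear_combination (norm := module) -hjv
    exact hne' (by simpa using (smul_eq_zero.mp this).resolve_left (by norm_num))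
  -- the diagonal map h : identity except -1 at j'
  set φ : V →ₗ[ℂ] V := Et.constr ℂ (fun k => if k = j' then -Et k else Et k) with hφ
  have hφb : ∀ k, φ (Et k) = if k = j' then -Et k else Et k := fun k =>
    Module.Basis.constr_basis _ _ _ _
  have hφφ : φ ∘ₗ φ = LinearMap.id := by
    apply Et.ext
    intro k
    simp only [LinearMap.comp_apply, hφb, LinearMap.id_apply]
    by_cases hk : k = j' <;> simp [hk, hφb]
  set h : V ≃ₗ[ℂ] V := LinearEquiv.ofLinear φ φ hφφ hφφ with hh
  refine ⟨h, ?_, ?_⟩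
  · intro k
    by_cases hk : k = j'
    · exact ⟨-1, by simp [hh, hφb, hk]⟩
    · exact ⟨1, by simp [hh, hφb, hk]⟩
  · intro hall
    obtain ⟨c, hc⟩ := hall (f (n, true))
    -- compute the conjugate applied to e
    have key : (g.symm.trans (h.trans g)) e = e' := by
      have hgsymm : g.symm e = e := by
        rw [LinearEquiv.symm_apply_eq, hgen]
      have hdecomp : e = (2⁻¹ : ℂ) • ((e + e') + (e - e')) := by
        match_scalars <;> ring
      have hhe : h e = e' := by
        rw [hdecomp]
        have h1 : φ (e + e') = e + e' := by rw [← hjv, hφb, if_neg hjj']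
        have h2 : φ (e - e') = -(e - e') := by rw [← hjv', hφb, if_pos rfl]
        show φ _ = e'
        rw [map_smul, map_add, h1, h2]
        match_scalars <;> ring
      simp only [LinearEquiv.trans_apply, hgsymm, hhe, hgen']
    rw [key] at hc
    -- e' = c • e contradicts linear independence
    have := congrArg (fun v => E.repr v (f (n, false))) hc
    simp only [he, he', map_smul, Module.Basis.repr_self, Finsupp.smul_apply,
      Finsupp.single_apply] at this
    rw [if_neg (show f (n, true) ≠ f (n, false) from fun hh' => by simpa using hf hh')] at this
    simp at this
end

section
/- Let V be a countable-dimensional complex vector space and V_* ⊂ V^* a countable-dimensional subspace pairing nondegenerately with V. Let E be a basis of V with dual family spanning V_*. Let F ⊂ V be a subspace containing a finite-codimensional subspace spanned by a subset of E (i.e. weakly E-compatible), let φ ∈ V_* with F ⊄ ker φ, and let v ∈ V \ F. Then F' := (F ∩ ker φ) ⊕ ℂv satisfies: F' contains a finite-codimensional subspace spanned by a subset of E, and there exists a finite-dimensional subspace U ⊂ V with F + U = F' + U and dim(F ∩ U) = dim(F' ∩ U). -/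
set_option maxHeartbeats 1000000

/-- A subspace `F` of `V` is weakly `E`-compatible if it contains a subspace spanned by a
subset of the basis `E` which has finite codimension in `F`. -/
def WeaklyCompat {ι V : Type*} [AddCommGroup V] [Module ℂ V]
    (E : Module.Basis ι ℂ V) (F : Submodule ℂ V) : Prop :=
  ∃ S : Set ι, Submodule.span ℂ (⇑E '' S) ≤ F ∧
    FiniteDimensional ℂ (↥F ⧸ Submodule.comap F.subtype (Submodule.span ℂ (⇑E '' S)))

open Submodule in
/-- Finite codimension of `W` in `F` is equivalent to `F` being contained in the sup of `W`
with a finite-dimensional subspace. -/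
lemma aux_quot_iff {V : Type*} [AddCommGroup V] [Module ℂ V] (W F : Submodule ℂ V) :
    FiniteDimensional ℂ (↥F ⧸ Submodule.comap F.subtype W) ↔
      ∃ U : Submodule ℂ V, FiniteDimensional ℂ ↥U ∧ F ≤ W ⊔ U := by
  have hker : LinearMap.ker (W.mkQ ∘ₗ F.subtype) = comap F.subtype W := by
    rw [LinearMap.ker_comp, Submodule.ker_mkQ]
  have hrange : LinearMap.range (W.mkQ ∘ₗ F.subtype) = map W.mkQ F := by
    rw [LinearMap.range_comp, Submodule.range_subtype]
  have e : (↥F ⧸ comap F.subtype W) ≃ₗ[ℂ] ↥(map W.mkQ F) := by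
    rw [← hker, ← hrange]; exact (W.mkQ ∘ₗ F.subtype).quotKerEquivRange
  constructor
  · intro h
    have h2 : FiniteDimensional ℂ ↥(map W.mkQ F) := Module.Finite.equiv e
    obtain ⟨T, hT⟩ := (fg_iff_finiteDimensional (map W.mkQ F)).mpr h2
    have hex : ∃ t ⊆ ⇑W.mkQ '' (F : Set V), t.Finite ∧
        span ℂ t = map W.mkQ F := by
      refine ⟨↑T, ?_, T.finite_toSet, hT⟩
      intro t ht
      have h3 := subset_span (R := ℂ) ht
      rw [hT] at h3
      exact h3
    obtain ⟨u, huF, hufin, hu⟩ := Set.exists_subset_image_finite_and.mp hex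
    rw [← Submodule.map_span] at hu
    refine ⟨span ℂ u, FiniteDimensional.span_of_finite ℂ hufin, ?_⟩
    calc F ≤ comap W.mkQ (map W.mkQ F) := le_comap_map _ _
      _ = comap W.mkQ (map W.mkQ (span ℂ u)) := by rw [hu]
      _ = W ⊔ span ℂ u := comap_map_mkQ W _
  · rintro ⟨U, hU, hFU⟩
    have h1 : map W.mkQ F ≤ map W.mkQ U := by
      refine le_trans (map_mono hFU) ?_
      rw [Submodule.map_sup]
      refine sup_le ?_ le_rfl
      have : map W.mkQ W ≤ ⊥ := map_le_iff_le_comap.mpr (by rw [comap_bot, ker_mkQ])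
      exact le_trans this bot_le
    have : FiniteDimensional ℂ ↥(map W.mkQ U) := inferInstance
    have := Submodule.finiteDimensional_of_le h1
    exact Module.Finite.equiv e.symm

/-- Let `V_* ⊂ V^*` be spanned by the dual family of the basis `E`, let `F`
be a weakly `E`-compatible subspace, `φ ∈ V_*` with `F ⊄ ker φ`, and `v ∈ V \ F`.  Then
`F' := (F ∩ ker φ) ⊕ ℂv` is again weakly `E`-compatible and is `E`-commensurable with `F`:
there is a finite-dimensional subspace `U` with `F + U = F' + U` and
`dim (F ∩ U) = dim (F' ∩ U)`. -/
theorem stmt8 {ι V : Type*} [Countable ι] [AddCommGroup V] [Module ℂ V]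
    (E : Module.Basis ι ℂ V) (Vs : Submodule ℂ (Module.Dual ℂ V))
    (hVs : Vs = Submodule.span ℂ (Set.range fun i => E.coord i))
    (F : Submodule ℂ V) (hF : WeaklyCompat E F)
    (φ : Module.Dual ℂ V) (hφ : φ ∈ Vs) (hFφ : ¬ F ≤ LinearMap.ker φ)
    (v : V) (hv : v ∉ F) :
    WeaklyCompat E ((F ⊓ LinearMap.ker φ) ⊔ Submodule.span ℂ {v}) ∧
    ∃ U : Submodule ℂ V, FiniteDimensional ℂ ↥U ∧
      F ⊔ U = ((F ⊓ LinearMap.ker φ) ⊔ Submodule.span ℂ {v}) ⊔ U ∧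
      Module.finrank ℂ ↥(F ⊓ U) =
        Module.finrank ℂ ↥(((F ⊓ LinearMap.ker φ) ⊔ Submodule.span ℂ {v}) ⊓ U) := by
  classical
  set F' := (F ⊓ LinearMap.ker φ) ⊔ Submodule.span ℂ {v} with hF'
  -- a vector w ∈ F with φ w ≠ 0
  obtain ⟨w, hwF, hwφ⟩ : ∃ w ∈ F, φ w ≠ 0 := by
    by_contra hcon
    push_neg at hcon
    exact hFφ fun x hx => LinearMap.mem_ker.mpr (hcon x hx)
  have hw0 : w ≠ 0 := fun h => hwφ (by simp [h])
  have hv0 : v ≠ 0 := fun h => hv (h ▸ F.zero_mem)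
  constructor
  · -- weak compatibility of F'
    obtain ⟨S, hS1, hS2⟩ := hF
    rw [hVs, Finsupp.mem_span_range_iff_exists_finsupp] at hφ
    obtain ⟨c, hc⟩ := hφ
    set S' : Set ι := S \ ↑c.support with hS'
    have hφE : ∀ i ∈ S', φ (E i) = 0 := by
      intro i hi
      have hi2 : i ∉ c.support := hi.2
      rw [← hc]
      rw [Finsupp.sum]
      simp only [LinearMap.coe_sum, Finset.sum_apply, LinearMap.smul_apply,
        Module.Basis.coord_apply, Module.Basis.repr_self]
      refine Finset.sum_eq_zero fun j hj => ?_
      have : j ≠ i := fun h => hi2 (h ▸ hj)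
      rw [Finsupp.single_apply, if_neg (fun h => this h.symm)]
      simp
    have hspan' : Submodule.span ℂ (⇑E '' S') ≤ F ⊓ LinearMap.ker φ := by
      rw [Submodule.span_le]
      rintro x ⟨i, hi, rfl⟩
      refine ⟨hS1 (Submodule.subset_span ⟨i, hi.1, rfl⟩), LinearMap.mem_ker.mpr (hφE i hi)⟩
    refine ⟨S', le_trans hspan' le_sup_left, ?_⟩
    rw [aux_quot_iff]
    obtain ⟨U₁, hU₁, hFU₁⟩ := (aux_quot_iff _ F).mp hS2
    have hfin2 : FiniteDimensional ℂ ↥(Submodule.span ℂ (⇑E '' (S ∩ ↑c.support))) :=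
      FiniteDimensional.span_of_finite ℂ
        ((c.support.finite_toSet.inter_of_right S).image ⇑E)
    refine ⟨Submodule.span ℂ (⇑E '' (S ∩ ↑c.support)) ⊔ U₁ ⊔ Submodule.span ℂ {v},
      inferInstance, ?_⟩
    rw [hF']
    have hSsplit : Submodule.span ℂ (⇑E '' S) ≤
        Submodule.span ℂ (⇑E '' S') ⊔ Submodule.span ℂ (⇑E '' (S ∩ ↑c.support)) := by
      rw [← Submodule.span_union, ← Set.image_union]
      refine Submodule.span_mono (Set.image_mono ?_)
      intro i hi
      by_cases h : i ∈ c.support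
      · exact Or.inr ⟨hi, h⟩
      · exact Or.inl ⟨hi, h⟩
    refine sup_le (le_trans inf_le_left (le_trans hFU₁ (sup_le (le_trans hSsplit
        (sup_le le_sup_left (le_sup_of_le_right (le_sup_of_le_left le_sup_left))))
        (le_sup_of_le_right (le_sup_of_le_left le_sup_right)))))
      (le_sup_of_le_right le_sup_right)
  · -- commensurability
    refine ⟨Submodule.span ℂ {v} ⊔ Submodule.span ℂ {w}, inferInstance, ?_, ?_⟩
    · -- F ⊔ U = F' ⊔ U
      have hFw : F ⊔ Submodule.span ℂ {w} = F :=
        sup_eq_left.mpr ((Submodule.span_singleton_le_iff_mem w F).mpr hwF)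
      have hkey : (F ⊓ LinearMap.ker φ) ⊔ Submodule.span ℂ {w} = F := by
        refine le_antisymm (sup_le inf_le_left
          ((Submodule.span_singleton_le_iff_mem w F).mpr hwF)) ?_
        intro x hx
        have hxeq : x = (x - (φ x / φ w) • w) + (φ x / φ w) • w := by abel
        rw [hxeq]
        refine Submodule.add_mem _ (Submodule.mem_sup_left (Submodule.mem_inf.mpr
            ⟨F.sub_mem hx (F.smul_mem _ hwF), LinearMap.mem_ker.mpr ?_⟩))
          (Submodule.mem_sup_right (Submodule.smul_mem _ _ (Submodule.mem_span_singleton_self w)))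
        rw [map_sub, map_smul, smul_eq_mul, div_mul_cancel₀ _ hwφ, sub_self]
      rw [hF']
      refine le_antisymm (sup_le ?_ le_sup_right)
        (sup_le (sup_le (le_sup_of_le_left inf_le_left)
          (le_sup_of_le_right le_sup_left)) le_sup_right)
      calc F = (F ⊓ LinearMap.ker φ) ⊔ Submodule.span ℂ {w} := hkey.symm
        _ ≤ _ := sup_le (le_sup_of_le_left le_sup_left) (le_sup_of_le_right le_sup_right)
    · -- finranks
      have hspanpair : Submodule.span ℂ {v} ⊔ Submodule.span ℂ {w} =
          Submodule.span ℂ {v, w} := by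
        rw [← Submodule.span_union, Set.singleton_union]
      have hFU : F ⊓ (Submodule.span ℂ {v} ⊔ Submodule.span ℂ {w}) = Submodule.span ℂ {w} := by
        rw [hspanpair]
        refine le_antisymm ?_ (le_inf ((Submodule.span_singleton_le_iff_mem w F).mpr hwF)
          (Submodule.span_mono (by simp)))
        rintro x ⟨hxF, hxU⟩
        obtain ⟨a, b, rfl⟩ := Submodule.mem_span_pair.mp hxU
        have hav : a • v ∈ F := by
          have h2 : a • v = (a • v + b • w) - b • w := by abel
          rw [h2]; exact F.sub_mem hxF (F.smul_mem _ hwF)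
        have ha : a = 0 := by
          by_contra ha
          exact hv (by simpa [smul_smul, inv_mul_cancel₀ ha] using F.smul_mem a⁻¹ hav)
        rw [ha, zero_smul, zero_add]
        exact Submodule.smul_mem _ _ (Submodule.mem_span_singleton_self w)
      have hF'U : F' ⊓ (Submodule.span ℂ {v} ⊔ Submodule.span ℂ {w}) =
          Submodule.span ℂ {v} := by
        rw [hspanpair]
        refine le_antisymm ?_ (le_inf (le_sup_right)
          (Submodule.span_mono (by simp)))
        rintro x ⟨hxF', hxU⟩
        obtain ⟨a, b, rfl⟩ := Submodule.mem_span_pair.mp hxU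
        rw [hF'] at hxF'
        obtain ⟨f, hf, y, hy, hfy⟩ := Submodule.mem_sup.mp hxF'
        obtain ⟨d, rfl⟩ := Submodule.mem_span_singleton.mp hy
        -- a • v + b • w = f + d • v, f ∈ F ⊓ ker φ
        have hbw : b • w + (a - d) • v = f := by
          rw [eq_sub_of_add_eq hfy, sub_smul]; abel
        have had : a = d := by
          by_contra had
          have hadv : (a - d) • v ∈ F := by
            have h1 : (a - d) • v = f - b • w := by rw [← hbw]; abel
            rw [h1]
            exact F.sub_mem hf.1 (F.smul_mem _ hwF)
          have hsub : a - d ≠ 0 := sub_ne_zero.mpr had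
          exact hv (by simpa [smul_smul, inv_mul_cancel₀ hsub] using F.smul_mem (a - d)⁻¹ hadv)
        have hb : b = 0 := by
          rw [had] at hbw
          have hbwf : b • w = f := by simpa using hbw
          have hzero : φ (b • w) = 0 := by rw [hbwf]; exact hf.2
          simpa [hwφ] using hzero
        rw [hb, zero_smul, add_zero]
        exact Submodule.smul_mem _ _ (Submodule.mem_span_singleton_self v)
      rw [hFU, hF'U, finrank_span_singleton hw0, finrank_span_singleton hv0]
end

section
/- Let V be a countable-dimensional complex vector space, V_* ⊂ V^* with nondegenerate pairing, and suppose L = ⋂_{φ∈Φ} ker φ ⊊ M = ⋂_{φ∈Ψ} ker φ for subsets Ψ ⊊ Φ ⊂ V_*. Let F ≠ 0 be a weakly E-compatible subspace of V. If F ∩ M ⊄ L and F + M ≠ V, then there exists a subspace F' ⊂ V, E-commensurable with F, such that F' ∩ L = F ∩ L and F' ∩ M is a hyperplane in F ∩ M. -/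
open Submodule

section Aux
variable {V : Type*} [AddCommGroup V] [Module ℂ V]

lemma quotFD_of_sup {W G B : Submodule ℂ V} (hfd : FiniteDimensional ℂ G)
    (hsup : W ⊔ G = B) :
    FiniteDimensional ℂ (↥B ⧸ Submodule.comap B.subtype W) := by
  have hGB : G ≤ B := le_trans le_sup_right hsup.le
  let f : ↥G →ₗ[ℂ] ↥B ⧸ comap B.subtype W :=
    (comap B.subtype W).mkQ ∘ₗ Submodule.inclusion hGB
  have hsurj : Function.Surjective f := by
    intro z
    obtain ⟨⟨b, hb⟩, rfl⟩ := (comap B.subtype W).mkQ_surjective z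
    have hb' : b ∈ W ⊔ G := hsup ▸ hb
    obtain ⟨w, hw, g, hg, hwg⟩ := Submodule.mem_sup.mp hb'
    refine ⟨⟨g, hg⟩, ?_⟩
    show (comap B.subtype W).mkQ ⟨g, hGB hg⟩ = (comap B.subtype W).mkQ ⟨b, hb⟩
    rw [Submodule.mkQ_apply, Submodule.mkQ_apply, Submodule.Quotient.eq]
    show (g : V) - b ∈ W
    have h : (g : V) - b = -w := by rw [← hwg]; abel
    rw [h]
    exact neg_mem hw
  exact Module.Finite.of_surjective f hsurj

lemma quotFD_mono {W A B : Submodule ℂ V} (hAB : A ≤ B)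
    (hfd : FiniteDimensional ℂ (↥B ⧸ Submodule.comap B.subtype W)) :
    FiniteDimensional ℂ (↥A ⧸ Submodule.comap A.subtype W) := by
  let f : ↥A ⧸ comap A.subtype W →ₗ[ℂ] ↥B ⧸ comap B.subtype W :=
    Submodule.mapQ _ _ (Submodule.inclusion hAB) (fun x hx => hx)
  have hinj : Function.Injective f := by
    rw [← LinearMap.ker_eq_bot, eq_bot_iff]
    intro z hz
    obtain ⟨a, rfl⟩ := (comap A.subtype W).mkQ_surjective z
    have h : (comap B.subtype W).mkQ (Submodule.inclusion hAB a) = 0 := hz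
    rw [Submodule.mkQ_apply, Submodule.Quotient.mk_eq_zero] at h
    have h2 : (a : V) ∈ W := h
    simpa [Submodule.mkQ_apply, Submodule.Quotient.mk_eq_zero] using h2
  exact FiniteDimensional.of_injective f hinj

lemma exists_sup_of_quotFD {W F : Submodule ℂ V} (hWF : W ≤ F)
    (hfd : FiniteDimensional ℂ (↥F ⧸ Submodule.comap F.subtype W)) :
    ∃ G : Submodule ℂ V, FiniteDimensional ℂ G ∧ W ⊔ G = F := by
  have : Module.Finite ℂ (↥F ⧸ comap F.subtype W) := hfd
  obtain ⟨s, hs⟩ := Module.finite_def.mp this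
  choose rep hrep using (comap F.subtype W).mkQ_surjective
  set T : Set ↥F := rep '' ↑s with hT
  have hmap : Submodule.map (comap F.subtype W).mkQ (span ℂ T) = ⊤ := by
    rw [Submodule.map_span, hT, ← Set.image_comp]
    have h : ((comap F.subtype W).mkQ ∘ rep) '' ↑s = ↑s := by
      ext z
      constructor
      · rintro ⟨a, ha, rfl⟩; simpa [hrep] using ha
      · intro hz; exact ⟨z, hz, hrep z⟩
    rw [h, hs]
  have hcomap : span ℂ T ⊔ comap F.subtype W = ⊤ := by
    have h := congrArg (Submodule.comap (comap F.subtype W).mkQ) hmap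
    rwa [Submodule.comap_map_eq, Submodule.ker_mkQ, Submodule.comap_top] at h
  refine ⟨span ℂ ((Subtype.val '' T : Set V)), ?_, ?_⟩
  · exact FiniteDimensional.span_of_finite ℂ ((s.finite_toSet.image rep).image _)
  · have h := congrArg (Submodule.map F.subtype) hcomap
    rw [Submodule.map_sup, Submodule.map_span, Submodule.map_comap_subtype,
      inf_eq_right.mpr hWF] at h
    have htop : Submodule.map F.subtype ⊤ = F := by
      rw [Submodule.map_top, Submodule.range_subtype]
    rw [htop] at h
    rw [sup_comm] at h
    exact h

end Aux


/-- `F'` is `E`-commensurable with `F`. -/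
def CommensurableWith {ι V : Type*} [AddCommGroup V] [Module ℂ V]
    (E : Module.Basis ι ℂ V) (F F' : Submodule ℂ V) : Prop :=
  WeaklyCompat E F' ∧ ∃ U : Submodule ℂ V, FiniteDimensional ℂ ↥U ∧
    F ⊔ U = F' ⊔ U ∧ Module.finrank ℂ ↥(F ⊓ U) = Module.finrank ℂ ↥(F' ⊓ U)

/-- With `L = ⋂_{φ∈Φ} ker φ ⊊ M = ⋂_{φ∈Ψ} ker φ` for `Ψ ⊊ Φ ⊂ V_*`, and
`F ≠ 0` weakly `E`-compatible with `F ∩ M ⊄ L` and `F + M ≠ V`, there is `F'`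
`E`-commensurable with `F` such that `F' ∩ L = F ∩ L` and `F' ∩ M` is a hyperplane
in `F ∩ M`. -/
theorem stmt9 {ι V : Type*} [Countable ι] [AddCommGroup V] [Module ℂ V]
    (E : Module.Basis ι ℂ V) (Vs : Submodule ℂ (Module.Dual ℂ V))
    (hVs : Vs = Submodule.span ℂ (Set.range fun i => E.coord i))
    (Φ Ψ : Set (Module.Dual ℂ V)) (hΨΦ : Ψ ⊂ Φ) (hΦ : Φ ⊆ (Vs : Set (Module.Dual ℂ V)))
    (L M : Submodule ℂ V)
    (hL : L = ⨅ φ ∈ Φ, LinearMap.ker φ) (hM : M = ⨅ φ ∈ Ψ, LinearMap.ker φ)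
    (hLM : L < M)
    (F : Submodule ℂ V) (hF0 : F ≠ ⊥) (hFwc : WeaklyCompat E F)
    (h1 : ¬ F ⊓ M ≤ L) (h2 : F ⊔ M ≠ ⊤) :
    ∃ F' : Submodule ℂ V, CommensurableWith E F F' ∧
      F' ⊓ L = F ⊓ L ∧ F' ⊓ M ≤ F ⊓ M ∧
      ∃ w ∈ F ⊓ M, w ∉ F' ⊓ M ∧ (F' ⊓ M) ⊔ Submodule.span ℂ {w} = F ⊓ M := by
  obtain ⟨x, hxFM, hxL⟩ := SetLike.not_le_iff_exists.mp h1
  have hxF : x ∈ F := hxFM.1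
  have hxM : x ∈ M := hxFM.2
  have hφex : ∃ φ ∈ Φ, φ x ≠ 0 := by
    by_contra h
    push_neg at h
    apply hxL
    rw [hL]
    simp only [Submodule.mem_iInf, LinearMap.mem_ker]
    exact h
  obtain ⟨φ, hφΦ, hφx⟩ := hφex
  have hvex : ∃ v, v ∉ F ⊔ M := by
    by_contra h
    push_neg at h
    exact h2 (eq_top_iff.mpr fun y _ => h y)
  obtain ⟨v, hvFM⟩ := hvex
  have hvF : v ∉ F := fun h => hvFM (Submodule.mem_sup_left h)
  have hx0 : x ≠ 0 := fun h => hφx (by rw [h, map_zero])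
  have hv0 : v ≠ 0 := fun h => hvFM (h ▸ zero_mem _)
  set F' := (F ⊓ LinearMap.ker φ) ⊔ span ℂ {v} with hF'def
  have hLker : L ≤ LinearMap.ker φ := by
    rw [hL]
    exact iInf_le_of_le φ (iInf_le_of_le hφΦ le_rfl)
  -- scalar cancellation facts
  have hcv : ∀ c : ℂ, c • v ∈ F ⊔ M → c = 0 := by
    intro c h
    by_contra hc
    apply hvFM
    have h2' := Submodule.smul_mem _ c⁻¹ h
    rwa [smul_smul, inv_mul_cancel₀ hc, one_smul] at h2'
  have hcvF : ∀ c : ℂ, c • v ∈ F → c = 0 := fun c h => hcv c (Submodule.mem_sup_left h)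
  -- decomposition of members of F'
  have hmemF' : ∀ z ∈ F', ∃ y ∈ F ⊓ LinearMap.ker φ, ∃ c : ℂ, z = y + c • v := by
    intro z hz
    obtain ⟨y, hy, w, hw, hyw⟩ := Submodule.mem_sup.mp hz
    obtain ⟨c, rfl⟩ := Submodule.mem_span_singleton.mp hw
    exact ⟨y, hy, c, hyw.symm⟩
  -- splitting along φ
  have hsplit : ∀ z ∈ F, z - (φ z / φ x) • x ∈ F ⊓ LinearMap.ker φ := by
    intro z hz
    refine Submodule.mem_inf.mpr ⟨sub_mem hz (Submodule.smul_mem _ _ hxF), ?_⟩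
    rw [LinearMap.mem_ker, map_sub, map_smul, smul_eq_mul, div_mul_cancel₀ _ hφx, sub_self]
  have hFdec : (F ⊓ LinearMap.ker φ) ⊔ span ℂ {x} = F := by
    apply le_antisymm
    · exact sup_le inf_le_left (Submodule.span_le.mpr (Set.singleton_subset_iff.mpr hxF))
    · intro z hz
      have h1' := hsplit z hz
      have h2' : z = (z - (φ z / φ x) • x) + (φ z / φ x) • x := by abel
      rw [h2']
      exact Submodule.add_mem _ (Submodule.mem_sup_left h1')
        (Submodule.mem_sup_right (Submodule.smul_mem _ _ (Submodule.mem_span_singleton_self x)))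
  refine ⟨F', ?_, ?_, ?_, ?_⟩
  · -- CommensurableWith
    constructor
    · -- WeaklyCompat E F'
      obtain ⟨S, hS1, hS2⟩ := hFwc
      have hφVs : φ ∈ Submodule.span ℂ (Set.range fun i => E.coord i) := by
        rw [← hVs]; exact hΦ hφΦ
      obtain ⟨c, hc⟩ := Finsupp.mem_span_range_iff_exists_finsupp.mp hφVs
      have hφE : ∀ i : ι, i ∉ c.support → φ (E i) = 0 := by
        intro i hi
        have hsum : φ (E i) = ∑ j ∈ c.support, c j * (E.coord j) (E i) := by
          rw [← hc]
          simp [Finsupp.sum, LinearMap.sum_apply, LinearMap.smul_apply, smul_eq_mul]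
        rw [hsum]
        apply Finset.sum_eq_zero
        intro j hj
        have hji : j ≠ i := fun h => hi (h ▸ hj)
        have hcoord : (E.coord j) (E i) = 0 := by
          rw [Module.Basis.coord_apply, Module.Basis.repr_self]
          exact Finsupp.single_eq_of_ne hji
        rw [hcoord, mul_zero]
      set S' : Set ι := S \ ↑c.support with hS'def
      set W : Submodule ℂ V := span ℂ (⇑E '' S') with hWdef
      have hWle : W ≤ F ⊓ LinearMap.ker φ := by
        rw [hWdef]
        apply Submodule.span_le.mpr
        rintro _ ⟨i, ⟨hiS, hiT⟩, rfl⟩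
        exact Submodule.mem_inf.mpr
          ⟨hS1 (Submodule.subset_span ⟨i, hiS, rfl⟩), LinearMap.mem_ker.mpr (hφE i hiT)⟩
      have hW0 : span ℂ (⇑E '' S) = W ⊔ span ℂ (⇑E '' (S ∩ ↑c.support)) := by
        rw [hWdef, ← Submodule.span_union, ← Set.image_union, Set.diff_union_inter]
      obtain ⟨G0, hG0fd, hG0⟩ := exists_sup_of_quotFD hS1 hS2
      have hfinmid : FiniteDimensional ℂ (span ℂ (⇑E '' (S ∩ ↑c.support))) :=
        FiniteDimensional.span_of_finite ℂ ((c.support.finite_toSet.inter_of_right S).image _)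
      set B : Submodule ℂ V := F ⊔ span ℂ {v} with hBdef
      set Gbig : Submodule ℂ V := (span ℂ (⇑E '' (S ∩ ↑c.support)) ⊔ G0) ⊔ span ℂ {v}
        with hGbigdef
      have hGbigfd : FiniteDimensional ℂ Gbig := by
        haveI := hG0fd
        haveI := hfinmid
        haveI : FiniteDimensional ℂ (span ℂ ({v} : Set V)) :=
          FiniteDimensional.span_of_finite ℂ (Set.finite_singleton v)
        infer_instance
      have hB : W ⊔ Gbig = B := by
        rw [hGbigdef, hBdef, ← sup_assoc, ← sup_assoc, ← hW0, hG0]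
      have hBfd : FiniteDimensional ℂ (↥B ⧸ Submodule.comap B.subtype W) :=
        quotFD_of_sup hGbigfd hB
      have hF'B : F' ≤ B := by
        rw [hF'def, hBdef]
        exact sup_le (le_trans inf_le_left le_sup_left) le_sup_right
      refine ⟨S', le_trans hWle le_sup_left, quotFD_mono hF'B hBfd⟩
    · -- the finite-dimensional U
      refine ⟨span ℂ ({x, v} : Set V), ?_, ?_, ?_⟩
      · exact FiniteDimensional.span_of_finite ℂ (Set.toFinite _)
      · -- F ⊔ U = F' ⊔ U
        have hU1 : F ⊔ span ℂ ({x, v} : Set V) = F ⊔ span ℂ {v} := by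
          apply le_antisymm
          · refine sup_le le_sup_left (Submodule.span_le.mpr ?_)
            rintro z hz
            rcases hz with rfl | hz
            · exact Submodule.mem_sup_left hxF
            · exact Submodule.mem_sup_right (Submodule.subset_span hz)
          · refine sup_le le_sup_left (le_sup_of_le_right (Submodule.span_mono ?_))
            intro z hz
            exact Set.mem_insert_iff.mpr (Or.inr hz)
        have hU2 : F' ⊔ span ℂ ({x, v} : Set V) = F ⊔ span ℂ {v} := by
          apply le_antisymm
          · refine sup_le (sup_le (le_sup_of_le_left inf_le_left) le_sup_right)
              (Submodule.span_le.mpr ?_)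
            rintro z hz
            rcases hz with rfl | hz
            · exact Submodule.mem_sup_left hxF
            · exact Submodule.mem_sup_right (Submodule.subset_span hz)
          · refine sup_le ?_ ?_
            · rw [← hFdec]
              refine sup_le (le_sup_of_le_left le_sup_left)
                (le_sup_of_le_right (Submodule.span_mono ?_))
              intro z hz
              exact Set.mem_insert_iff.mpr (Or.inl hz)
            · exact le_sup_of_le_left le_sup_right
        rw [hU1, hU2]
      · -- finrank equality
        have hFU : F ⊓ span ℂ ({x, v} : Set V) = span ℂ ({x} : Set V) := by
          apply le_antisymm
          · rintro z ⟨hzF, hzU⟩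
            obtain ⟨a, b, hab⟩ := Submodule.mem_span_pair.mp hzU
            have hbv : b • v ∈ F := by
              have : b • v = z - a • x := by rw [← hab]; abel
              rw [this]
              exact sub_mem hzF (Submodule.smul_mem _ _ hxF)
            have hb0 : b = 0 := hcvF b hbv
            rw [hb0, zero_smul, add_zero] at hab
            rw [← hab]
            exact Submodule.smul_mem _ _ (Submodule.mem_span_singleton_self x)
          · apply Submodule.span_le.mpr
            rintro z hz
            rcases hz with rfl
            exact ⟨hxF, Submodule.subset_span (Set.mem_insert _ _)⟩
        have hF'U : F' ⊓ span ℂ ({x, v} : Set V) = span ℂ ({v} : Set V) := by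
          apply le_antisymm
          · rintro z ⟨hzF', hzU⟩
            obtain ⟨a, b, hab⟩ := Submodule.mem_span_pair.mp hzU
            obtain ⟨y, hy, d, hzd⟩ := hmemF' z hzF'
            have h0 : a • x + b • v = y + d • v := by rw [hab, hzd]
            have heq : (d - b) • v = a • x - y := by
              rw [sub_smul, sub_eq_sub_iff_add_eq_add, h0]
              abel
            have hd0 : d - b = 0 := by
              apply hcvF
              rw [heq]
              exact sub_mem (Submodule.smul_mem _ _ hxF) (Submodule.mem_inf.mp hy).1
            have hay : a • x = y := by
              rw [hd0, zero_smul] at heq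
              exact sub_eq_zero.mp heq.symm
            have ha0 : a = 0 := by
              have hφy := LinearMap.mem_ker.mp (Submodule.mem_inf.mp hy).2
              rw [← hay, map_smul, smul_eq_mul] at hφy
              exact (mul_eq_zero.mp hφy).resolve_right hφx
            rw [ha0, zero_smul, zero_add] at hab
            rw [← hab]
            exact Submodule.smul_mem _ _ (Submodule.mem_span_singleton_self v)
          · apply Submodule.span_le.mpr
            rintro z hz
            rcases hz with rfl
            exact ⟨Submodule.mem_sup_right (Submodule.subset_span rfl),
              Submodule.subset_span (Set.mem_insert_iff.mpr (Or.inr rfl))⟩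
        rw [hFU, hF'U, finrank_span_singleton hx0, finrank_span_singleton hv0]
  · -- F' ⊓ L = F ⊓ L
    apply le_antisymm
    · rintro z ⟨hzF', hzL⟩
      obtain ⟨y, hy, cz, hzc⟩ := hmemF' z hzF'
      have hcz0 : cz = 0 := by
        apply hcv
        have : cz • v = z - y := by rw [hzc]; abel
        rw [this]
        exact sub_mem (Submodule.mem_sup_right (hLM.le hzL)) (Submodule.mem_sup_left (Submodule.mem_inf.mp hy).1)
      rw [hcz0, zero_smul, add_zero] at hzc
      exact ⟨hzc ▸ (Submodule.mem_inf.mp hy).1, hzL⟩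
    · rintro z ⟨hzF, hzL⟩
      exact ⟨Submodule.mem_sup_left (Submodule.mem_inf.mpr ⟨hzF, hLker hzL⟩), hzL⟩
  · -- F' ⊓ M ≤ F ⊓ M
    rintro z ⟨hzF', hzM⟩
    obtain ⟨y, hy, cz, hzc⟩ := hmemF' z hzF'
    have hcz0 : cz = 0 := by
      apply hcv
      have : cz • v = z - y := by rw [hzc]; abel
      rw [this]
      exact sub_mem (Submodule.mem_sup_right hzM) (Submodule.mem_sup_left (Submodule.mem_inf.mp hy).1)
    rw [hcz0, zero_smul, add_zero] at hzc
    exact ⟨hzc ▸ (Submodule.mem_inf.mp hy).1, hzM⟩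
  · -- the hyperplane witness
    refine ⟨x, hxFM, ?_, ?_⟩
    · rintro ⟨hxF', _⟩
      obtain ⟨y, hy, cz, hzc⟩ := hmemF' x hxF'
      have hcz0 : cz = 0 := by
        apply hcvF
        have : cz • v = x - y := by rw [hzc]; abel
        rw [this]
        exact sub_mem hxF (Submodule.mem_inf.mp hy).1
      rw [hcz0, zero_smul, add_zero] at hzc
      exact hφx (hzc ▸ LinearMap.mem_ker.mp (Submodule.mem_inf.mp hy).2)
    · apply le_antisymm
      · refine sup_le ?_ (Submodule.span_le.mpr (Set.singleton_subset_iff.mpr hxFM))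
        rintro z ⟨hzF', hzM⟩
        obtain ⟨y, hy, cz, hzc⟩ := hmemF' z hzF'
        have hcz0 : cz = 0 := by
          apply hcv
          have : cz • v = z - y := by rw [hzc]; abel
          rw [this]
          exact sub_mem (Submodule.mem_sup_right hzM) (Submodule.mem_sup_left (Submodule.mem_inf.mp hy).1)
        rw [hcz0, zero_smul, add_zero] at hzc
        exact ⟨hzc ▸ (Submodule.mem_inf.mp hy).1, hzM⟩
      · rintro z ⟨hzF, hzM⟩
        have h1' : z - (φ z / φ x) • x ∈ F' ⊓ M := by
          refine Submodule.mem_inf.mpr ⟨Submodule.mem_sup_left (hsplit z hzF), ?_⟩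
          exact sub_mem hzM (Submodule.smul_mem _ _ hxM)
        have h2' : z = (z - (φ z / φ x) • x) + (φ z / φ x) • x := by abel
        rw [h2']
        exact Submodule.add_mem _ (Submodule.mem_sup_left h1')
          (Submodule.mem_sup_right (Submodule.smul_mem _ _ (Submodule.mem_span_singleton_self x)))
end

section
/- Let V be a countable-dimensional complex vector space with basis E, and let F be a weakly E-compatible subspace and M a subspace with M ⊄ F and F ⊄ M. Then there exists a subspace F' ⊂ V, E-commensurable with F, such that F ∩ M is a hyperplane in F' ∩ M, and F'/(F' ∩ M) embeds as a hyperplane in F/(F ∩ M). -/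
theorem auxL {V : Type*} [AddCommGroup V] [Module ℂ V] (A C W : Submodule ℂ V)
    (hAC : A ≤ C) (hCW : C ≤ A ⊔ W) (hW : FiniteDimensional ℂ W) :
    FiniteDimensional ℂ (↥C ⧸ Submodule.comap C.subtype A) := by
  have hC : A ⊔ (W ⊓ C) = C := by
    rw [(sup_inf_assoc_of_le W hAC).symm, inf_eq_right.mpr hCW]
  have hle : W ⊓ C ≤ C := inf_le_right
  let g : ↥(W ⊓ C) →ₗ[ℂ] ↥C ⧸ Submodule.comap C.subtype A :=
    (Submodule.comap C.subtype A).mkQ.comp (Submodule.inclusion hle)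
  have hsurj : Function.Surjective g := by
    intro q
    obtain ⟨z, rfl⟩ := Submodule.mkQ_surjective _ q
    have hz : (z : V) ∈ A ⊔ (W ⊓ C) := by rw [hC]; exact z.2
    obtain ⟨a, ha, w, hw, hsum⟩ := Submodule.mem_sup.mp hz
    refine ⟨⟨w, hw⟩, ?_⟩
    show (Submodule.comap C.subtype A).mkQ ⟨w, hle hw⟩ = Submodule.mkQ _ z
    rw [Submodule.mkQ_apply, Submodule.mkQ_apply, Submodule.Quotient.eq]
    show ((⟨w, hle hw⟩ - z : ↥C) : V) ∈ A
    have : ((⟨w, hle hw⟩ - z : ↥C) : V) = -a := by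
      simp [← hsum]
    rw [this]; exact A.neg_mem ha
  have hfd : FiniteDimensional ℂ ↥(W ⊓ C) := Submodule.finiteDimensional_of_le inf_le_left
  exact Module.Finite.of_surjective g hsurj

theorem auxR {V : Type*} [AddCommGroup V] [Module ℂ V] (A C : Submodule ℂ V)
    (hAC : A ≤ C) (h : FiniteDimensional ℂ (↥C ⧸ Submodule.comap C.subtype A)) :
    ∃ W : Submodule ℂ V, FiniteDimensional ℂ W ∧ A ⊔ W = C := by
  obtain ⟨W', hcompl⟩ := Submodule.exists_isCompl (Submodule.comap C.subtype A)
  refine ⟨W'.map C.subtype, ?_, ?_⟩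
  · have : FiniteDimensional ℂ W' :=
      Module.Finite.equiv (Submodule.quotientEquivOfIsCompl _ _ hcompl)
    exact Module.Finite.map _ _
  · have h1 : (Submodule.comap C.subtype A).map C.subtype ⊔ W'.map C.subtype = C := by
      rw [← Submodule.map_sup, hcompl.sup_eq_top, Submodule.map_subtype_top]
    rw [Submodule.map_comap_subtype, inf_eq_right.mpr hAC] at h1
    exact h1

set_option maxHeartbeats 1000000 in
/-- If `F` is weakly `E`-compatible, `M = ⋂_{φ∈Ψ} ker φ` (`Ψ ⊂ V_*`),
`M ⊄ F` and `F ⊄ M`, then there is `F'`, `E`-commensurable with `F`, such that `F ∩ M` is a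
hyperplane in `F' ∩ M` and `F'/(F' ∩ M)` embeds as a hyperplane in `F/(F ∩ M)`. -/
theorem stmt10 {ι V : Type*} [Countable ι] [AddCommGroup V] [Module ℂ V]
    (E : Module.Basis ι ℂ V) (Vs : Submodule ℂ (Module.Dual ℂ V))
    (hVs : Vs = Submodule.span ℂ (Set.range fun i => E.coord i))
    (Ψ : Set (Module.Dual ℂ V)) (hΨ : Ψ ⊆ (Vs : Set (Module.Dual ℂ V)))
    (M : Submodule ℂ V) (hM : M = ⨅ φ ∈ Ψ, LinearMap.ker φ)
    (F : Submodule ℂ V) (hFwc : WeaklyCompat E F)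
    (h1 : ¬ M ≤ F) (h2 : ¬ F ≤ M) :
    ∃ F' : Submodule ℂ V, CommensurableWith E F F' ∧
      (F ⊓ M ≤ F' ⊓ M ∧ ∃ w ∈ F' ⊓ M, w ∉ F ⊓ M ∧ (F ⊓ M) ⊔ Submodule.span ℂ {w} = F' ⊓ M) ∧
      ∃ f : (↥F' ⧸ Submodule.comap F'.subtype (F' ⊓ M)) →ₗ[ℂ]
            (↥F ⧸ Submodule.comap F.subtype (F ⊓ M)),
        Function.Injective f ∧
        ∃ x, x ∉ LinearMap.range f ∧ LinearMap.range f ⊔ Submodule.span ℂ {x} = ⊤ := by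
  classical
  -- pick φ ∈ Ψ not vanishing on F, and u ∈ F with φ u = 1
  obtain ⟨z0, hz0F, hz0M⟩ := SetLike.not_le_iff_exists.mp h2
  have hz0M' : ¬ ∀ ψ ∈ Ψ, z0 ∈ LinearMap.ker ψ := by
    intro h
    exact hz0M (by rw [hM]; simp only [Submodule.mem_iInf]; exact h)
  push_neg at hz0M'
  obtain ⟨φ, hφΨ, hφz0⟩ := hz0M'
  have hφz0' : φ z0 ≠ 0 := fun h => hφz0 (LinearMap.mem_ker.mpr h)
  set u : V := (φ z0)⁻¹ • z0 with hu_def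
  have huF : u ∈ F := F.smul_mem _ hz0F
  have hφu : φ u = 1 := by
    rw [hu_def, map_smul, smul_eq_mul, inv_mul_cancel₀ hφz0']
  have hMker : M ≤ LinearMap.ker φ := by
    rw [hM]
    intro x hx
    simp only [Submodule.mem_iInf] at hx
    exact hx φ hφΨ
  -- pick v ∈ M \ F
  obtain ⟨v, hvM, hvF⟩ := SetLike.not_le_iff_exists.mp h1
  have hvker : v ∈ LinearMap.ker φ := hMker hvM
  -- define F'
  set F' : Submodule ℂ V := (F ⊓ LinearMap.ker φ) ⊔ Submodule.span ℂ {v} with hF'def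
  have hvF' : v ∈ F' := Submodule.mem_sup_right (Submodule.mem_span_singleton_self v)
  have hFk_le : F ⊓ LinearMap.ker φ ≤ F' := le_sup_left
  have hspanv_ker : Submodule.span ℂ {v} ≤ LinearMap.ker φ :=
    Submodule.span_le.mpr (by simpa using hvker)
  have hspanv_M : Submodule.span ℂ {v} ≤ M :=
    Submodule.span_le.mpr (by simpa using hvM)
  have hF'ker : F' ≤ LinearMap.ker φ := sup_le inf_le_right hspanv_ker
  -- F = (F ⊓ ker φ) ⊔ span{u}
  have hA : (F ⊓ LinearMap.ker φ) ⊔ Submodule.span ℂ {u} = F := by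
    apply le_antisymm
    · exact sup_le inf_le_left (Submodule.span_le.mpr (by simpa using huF))
    · intro x hx
      have hy : x - (φ x) • u ∈ F ⊓ LinearMap.ker φ := by
        refine ⟨F.sub_mem hx (F.smul_mem _ huF), ?_⟩
        simp [LinearMap.mem_ker, hφu]
      have : x = (x - (φ x) • u) + (φ x) • u := by abel
      rw [this]
      exact Submodule.add_mem_sup hy
        (Submodule.smul_mem _ _ (Submodule.mem_span_singleton_self u))
  -- F' ⊓ M = (F ⊓ M) ⊔ span{v}
  have hFM'ge1 : F ⊓ M ≤ F' ⊓ M :=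
    le_inf (le_trans (le_inf inf_le_left (le_trans inf_le_right hMker)) hFk_le) inf_le_right
  have hFM' : (F ⊓ M) ⊔ Submodule.span ℂ {v} = F' ⊓ M := by
    apply le_antisymm
    · exact sup_le hFM'ge1
        (le_inf (le_trans (le_sup_right) le_rfl) hspanv_M)
    · rintro x ⟨hxF', hxM⟩
      obtain ⟨y, hy, s, hs, hsum⟩ := Submodule.mem_sup.mp hxF'
      obtain ⟨c, rfl⟩ := Submodule.mem_span_singleton.mp hs
      have hyM : y ∈ M := by
        have : y = x - c • v := by rw [← hsum]; abel
        rw [this]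
        exact M.sub_mem hxM (M.smul_mem _ hvM)
      refine Submodule.mem_sup.mpr ⟨y, ⟨hy.1, hyM⟩, c • v,
        Submodule.smul_mem _ _ (Submodule.mem_span_singleton_self v), hsum⟩
  have hune : u ≠ 0 := by
    intro h; rw [h, map_zero] at hφu; exact one_ne_zero hφu.symm
  have hvne : v ≠ 0 := fun h => hvF (h ▸ F.zero_mem)
  -- Commensurability
  have hcomm : CommensurableWith E F F' := by
    constructor
    · -- WeaklyCompat
      obtain ⟨S, hS1, hS2⟩ := hFwc
      have hφVs : φ ∈ Submodule.span ℂ (Set.range fun i => E.coord i) := by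
        rw [← hVs]; exact hΨ hφΨ
      obtain ⟨c, hc⟩ := (Finsupp.mem_span_range_iff_exists_finsupp).mp hφVs
      have hT : ∀ i : ι, i ∉ c.support → φ (E i) = 0 := by
        intro i hi
        have : φ (E i) = ∑ j ∈ c.support, c j * (E.coord j) (E i) := by
          rw [← hc]
          simp [Finsupp.sum, LinearMap.sum_apply]
        rw [this]
        apply Finset.sum_eq_zero
        intro j hj
        have hji : j ≠ i := fun h => hi (h ▸ hj)
        rw [Module.Basis.coord_apply, Module.Basis.repr_self, Finsupp.single_apply,
          if_neg (fun h => hji h.symm), mul_zero]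
      set N0 : Submodule ℂ V := Submodule.span ℂ (⇑E '' (S \ ↑c.support)) with hN0def
      have hN0F : N0 ≤ F :=
        le_trans (Submodule.span_mono (Set.image_mono Set.diff_subset)) hS1
      have hN0k : N0 ≤ LinearMap.ker φ := by
        rw [hN0def, Submodule.span_le]
        rintro _ ⟨i, hi, rfl⟩
        exact LinearMap.mem_ker.mpr (hT i hi.2)
      have hN0F' : N0 ≤ F' := le_trans (le_inf hN0F hN0k) hFk_le
      obtain ⟨W0, hW0fd, hW0⟩ := auxR _ _ hS1 hS2
      set Wfin : Submodule ℂ V := Submodule.span ℂ (⇑E '' (S ∩ ↑c.support)) with hWfindef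
      have hWfinfd : FiniteDimensional ℂ Wfin := by
        apply FiniteDimensional.span_of_finite
        exact Set.Finite.image _ (Set.Finite.inter_of_right c.support.finite_toSet S)
      set W : Submodule ℂ V := (W0 ⊔ Wfin) ⊔ Submodule.span ℂ {v} with hWdef
      have hWfd : FiniteDimensional ℂ W := by
        have h1 : FiniteDimensional ℂ (W0 ⊔ Wfin : Submodule ℂ V) :=
          Submodule.finiteDimensional_sup W0 Wfin
        exact Submodule.finiteDimensional_sup _ _
      have hspanS : Submodule.span ℂ (⇑E '' S) ≤ N0 ⊔ Wfin := by
        rw [hN0def, hWfindef, ← Submodule.span_union, ← Set.image_union,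
          Set.diff_union_inter]
      have hW0W : W0 ≤ W := le_trans le_sup_left le_sup_left
      have hWfinW : Wfin ≤ W := le_trans le_sup_right le_sup_left
      have hvW : Submodule.span ℂ {v} ≤ W := le_sup_right
      have hFle : F ≤ N0 ⊔ W := by
        rw [← hW0]
        refine sup_le (le_trans hspanS (sup_le le_sup_left ?_)) ?_
        · exact le_trans hWfinW le_sup_right
        · exact le_trans hW0W le_sup_right
      have hF'le : F' ≤ N0 ⊔ W := by
        rw [hF'def]
        exact sup_le (le_trans inf_le_left hFle) (le_trans hvW le_sup_right)
      exact ⟨S \ ↑c.support, hN0F', auxL N0 F' W hN0F' hF'le hWfd⟩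
    · -- finite-dimensional U
      set U : Submodule ℂ V := Submodule.span ℂ ({u, v} : Set V) with hUdef
      have hUu : Submodule.span ℂ {u} ≤ U := Submodule.span_mono (by simp)
      have hUv : Submodule.span ℂ {v} ≤ U :=
        Submodule.span_mono (by simp [Set.singleton_subset_iff])
      refine ⟨U, FiniteDimensional.span_of_finite _ (Set.toFinite _), ?_, ?_⟩
      · -- F ⊔ U = F' ⊔ U
        apply le_antisymm
        · apply sup_le _ le_sup_right
          rw [← hA]
          apply sup_le (le_trans hFk_le le_sup_left)
          exact le_trans hUu le_sup_right
        · apply sup_le _ le_sup_right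
          rw [hF'def]
          apply sup_le (le_trans inf_le_left le_sup_left)
          exact le_trans hUv le_sup_right
      · -- finranks agree
        have hFU : F ⊓ U = Submodule.span ℂ {u} := by
          apply le_antisymm
          · rintro x ⟨hxF, hxU⟩
            obtain ⟨a, b, hab⟩ := Submodule.mem_span_pair.mp hxU
            have hbv : b • v = x - a • u := by rw [← hab]; abel
            by_cases hb : b = 0
            · rw [hb, zero_smul] at hab
              rw [← hab]
              simpa using Submodule.smul_mem _ a (Submodule.mem_span_singleton_self u)
            · exfalso
              apply hvF
              have : b • v ∈ F := by
                rw [hbv]; exact F.sub_mem hxF (F.smul_mem _ huF)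
              have := F.smul_mem b⁻¹ this
              rwa [smul_smul, inv_mul_cancel₀ hb, one_smul] at this
          · exact le_inf (Submodule.span_le.mpr (by simpa using huF)) hUu
        have hF'U : F' ⊓ U = Submodule.span ℂ {v} := by
          apply le_antisymm
          · rintro x ⟨hxF', hxU⟩
            obtain ⟨a, b, hab⟩ := Submodule.mem_span_pair.mp hxU
            have hφx : φ x = 0 := hF'ker hxF'
            have ha : a = 0 := by
              have : φ x = a * φ u + b * φ v := by
                rw [← hab]; simp
              rw [hφx, hφu, LinearMap.mem_ker.mp hvker] at this
              simpa using this.symm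
            rw [ha, zero_smul, zero_add] at hab
            rw [← hab]
            exact Submodule.smul_mem _ b (Submodule.mem_span_singleton_self v)
          · exact le_inf (le_trans le_rfl (le_trans le_sup_right le_rfl)) hUv
        rw [hFU, hF'U, finrank_span_singleton hune, finrank_span_singleton hvne]
  refine ⟨F', hcomm, ⟨hFM'ge1, v, (hFM' ▸ Submodule.mem_sup_right
    (Submodule.mem_span_singleton_self v)), fun h => hvF h.1, hFM'⟩, ?_⟩
  -- quotient embedding part
  set K : Submodule ℂ ↥F := Submodule.comap F.subtype (F ⊓ M) with hKdef
  set K' : Submodule ℂ ↥F' := Submodule.comap F'.subtype (F' ⊓ M) with hK'def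
  set qF : ↥F →ₗ[ℂ] V ⧸ M := M.mkQ ∘ₗ F.subtype with hqFdef
  set qF' : ↥F' →ₗ[ℂ] V ⧸ M := M.mkQ ∘ₗ F'.subtype with hqF'def
  have hK : K = LinearMap.ker qF := by
    ext x
    simp [hKdef, hqFdef, LinearMap.mem_ker, Submodule.Quotient.mk_eq_zero, x.2]
  have hK' : K' = LinearMap.ker qF' := by
    ext x
    simp [hK'def, hqF'def, LinearMap.mem_ker, Submodule.Quotient.mk_eq_zero, x.2]
  have hrange : LinearMap.range qF' ≤ LinearMap.range qF := by
    rintro y ⟨z, rfl⟩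
    have hz2 : (z : V) ∈ F ⊓ LinearMap.ker φ ⊔ Submodule.span ℂ {v} := by
      rw [← hF'def]; exact z.2
    obtain ⟨y', hy', s, hs, hsum⟩ := Submodule.mem_sup.mp hz2
    refine ⟨⟨y', hy'.1⟩, ?_⟩
    show M.mkQ y' = M.mkQ (z : V)
    rw [Submodule.mkQ_apply, Submodule.mkQ_apply, Submodule.Quotient.eq]
    have : y' - (z : V) = -s := by rw [← hsum]; abel
    rw [this]
    exact M.neg_mem (hspanv_M hs)
  let e' : (↥F' ⧸ K') ≃ₗ[ℂ] (↥F' ⧸ LinearMap.ker qF') := Submodule.quotEquivOfEq _ _ hK'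
  let r' : (↥F' ⧸ LinearMap.ker qF') ≃ₗ[ℂ] LinearMap.range qF' := qF'.quotKerEquivRange
  let r : (↥F ⧸ LinearMap.ker qF) ≃ₗ[ℂ] LinearMap.range qF := qF.quotKerEquivRange
  let e : (↥F ⧸ LinearMap.ker qF) ≃ₗ[ℂ] (↥F ⧸ K) := Submodule.quotEquivOfEq _ _ hK.symm
  set f : (↥F' ⧸ K') →ₗ[ℂ] (↥F ⧸ K) :=
    e.toLinearMap ∘ₗ r.symm.toLinearMap ∘ₗ (Submodule.inclusion hrange) ∘ₗ
      r'.toLinearMap ∘ₗ e'.toLinearMap with hfdef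
  have hfinj : Function.Injective f := by
    rw [hfdef]
    simp only [LinearMap.coe_comp, LinearEquiv.coe_coe]
    exact e.injective.comp (r.symm.injective.comp
      ((Submodule.inclusion_injective hrange).comp (r'.injective.comp e'.injective)))
  have hmem : ∀ z : ↥F, ((Submodule.Quotient.mk z : ↥F ⧸ K) ∈ LinearMap.range f ↔
      M.mkQ (z : V) ∈ LinearMap.range qF') := by
    intro z
    constructor
    · rintro ⟨p, hp⟩
      set q : LinearMap.range qF := Submodule.inclusion hrange (r' (e' p)) with hqdef
      have hfp : f p = e (r.symm q) := rfl
      rw [hfp] at hp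
      have h1 : r.symm q = e.symm (Submodule.Quotient.mk z) := by
        rw [← hp]; exact (e.symm_apply_apply _).symm
      have h2 : e.symm (Submodule.Quotient.mk z) = (Submodule.Quotient.mk z :
          ↥F ⧸ LinearMap.ker qF) := by
        rw [LinearEquiv.symm_apply_eq]
        rfl
      have h3 : q = r (Submodule.Quotient.mk z) :=
        (r.symm_apply_eq).mp (h1.trans h2)
      have h4 : (q : V ⧸ M) = qF z := by
        rw [h3]; exact qF.quotKerEquivRange_apply_mk z
      have h5 : (q : V ⧸ M) ∈ LinearMap.range qF' := (r' (e' p)).2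
      rw [h4] at h5
      exact h5
    · intro h
      refine ⟨e'.symm (r'.symm ⟨M.mkQ (z : V), h⟩), ?_⟩
      have h0 : f (e'.symm (r'.symm ⟨M.mkQ (z : V), h⟩)) =
          e (r.symm (Submodule.inclusion hrange (r' (e' (e'.symm
            (r'.symm ⟨M.mkQ (z : V), h⟩)))))) := rfl
      rw [h0, e'.apply_symm_apply, r'.apply_symm_apply]
      have h3 : Submodule.inclusion hrange ⟨M.mkQ (z : V), h⟩ =
          r (Submodule.Quotient.mk z) := by
        apply Subtype.ext
        show M.mkQ (z : V) = _
        rw [qF.quotKerEquivRange_apply_mk z]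
        rfl
      rw [h3, r.symm_apply_apply]
      simp [e, Submodule.quotEquivOfEq_mk]
  set x : ↥F ⧸ K := Submodule.Quotient.mk ⟨u, huF⟩ with hxdef
  refine ⟨f, hfinj, x, ?_, ?_⟩
  · rw [hxdef, hmem]
    rintro ⟨p, hp⟩
    have hpM : (p : V) - u ∈ M := by
      rw [← Submodule.Quotient.eq]
      exact hp
    have hφu0 : φ u = 0 := by
      have ha : φ (p : V) = 0 := hF'ker p.2
      have hb : φ ((p : V) - u) = 0 := hMker hpM
      rw [map_sub, ha, zero_sub, neg_eq_zero] at hb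
      exact hb
    rw [hφu] at hφu0
    exact one_ne_zero hφu0
  · rw [eq_top_iff]
    rintro q -
    obtain ⟨z, rfl⟩ := Submodule.Quotient.mk_surjective _ q
    set a : ℂ := φ (z : V) with hadef
    have hyFk : (z : V) - a • u ∈ F ⊓ LinearMap.ker φ := by
      refine ⟨F.sub_mem z.2 (F.smul_mem _ huF), ?_⟩
      simp [LinearMap.mem_ker, hφu, hadef]
    set y : V := (z : V) - a • u with hydef
    have hyF : y ∈ F := hyFk.1
    have hzdecomp : z = (⟨y, hyF⟩ : ↥F) + a • ⟨u, huF⟩ := by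
      apply Subtype.ext
      show (z : V) = y + a • u
      rw [hydef]; abel
    have hmk : (Submodule.Quotient.mk z : ↥F ⧸ K) =
        Submodule.Quotient.mk ⟨y, hyF⟩ + a • x := by
      rw [hxdef]
      conv_lhs => rw [hzdecomp]
      rw [← Submodule.Quotient.mk_smul, ← Submodule.Quotient.mk_add]
    rw [hmk]
    apply Submodule.add_mem
    · apply Submodule.mem_sup_left
      rw [hmem]
      exact ⟨⟨y, hFk_le hyFk⟩, rfl⟩
    · exact Submodule.mem_sup_right
        (Submodule.smul_mem _ _ (Submodule.mem_span_singleton_self x))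
end

section
/- Suppose V is a countable-dimensional complex vector space (type A setting), F₁ and F₂ are subspaces such that F₁ ∩ F₂ has infinite codimension in both F₁ and F₂, and F₂ is weakly E-compatible. Then there exists a sequence {F^(n)}_{n≥0} of subspaces, each E-commensurable with F₂, with F^(0) = F₂ and F₁ ∩ F^(0) ⊊ F₁ ∩ F^(1) ⊊ ⋯ ⊊ F₁ ∩ F^(n) ⊊ ⋯ a strictly increasing chain. -/
open Submodule

section Aux

variable {V : Type*} [AddCommGroup V] [Module ℂ V]

/-- Core: if the image of `N` in `V⧸Q` is finite dimensional and `N ⊓ Q ≤ P ≤ N`,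
then `P` has finite codimension in `N`. -/
lemma aux_fd_core (N P Q : Submodule ℂ V) (hPN : P ≤ N) (hQ : N ⊓ Q ≤ P)
    (hfd : FiniteDimensional ℂ (Submodule.map Q.mkQ N)) :
    FiniteDimensional ℂ (↥N ⧸ Submodule.comap N.subtype P) := by
  classical
  set L : ↥N →ₗ[ℂ] V ⧸ Q := Q.mkQ.comp N.subtype with hL
  have hker : LinearMap.ker L = Submodule.comap N.subtype Q := by
    ext x; simp [hL, LinearMap.mem_ker, Submodule.Quotient.mk_eq_zero]
  have hrange : LinearMap.range L = Submodule.map Q.mkQ N := by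
    rw [hL, LinearMap.range_comp, Submodule.range_subtype]
  have h1 : FiniteDimensional ℂ (↥N ⧸ LinearMap.ker L) := by
    haveI : FiniteDimensional ℂ (LinearMap.range L) := by rw [hrange]; exact hfd
    exact Module.Finite.equiv L.quotKerEquivRange.symm
  have hle : LinearMap.ker L ≤ Submodule.comap N.subtype P := by
    rw [hker]
    intro x hx
    exact hQ ⟨x.2, hx⟩
  have hsurj : Function.Surjective
      (Submodule.mapQ (LinearMap.ker L) (Submodule.comap N.subtype P) LinearMap.id
        (by simpa using hle)) := by
    have h2 : Function.Surjective (Submodule.comap N.subtype P).mkQ :=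
      Submodule.mkQ_surjective _
    intro y
    obtain ⟨x, rfl⟩ := h2 y
    exact ⟨Submodule.Quotient.mk x, by simp [Submodule.mapQ_apply]⟩
  exact Module.Finite.of_surjective _ hsurj

lemma aux_fd_of_le_sup (N P Q W : Submodule ℂ V) (hPN : P ≤ N) (hQ : N ⊓ Q ≤ P)
    (hW : FiniteDimensional ℂ W) (hNQ : N ≤ Q ⊔ W) :
    FiniteDimensional ℂ (↥N ⧸ Submodule.comap N.subtype P) := by
  apply aux_fd_core N P Q hPN hQ
  have h1 : Submodule.map Q.mkQ N ≤ Submodule.map Q.mkQ W := by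
    calc Submodule.map Q.mkQ N ≤ Submodule.map Q.mkQ (Q ⊔ W) := Submodule.map_mono hNQ
    _ = Submodule.map Q.mkQ Q ⊔ Submodule.map Q.mkQ W := Submodule.map_sup _ _ _
    _ ≤ Submodule.map Q.mkQ W := by
        simp [Submodule.mkQ_map_self]
  haveI : FiniteDimensional ℂ (Submodule.map Q.mkQ W) := Module.Finite.map W Q.mkQ
  exact Submodule.finiteDimensional_of_le h1

lemma aux_fd_of_quot (N P Q : Submodule ℂ V) (hPN : P ≤ N) (hQ : N ⊓ Q ≤ P)
    (hfd : FiniteDimensional ℂ (V ⧸ Q)) :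
    FiniteDimensional ℂ (↥N ⧸ Submodule.comap N.subtype P) := by
  apply aux_fd_core N P Q hPN hQ
  exact FiniteDimensional.finiteDimensional_submodule _

lemma aux_exists_compl (N P : Submodule ℂ V) (hPN : P ≤ N)
    (hfd : FiniteDimensional ℂ (↥N ⧸ Submodule.comap N.subtype P)) :
    ∃ W : Submodule ℂ V, FiniteDimensional ℂ W ∧ N ≤ P ⊔ W := by
  classical
  set q := Submodule.comap N.subtype P with hq
  obtain ⟨s, hs⟩ := Module.finite_def.mp hfd
  have hsurj := q.mkQ_surjective
  choose g hg using hsurj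
  refine ⟨Submodule.span ℂ (N.subtype '' (g '' (s : Set (↥N ⧸ q)))), ?_, ?_⟩
  · apply FiniteDimensional.span_of_finite
    exact ((s.finite_toSet.image g).image _)
  · intro x hx
    have hx' : q.mkQ ⟨x, hx⟩ ∈ Submodule.span ℂ (q.mkQ '' (g '' (s : Set (↥N ⧸ q)))) := by
      have himg : q.mkQ '' (g '' (s : Set (↥N ⧸ q))) = (s : Set (↥N ⧸ q)) := by
        rw [Set.image_image]
        simp only [hg, Set.image_id']
      rw [himg]
      have : q.mkQ ⟨x, hx⟩ ∈ (⊤ : Submodule ℂ (↥N ⧸ q)) := trivial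
      rw [← hs] at this
      simpa using this
    rw [← Submodule.map_span, Submodule.mem_map] at hx'
    obtain ⟨y, hy, hxy⟩ := hx'
    have hmem : (⟨x, hx⟩ : ↥N) - y ∈ q := by
      rw [← Submodule.Quotient.mk_eq_zero]
      have : q.mkQ (⟨x, hx⟩ - y) = 0 := by
        rw [map_sub, hxy, sub_self]
      simpa using this
    have hP : (x : V) - (y : V) ∈ P := hmem
    have hW : (y : V) ∈ Submodule.span ℂ (N.subtype '' (g '' (s : Set (↥N ⧸ q)))) := by
      rw [← Submodule.map_span]
      exact ⟨y, hy, rfl⟩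
    have := Submodule.add_mem_sup hP hW
    simpa using this

lemma aux_finite_support {ι : Type*} (E : Module.Basis ι ℂ V) (ψ : Module.Dual ℂ V)
    (hψ : ψ ∈ Submodule.span ℂ (Set.range fun i => E.coord i)) :
    ∃ T : Finset ι, ∀ k ∉ T, ψ (E k) = 0 := by
  classical
  induction hψ using Submodule.span_induction with
  | mem x hx =>
      obtain ⟨i, rfl⟩ := hx
      exact ⟨{i}, fun k hk => by
        simp only [Module.Basis.coord_apply, Module.Basis.repr_self]
        simp only [Finset.mem_singleton] at hk
        rw [Finsupp.single_apply, if_neg hk]⟩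
  | zero => exact ⟨∅, fun k _ => rfl⟩
  | add x y _ _ hx hy =>
      obtain ⟨T₁, h₁⟩ := hx
      obtain ⟨T₂, h₂⟩ := hy
      exact ⟨T₁ ∪ T₂, fun k hk => by
        simp only [Finset.mem_union, not_or] at hk
        simp [LinearMap.add_apply, h₁ k hk.1, h₂ k hk.2]⟩
  | smul c x _ hx =>
      obtain ⟨T, h⟩ := hx
      exact ⟨T, fun k hk => by simp [LinearMap.smul_apply, h k hk]⟩

lemma aux_v_rank (F₂ : Submodule ℂ V) (v : ℕ → V)
    (hv : ∀ n, v n ∉ F₂ ⊔ Submodule.span ℂ (v '' Set.Iio n)) :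
    ∀ n, F₂ ⊓ Submodule.span ℂ (v '' Set.Iio n) = ⊥ ∧
      FiniteDimensional ℂ (Submodule.span ℂ (v '' Set.Iio n)) ∧
      Module.finrank ℂ (Submodule.span ℂ (v '' Set.Iio n)) = n := by
  intro n
  induction n with
  | zero =>
      have : v '' Set.Iio 0 = ∅ := by
        have : Set.Iio 0 = (∅ : Set ℕ) := by ext k; simp
        rw [this, Set.image_empty]
      rw [this]
      refine ⟨by rw [Submodule.span_empty, inf_bot_eq], ?_,
        by rw [Submodule.span_empty, finrank_bot]⟩
      rw [Submodule.span_empty]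
      infer_instance
  | succ n ih =>
      obtain ⟨hinf, hfd, hrk⟩ := ih
      haveI := hfd
      have himg : v '' Set.Iio (n + 1) = insert (v n) (v '' Set.Iio n) := by
        rw [show Set.Iio (n + 1) = insert n (Set.Iio n) by
          ext k; simp only [Set.mem_Iio, Set.mem_insert_iff, Set.mem_setOf_eq]; omega]
        rw [Set.image_insert_eq]
      have hspan : Submodule.span ℂ (v '' Set.Iio (n + 1)) =
          (ℂ ∙ v n) ⊔ Submodule.span ℂ (v '' Set.Iio n) := by
        rw [himg, Submodule.span_insert]
      have hvn : v n ∉ Submodule.span ℂ (v '' Set.Iio n) := fun h =>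
        hv n (Submodule.mem_sup_right h)
      have hvne : v n ≠ 0 := by
        intro h
        exact hv n (h ▸ Submodule.zero_mem _)
      have hinter : (ℂ ∙ v n) ⊓ Submodule.span ℂ (v '' Set.Iio n) = ⊥ := by
        rw [Submodule.eq_bot_iff]
        rintro x ⟨hx1, hx2⟩
        obtain ⟨c, rfl⟩ := Submodule.mem_span_singleton.mp hx1
        rcases eq_or_ne c 0 with rfl | hc
        · simp
        · exfalso
          exact hvn (by simpa [hc] using Submodule.smul_mem _ c⁻¹ hx2)
      constructor
      · rw [Submodule.eq_bot_iff]
        rintro x ⟨hxF, hxS⟩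
        rw [hspan] at hxS
        obtain ⟨a, ha, y, hy, rfl⟩ := Submodule.mem_sup.mp hxS
        obtain ⟨c, rfl⟩ := Submodule.mem_span_singleton.mp ha
        rcases eq_or_ne c 0 with rfl | hc
        · have : y ∈ F₂ ⊓ Submodule.span ℂ (v '' Set.Iio n) := ⟨by simpa using hxF, hy⟩
          rw [hinf] at this
          simpa using this
        · exfalso
          apply hv n
          have hx : c • v n + y ∈ F₂ ⊔ Submodule.span ℂ (v '' Set.Iio n) :=
            Submodule.mem_sup_left hxF
          have hy' : y ∈ F₂ ⊔ Submodule.span ℂ (v '' Set.Iio n) :=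
            Submodule.mem_sup_right hy
          have := Submodule.smul_mem _ c⁻¹ (Submodule.sub_mem _ hx hy')
          simpa [hc, smul_smul] using this
      · rw [hspan]
        constructor
        · infer_instance
        · have := Submodule.finrank_sup_add_finrank_inf_eq (ℂ ∙ v n)
            (Submodule.span ℂ (v '' Set.Iio n))
          rw [hinter] at this
          simp only [finrank_bot, add_zero] at this
          rw [this, finrank_span_singleton hvne, hrk, add_comm]

end Aux

theorem stmt11 {ι V : Type*} [Countable ι] [AddCommGroup V] [Module ℂ V]
    (E : Module.Basis ι ℂ V) (Vs : Submodule ℂ (Module.Dual ℂ V))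
    (hVs : Vs = Submodule.span ℂ (Set.range fun i => E.coord i))
    (Φ : Set (Module.Dual ℂ V)) (hΦ : Φ ⊆ (Vs : Set (Module.Dual ℂ V)))
    (F₁ : Submodule ℂ V) (hF₁ : F₁ = ⨅ φ ∈ Φ, LinearMap.ker φ)
    (F₂ : Submodule ℂ V) (hF₂ : WeaklyCompat E F₂)
    (hcodim₁ : ¬ FiniteDimensional ℂ (↥F₁ ⧸ Submodule.comap F₁.subtype (F₁ ⊓ F₂)))
    (hcodim₂ : ¬ FiniteDimensional ℂ (↥F₂ ⧸ Submodule.comap F₂.subtype (F₁ ⊓ F₂))) :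
    ∃ Fs : ℕ → Submodule ℂ V, Fs 0 = F₂ ∧ (∀ n, CommensurableWith E F₂ (Fs n)) ∧
      StrictMono fun n => F₁ ⊓ Fs n := by
  classical
  -- every element of span Φ kills F₁
  have hker : ∀ ψ ∈ Submodule.span ℂ Φ, ∀ x ∈ F₁, ψ x = 0 := by
    intro ψ hψ x hx
    have hx' : ∀ φ ∈ Φ, φ x = 0 := by
      intro φ hφ
      rw [hF₁] at hx
      have := hx
      simp only [Submodule.mem_iInf] at this
      exact this φ hφ
    induction hψ using Submodule.span_induction with
    | mem ψ h => exact hx' ψ h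
    | zero => rfl
    | add a b _ _ ha hb => simp [LinearMap.add_apply, ha, hb]
    | smul c a _ ha => simp [LinearMap.smul_apply, ha]
  -- Step for choosing the v's
  have hstep_v : ∀ W : Submodule ℂ V, FiniteDimensional ℂ W →
      ∃ x, x ∈ F₁ ∧ x ∉ F₂ ⊔ W := by
    intro W hW
    by_contra h
    push_neg at h
    exact hcodim₁ (aux_fd_of_le_sup F₁ (F₁ ⊓ F₂) F₂ W inf_le_left le_rfl hW
      (fun x hx => h x hx))
  have hpick : ∀ l : List V, ∃ x, x ∈ F₁ ∧
      x ∉ F₂ ⊔ Submodule.span ℂ {y | y ∈ l} := by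
    intro l
    exact hstep_v _ (FiniteDimensional.span_of_finite ℂ (l.finite_toSet))
  choose pick hpick₁ hpick₂ using hpick
  let Lst : ℕ → List V := fun n => Nat.rec [] (fun _ l => l ++ [pick l]) n
  let v : ℕ → V := fun n => pick (Lst n)
  have hLst : ∀ n, Lst n = (List.range n).map v := by
    intro n
    induction n with
    | zero => rfl
    | succ n ih =>
        show Lst n ++ [v n] = _
        rw [List.range_succ, List.map_append, ih, List.map_singleton]
  have hLset : ∀ n, {y | y ∈ Lst n} = v '' Set.Iio n := by
    intro n
    ext y
    constructor
    · intro hy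
      simp only [Set.mem_setOf_eq, hLst, List.mem_map, List.mem_range] at hy
      obtain ⟨a, ha, rfl⟩ := hy
      exact ⟨a, ha, rfl⟩
    · rintro ⟨a, ha, rfl⟩
      simp only [Set.mem_setOf_eq, hLst, List.mem_map, List.mem_range]
      exact ⟨a, ha, rfl⟩
  have hv₁ : ∀ n, v n ∈ F₁ := fun n => hpick₁ _
  have hv₂ : ∀ n, v n ∉ F₂ ⊔ Submodule.span ℂ (v '' Set.Iio n) := by
    intro n
    rw [← hLset n]
    exact hpick₂ _
  -- Step for choosing the w's
  have hstep_w : ∀ (n : ℕ) (ψ : Fin n → Module.Dual ℂ V),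
      ∃ x, x ∈ F₂ ∧ (∀ i, ψ i x = 0) ∧ x ∉ F₁ := by
    intro n ψ
    by_contra h
    push_neg at h
    apply hcodim₂
    have hfdq : FiniteDimensional ℂ (V ⧸ (⨅ i, LinearMap.ker (ψ i))) := by
      rw [← LinearMap.ker_pi]
      haveI : FiniteDimensional ℂ (LinearMap.range (LinearMap.pi ψ)) := by infer_instance
      exact Module.Finite.equiv (LinearMap.quotKerEquivRange (LinearMap.pi ψ)).symm
    apply aux_fd_of_quot F₂ (F₁ ⊓ F₂) (⨅ i, LinearMap.ker (ψ i)) inf_le_right _ hfdq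
    intro x hx
    rw [Submodule.mem_inf] at hx
    obtain ⟨hx2, hxK⟩ := hx
    rw [Submodule.mem_iInf] at hxK
    exact ⟨h x hx2 (fun i => hxK i), hx2⟩
  -- biorthogonal families
  have hbio : ∀ n, ∃ (w : Fin n → V) (ψ : Fin n → Module.Dual ℂ V),
      (∀ i, w i ∈ F₂) ∧ (∀ i, ψ i ∈ Submodule.span ℂ Φ) ∧
      (∀ i j, ψ i (w j) = if i = j then 1 else 0) := by
    intro n
    induction n with
    | zero => exact ⟨fun i => i.elim0, fun i => i.elim0,
        fun i => i.elim0, fun i => i.elim0, fun i => i.elim0⟩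
    | succ n ih =>
        obtain ⟨w, ψ, hw, hψ, hd⟩ := ih
        obtain ⟨x, hxF₂, hxker, hxF₁⟩ := hstep_w n ψ
        have hφ₀ : ∃ φ₀ ∈ Φ, φ₀ x ≠ 0 := by
          by_contra h
          push_neg at h
          apply hxF₁
          rw [hF₁]
          simp only [Submodule.mem_iInf, LinearMap.mem_ker]
          exact h
        obtain ⟨φ₀, hφ₀Φ, hφ₀x⟩ := hφ₀
        set ψnew : Module.Dual ℂ V := (φ₀ x)⁻¹ • (φ₀ - ∑ j, φ₀ (w j) • ψ j) with hψnew
        have hψnew_w : ∀ j, ψnew (w j) = 0 := by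
          intro j
          rw [hψnew]
          simp only [LinearMap.smul_apply, LinearMap.sub_apply, LinearMap.coe_sum,
            Finset.sum_apply, LinearMap.smul_apply, smul_eq_mul]
          have : ∑ k, φ₀ (w k) * (ψ k) (w j) = φ₀ (w j) := by
            rw [Finset.sum_congr rfl (fun k _ => by rw [hd k j])]
            simp only [mul_ite, mul_one, mul_zero]
            rw [Finset.sum_ite_eq' Finset.univ j (fun k => φ₀ (w k))]
            simp
          rw [this, sub_self, mul_zero]
        have hψnew_x : ψnew x = 1 := by
          rw [hψnew]
          simp only [LinearMap.smul_apply, LinearMap.sub_apply, LinearMap.coe_sum,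
            Finset.sum_apply, LinearMap.smul_apply, smul_eq_mul]
          rw [Finset.sum_congr rfl (fun k _ => by rw [hxker k, mul_zero])]
          simp [inv_mul_cancel₀ hφ₀x]
        have hψnew_mem : ψnew ∈ Submodule.span ℂ Φ := by
          apply Submodule.smul_mem
          apply Submodule.sub_mem
          · exact Submodule.subset_span hφ₀Φ
          · exact Submodule.sum_mem _ (fun j _ => Submodule.smul_mem _ _ (hψ j))
        refine ⟨Fin.snoc w x, Fin.snoc ψ ψnew, ?_, ?_, ?_⟩
        · intro i
          refine Fin.lastCases ?_ ?_ i
          · rw [Fin.snoc_last]; exact hxF₂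
          · intro i'; rw [Fin.snoc_castSucc]; exact hw i'
        · intro i
          refine Fin.lastCases ?_ ?_ i
          · rw [Fin.snoc_last]; exact hψnew_mem
          · intro i'; rw [Fin.snoc_castSucc]; exact hψ i'
        · intro i j
          refine Fin.lastCases ?_ ?_ i
          · refine Fin.lastCases ?_ ?_ j
            · simp [Fin.snoc_last, hψnew_x]
            · intro j'
              simp only [Fin.snoc_last, Fin.snoc_castSucc]
              rw [hψnew_w j', if_neg (Fin.castSucc_lt_last j').ne']
          · intro i'
            refine Fin.lastCases ?_ ?_ j
            · simp only [Fin.snoc_last, Fin.snoc_castSucc]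
              rw [hxker i', if_neg (Fin.castSucc_lt_last i').ne]
            · intro j'
              simp only [Fin.snoc_castSucc]
              rw [hd i' j']
              simp [Fin.castSucc_inj]
  choose wf ψf hwmem hψmem hdual using hbio
  -- the sequence
  refine ⟨fun n => (F₂ ⊓ ⨅ i : Fin n, LinearMap.ker (ψf n i)) ⊔
      Submodule.span ℂ (v '' Set.Iio n), ?_, ?_, ?_⟩
  · -- Fs 0 = F₂
    show (F₂ ⊓ ⨅ i : Fin 0, LinearMap.ker (ψf 0 i)) ⊔
      Submodule.span ℂ (v '' Set.Iio 0) = F₂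
    have h1 : (⨅ i : Fin 0, LinearMap.ker (ψf 0 i)) = ⊤ := by
      apply iInf_of_empty
    have h2 : v '' Set.Iio 0 = ∅ := by
      have : Set.Iio 0 = (∅ : Set ℕ) := by ext k; simp
      rw [this, Set.image_empty]
    rw [h1, h2, Submodule.span_empty, inf_top_eq, sup_bot_eq]
  · -- commensurable
    intro n
    set K : Submodule ℂ V := ⨅ i : Fin n, LinearMap.ker (ψf n i) with hK
    set Vn : Submodule ℂ V := Submodule.span ℂ (v '' Set.Iio n) with hVn
    set Wn : Submodule ℂ V := Submodule.span ℂ (Set.range (wf n)) with hWn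
    obtain ⟨hbot, hfdVn, hrkVn⟩ := aux_v_rank F₂ v hv₂ n
    haveI := hfdVn
    haveI : FiniteDimensional ℂ Wn :=
      FiniteDimensional.span_of_finite ℂ (Set.finite_range (wf n))
    have hWnF₂ : Wn ≤ F₂ := by
      rw [hWn, Submodule.span_le]
      rintro _ ⟨i, rfl⟩
      exact hwmem n i
    have hF₁K : F₁ ≤ K := by
      intro x hx
      rw [hK]
      simp only [Submodule.mem_iInf, LinearMap.mem_ker]
      exact fun i => hker _ (hψmem n i) x hx
    -- G ⊔ Wn = F₂
    have hGWn : (F₂ ⊓ K) ⊔ Wn = F₂ := by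
      apply le_antisymm
      · exact sup_le inf_le_left hWnF₂
      · intro x hx
        have hdecomp : x = (x - ∑ i, (ψf n i x) • wf n i) + ∑ i, (ψf n i x) • wf n i := by
          abel
        rw [hdecomp]
        apply Submodule.add_mem_sup
        · refine ⟨Submodule.sub_mem _ hx (Submodule.sum_mem _ (fun i _ =>
            Submodule.smul_mem _ _ (hwmem n i))), ?_⟩
          rw [SetLike.mem_coe, Submodule.mem_iInf]
          intro j
          rw [LinearMap.mem_ker, map_sub, map_sum]
          have : ∑ i, (ψf n j) ((ψf n i x) • wf n i) = ψf n j x := by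
            rw [Finset.sum_congr rfl (fun i _ => by
              rw [map_smul, smul_eq_mul, hdual n j i])]
            simp only [mul_ite, mul_one, mul_zero]
            rw [Finset.sum_ite_eq Finset.univ j (fun i => ψf n i x)]
            simp
          rw [this, sub_self]
        · exact Submodule.sum_mem _ (fun i _ =>
            Submodule.smul_mem _ _ (Submodule.subset_span ⟨i, rfl⟩))
    -- Wn ⊓ K = ⊥
    have hWnK : Wn ⊓ K = ⊥ := by
      rw [Submodule.eq_bot_iff]
      rintro x ⟨hx1, hx2⟩
      have hx1' : x ∈ Submodule.span ℂ (Set.range (wf n)) := hx1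
      obtain ⟨c, rfl⟩ := (mem_span_range_iff_exists_fun ℂ).mp hx1'
      have hx2' : ∀ j, ψf n j (∑ i, c i • wf n i) = 0 := by
        have h2 : (∑ i, c i • wf n i) ∈ (⨅ i, LinearMap.ker (ψf n i) : Submodule ℂ V) := hx2
        rw [Submodule.mem_iInf] at h2
        exact fun j => h2 j
      have hc : ∀ j, c j = 0 := by
        intro j
        have := hx2' j
        rw [map_sum] at this
        rw [Finset.sum_congr rfl (fun i _ => by
          rw [map_smul, smul_eq_mul, hdual n j i])] at this
        simp only [mul_ite, mul_one, mul_zero] at this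
        rw [Finset.sum_ite_eq Finset.univ j (fun i => c i)] at this
        simpa using this
      simp [hc]
    -- linear independence of wf n, finrank Wn = n
    have hliw : LinearIndependent ℂ (wf n) := by
      rw [Fintype.linearIndependent_iff]
      intro c hc j
      have := congrArg (ψf n j) hc
      rw [map_sum, map_zero] at this
      rw [Finset.sum_congr rfl (fun i _ => by
        rw [map_smul, smul_eq_mul, hdual n j i])] at this
      simp only [mul_ite, mul_one, mul_zero] at this
      rw [Finset.sum_ite_eq Finset.univ j (fun i => c i)] at this
      simpa using this
    have hrkWn : Module.finrank ℂ Wn = n := by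
      rw [hWn, finrank_span_eq_card hliw, Fintype.card_fin]
    constructor
    · -- weakly compatible
      obtain ⟨S₀, hS₀le, hS₀fd⟩ := hF₂
      have hTex : ∀ i : Fin n, ∃ T : Finset ι, ∀ k ∉ T, ψf n i (E k) = 0 := by
        intro i
        apply aux_finite_support E
        have : ψf n i ∈ Vs := hVs ▸ Submodule.span_le.mpr hΦ (hψmem n i)
        rwa [hVs] at this
      choose T hT using hTex
      set Tset : Set ι := ⋃ i, (T i : Set ι) with hTset
      have hTfin : Tset.Finite := Set.finite_iUnion (fun i => (T i).finite_toSet)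
      set S : Set ι := S₀ \ Tset with hS
      refine ⟨S, ?_, ?_⟩
      · -- span(E''S) ≤ Fs n
        rw [Submodule.span_le]
        rintro _ ⟨k, hk, rfl⟩
        apply Submodule.mem_sup_left
        refine ⟨hS₀le (Submodule.subset_span ⟨k, hk.1, rfl⟩), ?_⟩
        rw [SetLike.mem_coe, Submodule.mem_iInf]
        intro i
        rw [LinearMap.mem_ker]
        apply hT i
        intro hkT
        exact hk.2 (Set.mem_iUnion.mpr ⟨i, hkT⟩)
      · -- finite codimension
        obtain ⟨W₀, hW₀fd, hW₀⟩ := aux_exists_compl F₂ _ hS₀le hS₀fd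
        have hTsub : FiniteDimensional ℂ (Submodule.span ℂ (⇑E '' (S₀ ∩ Tset))) :=
          FiniteDimensional.span_of_finite ℂ ((hTfin.subset Set.inter_subset_right).image _)
        have hsplit : Submodule.span ℂ (⇑E '' S₀) ≤
            Submodule.span ℂ (⇑E '' S) ⊔ Submodule.span ℂ (⇑E '' (S₀ ∩ Tset)) := by
          rw [Submodule.span_le]
          rintro _ ⟨k, hk, rfl⟩
          by_cases hkT : k ∈ Tset
          · exact Submodule.mem_sup_right (Submodule.subset_span ⟨k, ⟨hk, hkT⟩, rfl⟩)
          · exact Submodule.mem_sup_left (Submodule.subset_span ⟨k, ⟨hk, hkT⟩, rfl⟩)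
        set Wbig : Submodule ℂ V :=
          (Submodule.span ℂ (⇑E '' (S₀ ∩ Tset)) ⊔ W₀) ⊔ Vn with hWbig
        haveI : FiniteDimensional ℂ W₀ := hW₀fd
        haveI : FiniteDimensional ℂ Wbig := by
          haveI := hTsub
          infer_instance
        apply aux_fd_of_le_sup _ _ (Submodule.span ℂ (⇑E '' S)) Wbig
        · -- span(E''S) ≤ Fs n  (same as above)
          rw [Submodule.span_le]
          rintro _ ⟨k, hk, rfl⟩
          apply Submodule.mem_sup_left
          refine ⟨hS₀le (Submodule.subset_span ⟨k, hk.1, rfl⟩), ?_⟩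
          rw [SetLike.mem_coe, Submodule.mem_iInf]
          intro i
          rw [LinearMap.mem_ker]
          apply hT i
          intro hkT
          exact hk.2 (Set.mem_iUnion.mpr ⟨i, hkT⟩)
        · exact inf_le_right
        · exact this
        · -- Fs n ≤ span(E''S) ⊔ Wbig
          apply sup_le
          · calc F₂ ⊓ K ≤ F₂ := inf_le_left
            _ ≤ Submodule.span ℂ (⇑E '' S₀) ⊔ W₀ := hW₀
            _ ≤ (Submodule.span ℂ (⇑E '' S) ⊔ Submodule.span ℂ (⇑E '' (S₀ ∩ Tset))) ⊔ W₀ :=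
                sup_le_sup_right hsplit _
            _ ≤ Submodule.span ℂ (⇑E '' S) ⊔ Wbig := by
                rw [hWbig]
                apply sup_le
                · apply sup_le le_sup_left
                  intro x hx
                  exact Submodule.mem_sup_right (Submodule.mem_sup_left
                    (Submodule.mem_sup_left hx))
                · intro x hx
                  exact Submodule.mem_sup_right (Submodule.mem_sup_left
                    (Submodule.mem_sup_right hx))
          · intro x hx
            exact Submodule.mem_sup_right (Submodule.mem_sup_right hx)
    · -- the U
      refine ⟨Vn ⊔ Wn, by infer_instance, ?_, ?_⟩
      · -- F₂ ⊔ (Vn ⊔ Wn) = Fs n ⊔ (Vn ⊔ Wn)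
        apply le_antisymm
        · apply sup_le
          · conv_lhs => rw [← hGWn]
            apply sup_le
            · exact le_trans le_sup_left le_sup_left
            · exact le_trans (le_sup_right : Wn ≤ Vn ⊔ Wn) le_sup_right
          · exact le_sup_right
        · apply sup_le
          · apply sup_le
            · intro x hx
              exact Submodule.mem_sup_left (hx.1)
            · exact le_trans (le_sup_left : Vn ≤ Vn ⊔ Wn) le_sup_right
          · apply sup_le
            · exact le_trans (le_sup_left : Vn ≤ Vn ⊔ Wn) le_sup_right
            · exact le_trans hWnF₂ le_sup_left
      · -- finrank equality
        have hF₂U : F₂ ⊓ (Vn ⊔ Wn) = Wn := by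
          apply le_antisymm
          · rintro x ⟨hxF, hxU⟩
            obtain ⟨u, hu, z, hz, rfl⟩ := Submodule.mem_sup.mp hxU
            have huF : u ∈ F₂ := by
              have : u = (u + z) - z := by abel
              rw [this]
              exact Submodule.sub_mem _ hxF (hWnF₂ hz)
            have : u ∈ F₂ ⊓ Vn := ⟨huF, hu⟩
            rw [hbot] at this
            simp only [Submodule.mem_bot] at this
            rw [this, zero_add]
            exact hz
          · exact le_inf hWnF₂ le_sup_right
        have hFsF₂ : ((F₂ ⊓ K) ⊔ Vn) ⊓ F₂ = F₂ ⊓ K := by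
          rw [sup_inf_assoc_of_le Vn (inf_le_left : F₂ ⊓ K ≤ F₂)]
          rw [show Vn ⊓ F₂ = ⊥ by rw [inf_comm]; exact hbot, sup_bot_eq]
        have hFsU : ((F₂ ⊓ K) ⊔ Vn) ⊓ (Vn ⊔ Wn) = Vn := by
          apply le_antisymm
          · rintro x ⟨hxFs, hxU⟩
            obtain ⟨u, hu, z, hz, rfl⟩ := Submodule.mem_sup.mp hxU
            have hzFs : z ∈ (F₂ ⊓ K) ⊔ Vn := by
              have : z = (u + z) - u := by abel
              rw [this]
              exact Submodule.sub_mem _ hxFs (Submodule.mem_sup_right hu)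
            have hzG : z ∈ F₂ ⊓ K := by
              rw [← hFsF₂]
              exact ⟨hzFs, hWnF₂ hz⟩
            have : z ∈ Wn ⊓ K := ⟨hz, hzG.2⟩
            rw [hWnK] at this
            simp only [Submodule.mem_bot] at this
            rw [this, add_zero]
            exact hu
          · exact le_inf le_sup_right le_sup_left
        rw [hF₂U, hFsU, hrkWn, hrkVn]
  · -- strict monotonicity
    have hVnF₁ : ∀ n, Submodule.span ℂ (v '' Set.Iio n) ≤ F₁ := by
      intro n
      rw [Submodule.span_le]
      rintro _ ⟨k, _, rfl⟩
      exact hv₁ k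
    have hFsInter : ∀ n, F₁ ⊓ ((F₂ ⊓ ⨅ i : Fin n, LinearMap.ker (ψf n i)) ⊔
        Submodule.span ℂ (v '' Set.Iio n)) =
        (F₁ ⊓ F₂) ⊔ Submodule.span ℂ (v '' Set.Iio n) := by
      intro n
      have hF₁K : F₁ ≤ ⨅ i : Fin n, LinearMap.ker (ψf n i) := by
        intro x hx
        simp only [Submodule.mem_iInf, LinearMap.mem_ker]
        exact fun i => hker _ (hψmem n i) x hx
      rw [inf_comm,
        sup_comm (F₂ ⊓ ⨅ i : Fin n, LinearMap.ker (ψf n i)) (Submodule.span ℂ (v '' Set.Iio n)),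
        sup_inf_assoc_of_le _ (hVnF₁ n), sup_comm]
      congr 1
      apply le_antisymm
      · rintro x ⟨⟨hx2, _⟩, hx1⟩
        exact ⟨hx1, hx2⟩
      · rintro x ⟨hx1, hx2⟩
        exact ⟨⟨hx2, hF₁K hx1⟩, hx1⟩
    apply strictMono_nat_of_lt_succ
    intro n
    show F₁ ⊓ _ < F₁ ⊓ _
    rw [hFsInter n, hFsInter (n + 1)]
    apply lt_of_le_of_ne
    · apply sup_le_sup_left
      apply Submodule.span_mono
      apply Set.image_mono
      intro k hk
      exact lt_trans hk (Nat.lt_succ_self n)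
    · intro heq
      apply hv₂ n
      have hmem : v n ∈ (F₁ ⊓ F₂) ⊔ Submodule.span ℂ (v '' Set.Iio (n + 1)) := by
        apply Submodule.mem_sup_right
        apply Submodule.subset_span
        exact ⟨n, Nat.lt_succ_self n, rfl⟩
      rw [← heq] at hmem
      have : (F₁ ⊓ F₂) ⊔ Submodule.span ℂ (v '' Set.Iio n) ≤
          F₂ ⊔ Submodule.span ℂ (v '' Set.Iio n) :=
        sup_le_sup_right inf_le_right _
      exact this hmem
end

section
/- Let G be one of the ind-groups GL(∞), O(∞), Sp(∞), and let F₁, F₂ be subspaces of the natural representation V such that there exists a sequence {F^(n)}_{n≥0} of subspaces with F₁ ∩ F^(0) ⊊ F₁ ∩ F^(1) ⊊ ⋯ strictly increasing, and each F^(n) lies in the G-orbit of F₂ (under the natural action on subspaces). Then the subspaces F^(n) lie in pairwise distinct orbits of the stabilizer Stab_G(F₁). In particular Stab_G(F₁) has infinitely many orbits on the G-orbit of F₂. -/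
open Submodule

set_option synthInstance.maxHeartbeats 1000000 in
lemma key {ι V : Type*} [AddCommGroup V] [Module ℂ V] (E : Module.Basis ι ℂ V)
    (g : V ≃ₗ[ℂ] V) (hfix : {i | g (E i) ≠ E i}.Finite)
    (A : Submodule ℂ V) (hle : A ≤ A.map (g : V →ₗ[ℂ] V)) :
    A.map (g : V →ₗ[ℂ] V) = A := by
  set W : Submodule ℂ V := Submodule.span ℂ (E '' {i | g (E i) = E i}) with hW
  have hfixW : ∀ w ∈ W, g w = w := by
    intro w hw
    have : W ≤ LinearMap.eqLocus (g : V →ₗ[ℂ] V) LinearMap.id := by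
      rw [hW, span_le]
      rintro _ ⟨i, hi, rfl⟩
      exact hi
    exact this hw
  have hfixW' : ∀ w ∈ W, g.symm w = w := by
    intro w hw
    conv_lhs => rw [← hfixW w hw]
    exact g.symm_apply_apply w
  have gW : W.map (g : V →ₗ[ℂ] V) = W := by
    apply le_antisymm
    · rintro _ ⟨w, hw, rfl⟩
      show g w ∈ W
      rw [hfixW w hw]; exact hw
    · intro w hw; exact ⟨w, hw, hfixW w hw⟩
  -- quotient is finite dimensional
  have hfg : (⊤ : Submodule ℂ (V ⧸ W)).FG := by
    refine ⟨(hfix.image (fun i => W.mkQ (E i))).toFinset, ?_⟩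
    rw [Set.Finite.coe_toFinset]
    apply le_antisymm
    · exact le_top
    have htop : (⊤ : Submodule ℂ (V ⧸ W)) = (⊤ : Submodule ℂ V).map W.mkQ := by
      rw [Submodule.map_top, Submodule.range_mkQ]
    rw [htop, ← E.span_eq, Submodule.map_span, span_le]
    rintro _ ⟨_, ⟨i, rfl⟩, rfl⟩
    by_cases hi : g (E i) = E i
    · have h0 : W.mkQ (E i) = 0 := by
        rw [Submodule.mkQ_apply, Submodule.Quotient.mk_eq_zero]
        exact subset_span ⟨i, hi, rfl⟩
      rw [h0]; exact zero_mem _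
    · exact subset_span (Set.mem_image_of_mem _ hi)
  have hfin : FiniteDimensional ℂ (V ⧸ W) := ⟨hfg⟩
  set e : (V ⧸ W) ≃ₗ[ℂ] (V ⧸ W) := Submodule.Quotient.equiv W W g gW with he
  have hcomm : (e : (V⧸W) →ₗ[ℂ] (V⧸W)) ∘ₗ W.mkQ = W.mkQ ∘ₗ (g : V →ₗ[ℂ] V) := by
    ext x; rfl
  have himg : (A.map (g : V →ₗ[ℂ] V)).map W.mkQ
      = (A.map W.mkQ).map (e : (V⧸W) →ₗ[ℂ] (V⧸W)) := by
    rw [← Submodule.map_comp, ← Submodule.map_comp, hcomm]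
  have hrank : Module.finrank ℂ ((A.map (g : V →ₗ[ℂ] V)).map W.mkQ)
      = Module.finrank ℂ (A.map W.mkQ) := by
    rw [himg]
    exact LinearEquiv.finrank_map_eq e _
  have hle' : A.map W.mkQ ≤ (A.map (g : V →ₗ[ℂ] V)).map W.mkQ :=
    Submodule.map_mono hle
  have heq : A.map W.mkQ = (A.map (g : V →ₗ[ℂ] V)).map W.mkQ :=
    Submodule.eq_of_le_of_finrank_le hle' (le_of_eq hrank)
  -- now conclude
  apply le_antisymm _ hle
  rintro _ ⟨a, ha, rfl⟩
  have hmem : W.mkQ (g a) ∈ A.map W.mkQ := by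
    rw [heq]
    exact ⟨g a, ⟨a, ha, rfl⟩, rfl⟩
  obtain ⟨a', ha', heq'⟩ := hmem
  have hdiff : (g : V →ₗ[ℂ] V) a - a' ∈ W := by
    rw [← Submodule.Quotient.mk_eq_zero]
    have : W.mkQ ((g : V →ₗ[ℂ] V) a - a') = W.mkQ (g a) - W.mkQ a' := by
      simp
    rw [Submodule.mkQ_apply] at this
    rw [this, ← heq', sub_self]
  -- g a - a' ∈ map g A ⊓ W ≤ A
  have hdiffA : (g : V →ₗ[ℂ] V) a - a' ∈ A := by
    have hmapg : (g : V →ₗ[ℂ] V) a - a' ∈ A.map (g : V →ₗ[ℂ] V) :=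
      sub_mem ⟨a, ha, rfl⟩ (hle ha')
    obtain ⟨y, hy, hgy⟩ := hmapg
    have : y = (g : V →ₗ[ℂ] V) a - a' := by
      rw [← hgy] at hdiff ⊢
      conv_rhs => rw [← hfixW' _ hdiff]
      exact (g.symm_apply_apply y).symm
    rwa [this] at hy
  have hsum : (g : V →ₗ[ℂ] V) a = ((g : V →ₗ[ℂ] V) a - a') + a' := by abel
  rw [hsum]
  exact add_mem hdiffA ha'


private lemma mul_coe {V : Type*} [AddCommGroup V] [Module ℂ V] (g g' : V ≃ₗ[ℂ] V) :
    ((g' * g : V ≃ₗ[ℂ] V) : V →ₗ[ℂ] V) = (g' : V →ₗ[ℂ] V) ∘ₗ (g : V →ₗ[ℂ] V) := by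
  ext x; rfl

private lemma inv_map {V : Type*} [AddCommGroup V] [Module ℂ V] (g : V ≃ₗ[ℂ] V)
    (p q : Submodule ℂ V) (h : p.map (g : V →ₗ[ℂ] V) = q) :
    q.map ((g⁻¹ : V ≃ₗ[ℂ] V) : V →ₗ[ℂ] V) = p := by
  subst h
  rw [← Submodule.map_comp, ← mul_coe]
  simp



/-- Let `G` be a subgroup of `GL(V)` every element of which fixes all but
finitely many vectors of a basis `E` (e.g. `G = GL(∞), O(∞), Sp(∞)` in an admissible basis).
If `{F⁽ⁿ⁾}` is a sequence of subspaces, each in the `G`-orbit of `F₂`, with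
`F₁ ∩ F⁽⁰⁾ ⊊ F₁ ∩ F⁽¹⁾ ⊊ ⋯` strictly increasing, then the `F⁽ⁿ⁾` lie in pairwise distinct
orbits of `Stab_G(F₁)`; in particular `Stab_G(F₁)` has infinitely many orbits on the
`G`-orbit of `F₂`. -/
theorem stmt12 {ι V : Type*} [AddCommGroup V] [Module ℂ V]
    (E : Module.Basis ι ℂ V) (G : Subgroup (V ≃ₗ[ℂ] V))
    (hG : ∀ g ∈ G, {i | g (E i) ≠ E i}.Finite)
    (F₁ F₂ : Submodule ℂ V) (Fs : ℕ → Submodule ℂ V)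
    (hmono : StrictMono fun n => F₁ ⊓ Fs n)
    (horbit : ∀ n, ∃ g ∈ G, Submodule.map (g : V →ₗ[ℂ] V) F₂ = Fs n) :
    (∀ n m : ℕ, n ≠ m →
      ¬ ∃ g ∈ G, Submodule.map (g : V →ₗ[ℂ] V) F₁ = F₁ ∧
        Submodule.map (g : V →ₗ[ℂ] V) (Fs n) = Fs m) ∧
    Infinite (Quot fun
        (W W' : {W : Submodule ℂ V // ∃ g ∈ G, Submodule.map (g : V →ₗ[ℂ] V) F₂ = W}) =>
        ∃ g ∈ G, Submodule.map (g : V →ₗ[ℂ] V) F₁ = F₁ ∧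
          Submodule.map (g : V →ₗ[ℂ] V) W.1 = W'.1) := by
  -- no element of the stabilizer maps Fs n to Fs m for n < m
  have hlt : ∀ n m : ℕ, n < m →
      ¬ ∃ g ∈ G, Submodule.map (g : V →ₗ[ℂ] V) F₁ = F₁ ∧
        Submodule.map (g : V →ₗ[ℂ] V) (Fs n) = Fs m := by
    rintro n m hnm ⟨g, hg, h1, h2⟩
    have hinj : Function.Injective (g : V →ₗ[ℂ] V) := g.injective
    have hinf : (F₁ ⊓ Fs n).map (g : V →ₗ[ℂ] V) = F₁ ⊓ Fs m := by
      rw [Submodule.map_inf _ hinj, h1, h2]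
    have hstrict : F₁ ⊓ Fs n < (F₁ ⊓ Fs n).map (g : V →ₗ[ℂ] V) := by
      rw [hinf]; exact hmono hnm
    have hk := key E g (hG g hg) (F₁ ⊓ Fs n) hstrict.le
    exact absurd hk.symm (ne_of_lt hstrict)
  have hpair : ∀ n m : ℕ, n ≠ m →
      ¬ ∃ g ∈ G, Submodule.map (g : V →ₗ[ℂ] V) F₁ = F₁ ∧
        Submodule.map (g : V →ₗ[ℂ] V) (Fs n) = Fs m := by
    rintro n m hnm ⟨g, hg, h1, h2⟩
    rcases hnm.lt_or_gt with h | h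
    · exact hlt n m h ⟨g, hg, h1, h2⟩
    · exact hlt m n h ⟨g⁻¹, G.inv_mem hg, inv_map g F₁ F₁ h1, inv_map g (Fs n) (Fs m) h2⟩
  refine ⟨hpair, ?_⟩
  set r := fun (W W' : {W : Submodule ℂ V // ∃ g ∈ G, Submodule.map (g : V →ₗ[ℂ] V) F₂ = W}) =>
      ∃ g ∈ G, Submodule.map (g : V →ₗ[ℂ] V) F₁ = F₁ ∧
        Submodule.map (g : V →ₗ[ℂ] V) W.1 = W'.1 with hr
  have hequiv : Equivalence r := by
    constructor
    · intro W
      refine ⟨1, G.one_mem, ?_, ?_⟩ <;>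
        · show Submodule.map ((1 : V ≃ₗ[ℂ] V) : V →ₗ[ℂ] V) _ = _
          have : ((1 : V ≃ₗ[ℂ] V) : V →ₗ[ℂ] V) = LinearMap.id := rfl
          rw [this, Submodule.map_id]
    · rintro W W' ⟨g, hg, h1, h2⟩
      exact ⟨g⁻¹, G.inv_mem hg, inv_map g F₁ F₁ h1, inv_map g W.1 W'.1 h2⟩
    · rintro W W' W'' ⟨g, hg, h1, h2⟩ ⟨g', hg', h1', h2'⟩
      refine ⟨g' * g, G.mul_mem hg' hg, ?_, ?_⟩
      · rw [mul_coe, Submodule.map_comp, h1, h1']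
      · rw [mul_coe, Submodule.map_comp, h2, h2']
  have hinj : Function.Injective
      (fun n => Quot.mk r (⟨Fs n, horbit n⟩ :
        {W : Submodule ℂ V // ∃ g ∈ G, Submodule.map (g : V →ₗ[ℂ] V) F₂ = W})) := by
    intro n m h
    simp only [Quot.eq] at h
    have hrel : r ⟨Fs n, horbit n⟩ ⟨Fs m, horbit m⟩ := (hequiv.eqvGen_iff).mp h
    by_contra hne
    exact hpair n m hne hrel
  exact Infinite.of_injective _ hinj
end

section
/- Let M be a finite-dimensional complex vector space with a nondegenerate symmetric or symplectic bilinear form ω, and G(M,ω) the group of linear automorphisms preserving ω. Let I be a set with an involution i ↦ i*, and let {M_i}_{i∈I}, {M'_i}_{i∈I} be collections of subspaces with dim M_i = dim M'_i for all i, M_i^⊥ = M_{i*} and (M'_i)^⊥ = M'_{i*} for all i. If there exists g ∈ GL(M) with g(M_i) = M'_i for all i, then there exists h ∈ G(M,ω) with h(M_i) = M'_i for all i. -/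
open Polynomial

private lemma sqrt_pow (lam : ℂ) (hlam : lam ≠ 0) (k : ℕ) :
    ∃ p : ℂ[X], (X - C lam) ^ k ∣ p ^ 2 - X := by
  induction k with
  | zero => exact ⟨0, by simp⟩
  | succ k ih =>
    rcases Nat.eq_zero_or_pos k with hk | hk
    · subst hk
      obtain ⟨mu, hmu⟩ := IsAlgClosed.exists_pow_nat_eq lam (n := 2) (by norm_num)
      refine ⟨C mu, ⟨-1, ?_⟩⟩
      rw [pow_one, ← C_pow, hmu]
      ring
    · obtain ⟨p, hp⟩ := ih
      obtain ⟨r, hr⟩ := hp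
      have hdvd1 : (X - C lam) ∣ p ^ 2 - X := by
        refine dvd_trans ?_ ⟨r, hr⟩
        exact dvd_pow_self _ hk.ne'
      have heval : p.eval lam ^ 2 = lam := by
        obtain ⟨s, hs⟩ := hdvd1
        have := congrArg (Polynomial.eval lam) hs
        simp at this
        linear_combination this
      have hpl : p.eval lam ≠ 0 := by
        intro h; apply hlam; rw [← heval, h]; ring
      set c : ℂ := -(r.eval lam) / (2 * p.eval lam) with hc
      refine ⟨p + C c * (X - C lam) ^ k, ?_⟩
      have key : (p + C c * (X - C lam) ^ k) ^ 2 - X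
          = (X - C lam) ^ k * (r + 2 * C c * p) + C c ^ 2 * ((X - C lam) ^ k) ^ 2 := by
        linear_combination hr
      rw [key]
      refine dvd_add ?_ ?_
      · rw [pow_succ]
        refine mul_dvd_mul_left _ ?_
        refine dvd_iff_isRoot.mpr ?_
        show Polynomial.eval lam (r + 2 * C c * p) = 0
        simp only [eval_add, eval_mul, eval_ofNat, eval_C]
        rw [hc]
        field_simp
        ring
      · refine Dvd.dvd.mul_left ?_ _
        rw [← pow_mul]
        exact pow_dvd_pow _ (by omega)

private lemma sqrt_modeq_aux : ∀ (n : ℕ) (m : ℂ[X]), m.natDegree ≤ n → m.eval 0 ≠ 0 →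
    ∃ p : ℂ[X], m ∣ p ^ 2 - X := by
  intro n
  induction n with
  | zero =>
    intro m hdeg h0
    have hm : m = C (m.coeff 0) := m.eq_C_of_natDegree_eq_zero (Nat.le_zero.mp hdeg)
    have hne : m.coeff 0 ≠ 0 := by intro h; apply h0; rw [hm, h]; simp
    refine ⟨0, IsUnit.dvd ?_⟩
    rw [hm]; exact isUnit_C.mpr hne.isUnit
  | succ n ih =>
    intro m hdeg h0
    rcases Nat.eq_zero_or_pos m.natDegree with hd0 | hdpos
    · have hm : m = C (m.coeff 0) := m.eq_C_of_natDegree_eq_zero hd0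
      have hne : m.coeff 0 ≠ 0 := by intro h; apply h0; rw [hm, h]; simp
      refine ⟨0, IsUnit.dvd ?_⟩
      rw [hm]; exact isUnit_C.mpr hne.isUnit
    · have hm0 : m ≠ 0 := by intro h; apply h0; rw [h]; simp
      obtain ⟨lam, hlam_root⟩ := Complex.exists_root (f := m) (natDegree_pos_iff_degree_pos.mp hdpos)
      have hlam : lam ≠ 0 := by
        intro h; apply h0; rw [h] at hlam_root; exact hlam_root
      obtain ⟨q, hq, hndvd⟩ := m.exists_eq_pow_rootMultiplicity_mul_and_not_dvd hm0 lam
      set k := rootMultiplicity lam m with hkdef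
      have hk : 0 < k := (rootMultiplicity_pos hm0).mpr hlam_root
      have hq0 : q ≠ 0 := by intro h; apply hm0; rw [hq, h, mul_zero]
      have hqe0 : q.eval 0 ≠ 0 := by
        intro h; apply h0
        rw [hq]; simp [h]
      have hdegq : q.natDegree ≤ n := by
        have h1 : m.natDegree = k + q.natDegree := by
          rw [hq, natDegree_mul (pow_ne_zero _ (X_sub_C_ne_zero lam)) hq0,
            natDegree_pow, natDegree_X_sub_C, mul_one]
        omega
      obtain ⟨p₂, hp₂⟩ := ih q hdegq hqe0
      obtain ⟨p₁, hp₁⟩ := sqrt_pow lam hlam k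
      have hcop : IsCoprime ((X - C lam) ^ k) q :=
        IsCoprime.pow_left (((irreducible_X_sub_C lam).coprime_iff_not_dvd).mpr hndvd)
      obtain ⟨u, v, huv⟩ := id hcop
      set a := (X - C lam) ^ k with hadef
      refine ⟨p₁ * (v * q) + p₂ * (u * a), ?_⟩
      rw [hq]
      refine hcop.mul_dvd ?_ ?_
      · have h1 : (p₁ * (v * q) + p₂ * (u * a)) ^ 2 - X
            = ((p₂ - p₁) * (u * a)) * ((p₁ * (v * q) + p₂ * (u * a)) + p₁) + (p₁ ^ 2 - X) := by
          linear_combination ((p₁ * (v * q) + p₂ * (u * a)) + p₁) * p₁ * huv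
        rw [h1]
        exact dvd_add (Dvd.dvd.mul_right (Dvd.dvd.mul_left (dvd_mul_left a u) _) _) hp₁
      · have h1 : (p₁ * (v * q) + p₂ * (u * a)) ^ 2 - X
            = ((p₁ - p₂) * (v * q)) * ((p₁ * (v * q) + p₂ * (u * a)) + p₂) + (p₂ ^ 2 - X) := by
          linear_combination ((p₁ * (v * q) + p₂ * (u * a)) + p₂) * p₂ * huv
        rw [h1]
        exact dvd_add (Dvd.dvd.mul_right (Dvd.dvd.mul_left (dvd_mul_left q v) _) _) hp₂

private lemma sqrt_modeq (m : ℂ[X]) (h0 : m.eval 0 ≠ 0) : ∃ p : ℂ[X], m ∣ p ^ 2 - X :=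
  sqrt_modeq_aux m.natDegree m le_rfl h0

private lemma aeval_mem_of_mem {M : Type*} [AddCommGroup M] [Module ℂ M]
    (φ : M →ₗ[ℂ] M) (N : Submodule ℂ M) (hN : ∀ x ∈ N, φ x ∈ N) (p : ℂ[X]) :
    ∀ x ∈ N, (Polynomial.aeval φ p) x ∈ N := by
  have hpow : ∀ (n : ℕ), ∀ x ∈ N, (φ ^ n) x ∈ N := by
    intro n
    induction n with
    | zero => intro x hx; simpa using hx
    | succ n ih =>
      intro x hx
      rw [pow_succ, Module.End.mul_apply]
      exact ih _ (hN x hx)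
  induction p using Polynomial.induction_on' with
  | add p q hp hq =>
    intro x hx
    rw [map_add, LinearMap.add_apply]
    exact N.add_mem (hp x hx) (hq x hx)
  | monomial n a =>
    intro x hx
    rw [Polynomial.aeval_monomial, Module.End.mul_apply, Module.algebraMap_end_apply]
    exact N.smul_mem a (hpow n x hx)

private lemma aeval_selfadj {M : Type*} [AddCommGroup M] [Module ℂ M]
    (ω : LinearMap.BilinForm ℂ M) (φ : M →ₗ[ℂ] M)
    (hφ : ∀ x y, ω (φ x) y = ω x (φ y)) (p : ℂ[X]) :
    ∀ x y, ω ((Polynomial.aeval φ p) x) y = ω x ((Polynomial.aeval φ p) y) := by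
  have hpow : ∀ (n : ℕ) (x y : M), ω ((φ ^ n) x) y = ω x ((φ ^ n) y) := by
    intro n
    induction n with
    | zero => intro x y; simp
    | succ n ih =>
      intro x y
      have hcomm : ∀ z, φ ((φ ^ n) z) = (φ ^ n) (φ z) := by
        intro z
        rw [← Module.End.mul_apply, ← Module.End.mul_apply, ← pow_succ', pow_succ]
      rw [pow_succ, Module.End.mul_apply, Module.End.mul_apply, ih (φ x) y, hφ, hcomm]
  induction p using Polynomial.induction_on' with
  | add p q hp hq =>
    intro x y
    rw [map_add, LinearMap.add_apply, LinearMap.add_apply, map_add, LinearMap.add_apply]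
    rw [hp, hq]
    simp [map_add]
  | monomial n a =>
    intro x y
    rw [Polynomial.aeval_monomial, Module.End.mul_apply, Module.End.mul_apply,
      Module.algebraMap_end_apply, Module.algebraMap_end_apply,
      LinearMap.map_smul, LinearMap.smul_apply, map_smul, smul_eq_mul, smul_eq_mul, hpow]




/-- Let `M` be a finite-dimensional complex vector space with a
nondegenerate symmetric or alternating bilinear form `ω`.  Given an involution `i ↦ i*` of an
index set `I` and two collections of subspaces `{M_i}`, `{M'_i}` with `dim M_i = dim M'_i`,
`M_i^⊥ = M_{i*}`, `(M'_i)^⊥ = M'_{i*}`, if some `g ∈ GL(M)` maps `M_i` onto `M'_i` for every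
`i`, then some isometry `h ∈ G(M, ω)` does so. -/
theorem stmt13 {M : Type*} [AddCommGroup M] [Module ℂ M] [FiniteDimensional ℂ M]
    (ω : LinearMap.BilinForm ℂ M) (hnd : ω.Nondegenerate) (hsa : ω.IsSymm ∨ ω.IsAlt)
    {I : Type*} (st : I → I) (hst : ∀ i, st (st i) = i)
    (Mi Mi' : I → Submodule ℂ M)
    (hdim : ∀ i, Module.finrank ℂ (Mi i) = Module.finrank ℂ (Mi' i))
    (hperp : ∀ i, ω.orthogonal (Mi i) = Mi (st i))
    (hperp' : ∀ i, ω.orthogonal (Mi' i) = Mi' (st i))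
    (hg : ∃ g : M ≃ₗ[ℂ] M, ∀ i, Submodule.map (g : M →ₗ[ℂ] M) (Mi i) = Mi' i) :
    ∃ h : M ≃ₗ[ℂ] M, (∀ x y, ω (h x) (h y) = ω x y) ∧
      ∀ i, Submodule.map (h : M →ₗ[ℂ] M) (Mi i) = Mi' i := by
  classical
  obtain ⟨g, hgmap⟩ := hg
  set gl : M →ₗ[ℂ] M := (g : M →ₗ[ℂ] M) with hgl
  have hrefl : ω.IsRefl := hsa.elim (fun h => h.isRefl) (fun h => h.isRefl)
  set D := ω.toDual hnd with hDdef
  set adjg : M →ₗ[ℂ] M := D.symm.toLinearMap ∘ₗ gl.dualMap ∘ₗ D.toLinearMap with hadjgdef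
  have hDapp : ∀ a b : M, D a b = ω a b := fun a b => LinearMap.BilinForm.toDual_def hnd
  have hadj : ∀ x y, ω (adjg x) y = ω x (gl y) := by
    intro x y
    calc ω (adjg x) y = D (adjg x) y := (hDapp _ _).symm
      _ = D (D.symm (gl.dualMap (D x))) y := rfl
      _ = (gl.dualMap (D x)) y := by rw [D.apply_symm_apply]
      _ = D x (gl y) := rfl
      _ = ω x (gl y) := hDapp _ _
  set φ : M →ₗ[ℂ] M := adjg ∘ₗ gl with hφdef
  have hφω : ∀ x y, ω (φ x) y = ω (gl x) (gl y) := fun x y => hadj (gl x) y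
  have hφsa : ∀ x y, ω (φ x) y = ω x (φ y) := by
    intro x y
    rcases hsa with hsymm | halt
    · have hs : ∀ a b : M, ω a b = ω b a := fun a b => hsymm.eq a b
      calc ω (φ x) y = ω (gl x) (gl y) := hφω x y
        _ = ω (gl y) (gl x) := hs _ _
        _ = ω (φ y) x := (hφω y x).symm
        _ = ω x (φ y) := hs _ _
    · have hs : ∀ a b : M, ω a b = -ω b a := fun a b => (LinearMap.IsAlt.neg halt b a).symm
      calc ω (φ x) y = ω (gl x) (gl y) := hφω x y
        _ = -ω (gl y) (gl x) := hs _ _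
        _ = -ω (φ y) x := by rw [hφω y x]
        _ = ω x (φ y) := (hs x (φ y)).symm
  have hginv : ∀ i, ∀ n, n ∈ Mi i → gl n ∈ Mi' i := fun i n hn =>
    (hgmap i) ▸ Submodule.mem_map_of_mem hn
  have hMi_eq : ∀ i, Mi i = ω.orthogonal (Mi (st i)) := by
    intro i
    have := hperp (st i)
    rw [hst i] at this
    exact this.symm
  have hadjinv : ∀ i, ∀ z, z ∈ Mi' i → adjg z ∈ Mi i := by
    intro i z hz
    rw [hMi_eq i, LinearMap.BilinForm.mem_orthogonal_iff]
    intro n hn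
    apply hrefl
    rw [hadj z n]
    have h1 : gl n ∈ ω.orthogonal (Mi' i) := by
      rw [hperp' i]; exact hginv (st i) n hn
    exact h1 z hz
  have hφinv : ∀ i, ∀ x ∈ Mi i, φ x ∈ Mi i := fun i x hx => hadjinv i _ (hginv i x hx)
  have hadjinj : Function.Injective adjg := by
    rw [injective_iff_map_eq_zero] at *
    intro z hz
    apply hnd.1 z
    intro w
    have : ω z (gl (g.symm w)) = 0 := by
      rw [← hadj, hz]
      simp
    simpa only [hgl, LinearEquiv.coe_coe, LinearEquiv.apply_symm_apply] using this
  have hφinj : Function.Injective φ := by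
    intro a b hab
    exact g.injective (hadjinj hab)
  have hφbij : Function.Bijective φ := ⟨hφinj, LinearMap.injective_iff_surjective.mp hφinj⟩
  set m := minpoly ℂ φ with hmdef
  have hm0 : m ≠ 0 := minpoly.ne_zero_of_finite ℂ φ
  have hme : Polynomial.eval 0 m ≠ 0 := by
    intro h
    have hX : Polynomial.X ∣ m := by
      rw [Polynomial.X_dvd_iff, Polynomial.coeff_zero_eq_eval_zero]; exact h
    obtain ⟨q, hq⟩ := hX
    have haev : Polynomial.aeval φ m = 0 := minpoly.aeval ℂ φ
    rw [hq, map_mul, Polynomial.aeval_X] at haev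
    have hq0 : Polynomial.aeval φ q = 0 := by
      ext x
      have h1 : φ ((Polynomial.aeval φ q) x) = 0 := by
        have := congrArg (fun f : M →ₗ[ℂ] M => f x) haev
        simpa [Module.End.mul_apply] using this
      have h2 : φ ((Polynomial.aeval φ q) x) = φ 0 := by simpa using h1
      simpa using hφinj h2
    have hdvd := minpoly.dvd ℂ φ hq0
    have hq0' : q ≠ 0 := by rintro rfl; rw [mul_zero] at hq; exact hm0 hq
    have hle := Polynomial.natDegree_le_of_dvd hdvd hq0'
    rw [← hmdef] at hle
    have h2 : m.natDegree = 1 + q.natDegree := by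
      rw [hq, Polynomial.natDegree_mul Polynomial.X_ne_zero hq0', Polynomial.natDegree_X]
    omega
  obtain ⟨p, hpdvd⟩ := sqrt_modeq m hme
  set ψ : M →ₗ[ℂ] M := Polynomial.aeval φ p with hψdef
  have hψ2 : ψ * ψ = φ := by
    obtain ⟨t, ht⟩ := hpdvd
    have h1 : Polynomial.aeval φ (p ^ 2 - Polynomial.X) = 0 := by
      rw [ht, map_mul, hmdef, minpoly.aeval, zero_mul]
    have h2 : ψ * ψ - φ = 0 := by
      simpa [map_sub, map_pow, pow_two] using h1
    exact sub_eq_zero.mp h2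
  have hψinj : Function.Injective ψ := by
    intro a b hab
    apply hφinj
    show φ a = φ b
    rw [← hψ2]
    simp only [Module.End.mul_apply, hab]
  have hψbij : Function.Bijective ψ := ⟨hψinj, LinearMap.injective_iff_surjective.mp hψinj⟩
  set ψe : M ≃ₗ[ℂ] M := LinearEquiv.ofBijective ψ hψbij with hψedef
  have hψecoe : (ψe : M →ₗ[ℂ] M) = ψ := rfl
  have hψsa : ∀ x y, ω (ψ x) y = ω x (ψ y) := aeval_selfadj ω φ hφsa p
  have hψmap : ∀ i, Submodule.map (ψe : M →ₗ[ℂ] M) (Mi i) = Mi i := by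
    intro i
    have hle : Submodule.map (ψe : M →ₗ[ℂ] M) (Mi i) ≤ Mi i := by
      rintro _ ⟨x, hx, rfl⟩
      exact aeval_mem_of_mem φ (Mi i) (hφinv i) p x hx
    exact Submodule.eq_of_le_of_finrank_le hle (le_of_eq (LinearEquiv.finrank_map_eq ψe (Mi i)).symm)
  have hψsymm_map : ∀ i, Submodule.map (ψe.symm : M →ₗ[ℂ] M) (Mi i) = Mi i := by
    intro i
    conv_lhs => rw [← hψmap i]
    rw [← Submodule.map_comp]
    have hid : (ψe.symm : M →ₗ[ℂ] M) ∘ₗ (ψe : M →ₗ[ℂ] M) = LinearMap.id := by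
      ext x; simp
    rw [hid, Submodule.map_id]
  refine ⟨ψe.symm.trans g, ?_, ?_⟩
  · intro x y
    have hx : ψ (ψe.symm x) = x := ψe.apply_symm_apply x
    have hy : ψ (ψe.symm y) = y := ψe.apply_symm_apply y
    calc ω ((ψe.symm.trans g) x) ((ψe.symm.trans g) y)
        = ω (gl (ψe.symm x)) (gl (ψe.symm y)) := rfl
      _ = ω (φ (ψe.symm x)) (ψe.symm y) := (hφω _ _).symm
      _ = ω (ψ (ψ (ψe.symm x))) (ψe.symm y) := by rw [← hψ2]; rfl
      _ = ω (ψ x) (ψe.symm y) := by rw [hx]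
      _ = ω x (ψ (ψe.symm y)) := hψsa x _
      _ = ω x y := by rw [hy]
  · intro i
    have hcoe : ((ψe.symm.trans g : M ≃ₗ[ℂ] M) : M →ₗ[ℂ] M)
        = gl ∘ₗ (ψe.symm : M →ₗ[ℂ] M) := rfl
    rw [hcoe, Submodule.map_comp, hψsymm_map i]
    exact hgmap i
end

section
/- Let N be a finite-dimensional complex vector space, M a hyperplane, L a complementary line with basis vector e, and let g ∈ GL(N) with g(L) ≠ L; set K := L + g(L) (2-dimensional). Suppose {M_i}_{i∈I₀} are subspaces of M with g(M_i) ⊂ M for all i ∈ I₀, M₀ := Σ_{i∈I₀} M_i satisfies g(M₀) = M₀ and K ∩ M₀ = 0. Then there exists η ∈ GL(N) such that η restricted to M₀ is the identity, η(g(e)) ∈ L \ {0}, η(K) = K, and N = K + ker(η − id_N); consequently η fixes every subspace of N containing K whose intersection with a complement of K lies in ker(η − id). -/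
/-- Case 1 of the key linear-algebra lemma.  Let `N` be finite-dimensional,
`M` a hyperplane with complementary line `L = ℂe`, `g ∈ GL(N)` with `g(L) ≠ L`, and set
`K := L + g(L)`.  Suppose `{M_i}_{i∈I₀}` are subspaces of `M` with `g(M_i) ⊂ M`, and
`M₀ := Σ_i M_i` satisfies `g(M₀) = M₀` and `K ∩ M₀ = 0`.  Then there is `η ∈ GL(N)` which is
the identity on `M₀`, maps `g(e)` into `L \ {0}`, preserves `K`, satisfies
`N = K + ker(η − id)`, and consequently fixes every subspace of `N` containing `K`. -/
theorem stmt14 {N : Type*} [AddCommGroup N] [Module ℂ N] [FiniteDimensional ℂ N]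
    (M L : Submodule ℂ N) (hcompl : IsCompl M L)
    (e : N) (he : e ≠ 0) (heL : L = Submodule.span ℂ {e})
    (g : N ≃ₗ[ℂ] N) (hgL : Submodule.map (g : N →ₗ[ℂ] N) L ≠ L)
    {I₀ : Type*} (Mi : I₀ → Submodule ℂ N) (hMi : ∀ i, Mi i ≤ M)
    (hgMi : ∀ i, Submodule.map (g : N →ₗ[ℂ] N) (Mi i) ≤ M)
    (hM₀ : Submodule.map (g : N →ₗ[ℂ] N) (⨆ i, Mi i) = ⨆ i, Mi i)
    (hKM₀ : (L ⊔ Submodule.map (g : N →ₗ[ℂ] N) L) ⊓ (⨆ i, Mi i) = ⊥) :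
    ∃ η : N ≃ₗ[ℂ] N,
      (∀ x ∈ ⨆ i, Mi i, η x = x) ∧
      (η (g e) ∈ L ∧ η (g e) ≠ 0) ∧
      Submodule.map (η : N →ₗ[ℂ] N) (L ⊔ Submodule.map (g : N →ₗ[ℂ] N) L) =
        L ⊔ Submodule.map (g : N →ₗ[ℂ] N) L ∧
      (L ⊔ Submodule.map (g : N →ₗ[ℂ] N) L) ⊔
        LinearMap.ker ((η : N →ₗ[ℂ] N) - LinearMap.id) = ⊤ ∧
      ∀ W : Submodule ℂ N, (L ⊔ Submodule.map (g : N →ₗ[ℂ] N) L) ≤ W →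
        Submodule.map (η : N →ₗ[ℂ] N) W = W := by
  classical
  -- `g e ∉ L`
  have hmapL : Submodule.map (g : N →ₗ[ℂ] N) L = Submodule.span ℂ {g e} := by
    rw [heL, Submodule.map_span, Set.image_singleton]; rfl
  have hgeL : g e ∉ L := by
    intro hmem
    apply hgL
    apply Submodule.eq_of_le_of_finrank_le
    · rw [hmapL]
      exact (Submodule.span_singleton_le_iff_mem _ _).mpr hmem
    · exact (g.finrank_map_eq L).ge
  -- `e, g e` linearly independent
  have hge0 : g e ≠ 0 := fun h => he (g.injective (by simp [h]))
  have hli : LinearIndependent ℂ ![e, g e] := by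
    rw [linearIndependent_fin2]
    refine ⟨by simpa using hge0, fun a hae => ?_⟩
    simp only [Matrix.cons_val_one, Matrix.head_cons, Matrix.cons_val_zero] at hae
    rcases eq_or_ne a 0 with rfl | ha
    · simp at hae; exact he hae.symm
    · apply hgeL
      rw [heL]
      have h2 : g e = a⁻¹ • e := by
        have h3 : a⁻¹ • e = a⁻¹ • (a • g e) := by rw [hae]
        rw [h3, smul_smul, inv_mul_cancel₀ ha, one_smul]
      rw [h2]
      exact Submodule.smul_mem _ _ (Submodule.mem_span_singleton_self e)
  set K := L ⊔ Submodule.map (g : N →ₗ[ℂ] N) L with hKdef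
  have hK : K = Submodule.span ℂ (Set.range ![e, g e]) := by
    rw [hKdef, hmapL, heL]
    rw [show Set.range ![e, g e] = {e} ∪ {g e} by
      ext x; simp [Fin.exists_fin_two, Set.mem_union, eq_comm]]
    rw [Submodule.span_union]
  have heK : e ∈ K := hK ▸ Submodule.subset_span ⟨0, rfl⟩
  have hgeK : g e ∈ K := hK ▸ Submodule.subset_span ⟨1, rfl⟩
  -- basis of K
  let b : Module.Basis (Fin 2) ℂ (Submodule.span ℂ (Set.range ![e, g e])) := Module.Basis.span hli
  let φ₀ := b.equiv b (Equiv.swap 0 1)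
  let φ : K ≃ₗ[ℂ] K :=
    (LinearEquiv.ofEq _ _ hK).trans (φ₀.trans (LinearEquiv.ofEq _ _ hK.symm))
  have h01 : φ₀ (b 0) = b 1 := by
    rw [show φ₀ (b 0) = b ((Equiv.swap 0 1) 0) from Module.Basis.equiv_apply b 0 b _,
      Equiv.swap_apply_left]
  have h10 : φ₀ (b 1) = b 0 := by
    rw [show φ₀ (b 1) = b ((Equiv.swap 0 1) 1) from Module.Basis.equiv_apply b 1 b _,
      Equiv.swap_apply_right]
  have hb0 : (LinearEquiv.ofEq _ _ hK) ⟨e, heK⟩ = b 0 := by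
    apply Subtype.ext; simp [b, Module.Basis.span_apply]
  have hb1 : (LinearEquiv.ofEq _ _ hK) ⟨g e, hgeK⟩ = b 1 := by
    apply Subtype.ext; simp [b, Module.Basis.span_apply]
  have hφe : (φ ⟨e, heK⟩ : N) = g e := by
    simp only [φ, LinearEquiv.trans_apply, hb0, h01]
    simp [b, Module.Basis.span_apply]
  have hφge : (φ ⟨g e, hgeK⟩ : N) = e := by
    simp only [φ, LinearEquiv.trans_apply, hb1, h10]
    simp [b, Module.Basis.span_apply]
  -- complement of K containing M₀
  set M₀ := ⨆ i, Mi i with hM₀def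
  obtain ⟨C', hC'⟩ := Submodule.exists_isCompl (K ⊔ M₀)
  set C := M₀ ⊔ C' with hCdef
  have hM₀C : M₀ ≤ C := le_sup_left
  have hKC : IsCompl K C := by
    constructor
    · exact (Submodule.disjoint_def.mpr fun x hx hx' =>
        (Submodule.mem_bot ℂ).mp (hKM₀ ▸ Submodule.mem_inf.mpr ⟨hx, hx'⟩)
        ).disjoint_sup_right_of_disjoint_sup_left hC'.disjoint
    · rw [codisjoint_iff, hCdef, ← sup_assoc, ← codisjoint_iff]
      exact hC'.codisjoint
  -- the automorphism η
  let P := Submodule.prodEquivOfIsCompl K C hKC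
  let η : N ≃ₗ[ℂ] N := P.symm.trans ((φ.prodCongr (LinearEquiv.refl ℂ C)).trans P)
  have hηadd : ∀ (k : K) (c : C), η ((k : N) + (c : N)) = (φ k : N) + (c : N) := by
    intro k c
    have h1 : P (k, c) = (k : N) + (c : N) := by
      simp [P, Submodule.coe_prodEquivOfIsCompl]
    have h2 : P.symm ((k : N) + (c : N)) = (k, c) := by
      rw [← h1, LinearEquiv.symm_apply_apply]
    simp [η, h2, P, Submodule.coe_prodEquivOfIsCompl]
  have hηC : ∀ c ∈ C, η c = c := by
    intro c hc
    have := hηadd 0 ⟨c, hc⟩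
    simpa using this
  have hηK : ∀ k : K, η (k : N) = (φ k : N) := by
    intro k
    have := hηadd k 0
    simpa using this
  refine ⟨η, ?_, ?_, ?_, ?_, ?_⟩
  · exact fun x hx => hηC x (hM₀C hx)
  · have : η (g e) = e := by rw [hηK ⟨g e, hgeK⟩, hφge]
    rw [this]
    exact ⟨heL ▸ Submodule.mem_span_singleton_self e, he⟩
  · apply le_antisymm
    · rintro _ ⟨x, hx, rfl⟩
      rw [LinearEquiv.coe_coe, hηK ⟨x, hx⟩]
      exact (φ ⟨x, hx⟩).2
    · intro y hy
      refine ⟨(φ.symm ⟨y, hy⟩ : N), (φ.symm ⟨y, hy⟩).2, ?_⟩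
      rw [LinearEquiv.coe_coe, hηK (φ.symm ⟨y, hy⟩)]
      simp
  · rw [← top_le_iff, ← codisjoint_iff.mp hKC.codisjoint]
    apply sup_le_sup_left
    intro c hc
    simp only [LinearMap.mem_ker, LinearMap.sub_apply, LinearMap.id_apply,
      LinearEquiv.coe_coe, hηC c hc, sub_self]
  · intro W hKW
    have hdecomp : ∀ x ∈ W, ∃ k : K, ∃ c : C, (c : N) ∈ W ∧ x = (k : N) + (c : N) := by
      intro x hx
      obtain ⟨y, hy, z, hz, hyz⟩ :=
        Submodule.mem_sup.mp (show x ∈ K ⊔ C by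
          rw [codisjoint_iff.mp hKC.codisjoint]; exact Submodule.mem_top)
      refine ⟨⟨y, hy⟩, ⟨z, hz⟩, ?_, hyz.symm⟩
      show z ∈ W
      rw [eq_sub_of_add_eq' hyz]
      exact Submodule.sub_mem W hx (hKW hy)
    apply le_antisymm
    · rintro _ ⟨x, hx, rfl⟩
      obtain ⟨k, c, hcW, rfl⟩ := hdecomp x hx
      rw [LinearEquiv.coe_coe, hηadd k c]
      exact Submodule.add_mem W (hKW (φ k).2) hcW
    · intro y hy
      obtain ⟨k, c, hcW, rfl⟩ := hdecomp y hy
      refine ⟨(φ.symm k : N) + (c : N),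
        Submodule.add_mem W (hKW (φ.symm k).2) hcW, ?_⟩
      rw [LinearEquiv.coe_coe, hηadd (φ.symm k) c]
      simp
end

section
/- Let G be the ind-group GL(∞) (union of GL_n via standard embeddings) acting on the ind-variety X = lim X(n), where X(n) ↪ X(n+1) are the embeddings of products of partial flag varieties induced by adding one basis vector e (each flag component is extended either unchanged or by adding e to each subspace from some index on). If two points F, F' ∈ X(n) have images in X(n+1) lying in the same GL(span E_{n+1})-orbit, then F, F' lie in the same GL(span E_n)-orbit. Consequently the induced map of orbit sets X(n)/G(n) → X(n+1)/G(n+1) is injective. -/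
open Submodule Module

section Helpers

variable {N : Type*} [AddCommGroup N] [Module ℂ N]

lemma mem_map_subtype_iff' (M : Submodule ℂ N) (P : Submodule ℂ ↥M) (y : ↥M) :
    (y : N) ∈ P.map M.subtype ↔ y ∈ P := by
  constructor
  · rintro ⟨z, hz, hez⟩
    rwa [show z = y from Subtype.coe_injective hez] at hz
  · intro hy; exact ⟨y, hy, rfl⟩

lemma mem_of_mem_sup_span' {M : Submodule ℂ N} {e : N} (he : e ∉ M)
    {P : Submodule ℂ N} (hPM : P ≤ M) {x : N} (hx : x ∈ P ⊔ span ℂ {e}) (hxM : x ∈ M) :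
    x ∈ P := by
  rcases mem_sup.mp hx with ⟨p, hp, z, hz, rfl⟩
  rcases mem_span_singleton.mp hz with ⟨c, rfl⟩
  rcases eq_or_ne c 0 with rfl | hc
  · simpa using hp
  · exfalso
    apply he
    have h1 : c • e ∈ M := by
      have := M.sub_mem hxM (hPM hp); simpa using this
    have := M.smul_mem c⁻¹ h1
    simpa [smul_smul, inv_mul_cancel₀ hc] using this

/-- A "transvection" `x ↦ x + c x • u` with `c u = 0` is a linear automorphism. -/
noncomputable def transvec (c : N →ₗ[ℂ] ℂ) (u : N) (hcu : c u = 0) : N ≃ₗ[ℂ] N :=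
  LinearEquiv.ofLinear (LinearMap.id + c.smulRight u) (LinearMap.id - c.smulRight u)
    (by ext x; simp [hcu, smul_smul, sub_smul, add_smul])
    (by ext x; simp [hcu, smul_smul, sub_smul, add_smul])

lemma transvec_apply (c : N →ₗ[ℂ] ℂ) (u : N) (hcu : c u = 0) (x : N) :
    transvec c u hcu x = x + c x • u := rfl

lemma transvec_symm_apply (c : N →ₗ[ℂ] ℂ) (u : N) (hcu : c u = 0) (x : N) :
    (transvec c u hcu).symm x = x - c x • u := rfl

lemma map_symm_map' (f : N ≃ₗ[ℂ] N) (P : Submodule ℂ N) :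
    Submodule.map (f.symm : N →ₗ[ℂ] N) (Submodule.map (f : N →ₗ[ℂ] N) P) = P := by
  apply le_antisymm
  · rintro _ ⟨_, ⟨y, hy, rfl⟩, rfl⟩
    simpa using hy
  · intro x hx
    exact ⟨f x, mem_map_of_mem hx, f.symm_apply_apply x⟩

lemma map_eq_self_of_fixed {f : N ≃ₗ[ℂ] N} {P : Submodule ℂ N}
    (hf : ∀ x ∈ P, f x = x) : Submodule.map (f : N →ₗ[ℂ] N) P = P := by
  apply le_antisymm
  · rintro _ ⟨x, hx, rfl⟩
    rw [show (f : N →ₗ[ℂ] N) x = x from hf x hx]; exact hx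
  · intro x hx
    exact ⟨x, hx, hf x hx⟩

lemma map_eq_self_of_invariant {f : N ≃ₗ[ℂ] N} {P : Submodule ℂ N}
    (h1 : ∀ x ∈ P, f x ∈ P) (h2 : ∀ x ∈ P, f.symm x ∈ P) :
    Submodule.map (f : N →ₗ[ℂ] N) P = P := by
  apply le_antisymm
  · rintro _ ⟨x, hx, rfl⟩
    exact h1 x hx
  · intro x hx
    exact ⟨f.symm x, h2 x hx, f.apply_symm_apply x⟩

end Helpers

section Key

variable {N : Type*} [AddCommGroup N] [Module ℂ N] [FiniteDimensional ℂ N]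

lemma finrank_eq_of_maps (M : Submodule ℂ N) (e : N) (he : e ∉ M)
    {I : Type*} (I₀ : Set I) (F F' : I → Submodule ℂ ↥M) (g : N ≃ₗ[ℂ] N)
    (h0 : ∀ i ∈ I₀, Submodule.map (g : N →ₗ[ℂ] N) (Submodule.map M.subtype (F i)) =
        Submodule.map M.subtype (F' i))
    (h1 : ∀ i ∉ I₀, Submodule.map (g : N →ₗ[ℂ] N)
          (Submodule.map M.subtype (F i) ⊔ Submodule.span ℂ {e}) =
        Submodule.map M.subtype (F' i) ⊔ Submodule.span ℂ {e}) (i : I) :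
    finrank ℂ (F i) = finrank ℂ (F' i) := by
  have he0 : e ≠ 0 := fun h => he (h ▸ M.zero_mem)
  have hdisj : ∀ P : Submodule ℂ ↥M, Disjoint (Submodule.map M.subtype P) (span ℂ {e}) :=
    fun P => Disjoint.mono_left (map_subtype_le M P)
      ((disjoint_span_singleton' he0).mpr he)
  have hfr : ∀ P : Submodule ℂ ↥M,
      finrank ℂ (Submodule.map M.subtype P ⊔ span ℂ {e} : Submodule ℂ N) = finrank ℂ P + 1 := by
    intro P
    have h := Submodule.finrank_sup_add_finrank_inf_eq (Submodule.map M.subtype P) (span ℂ {e})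
    rw [(hdisj P).eq_bot] at h
    simpa [finrank_span_singleton he0, finrank_map_subtype_eq] using h
  by_cases hi : i ∈ I₀
  · have h2 := LinearEquiv.finrank_map_eq g (Submodule.map M.subtype (F i))
    rw [h0 i hi] at h2
    rw [← M.finrank_map_subtype_eq (F i), ← M.finrank_map_subtype_eq (F' i), h2]
  · have h2 := LinearEquiv.finrank_map_eq g (Submodule.map M.subtype (F i) ⊔ span ℂ {e})
    rw [h1 i hi, hfr, hfr] at h2
    omega

lemma key_s15 (M : Submodule ℂ N) (e : N) (he : e ∉ M) (hspan : M ⊔ Submodule.span ℂ {e} = ⊤)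
    {I : Type*} (I₀ : Set I) (F F' : I → Submodule ℂ ↥M)
    (g : N ≃ₗ[ℂ] N) (hge : g.symm e ∉ M)
    (h0 : ∀ i ∈ I₀, Submodule.map (g : N →ₗ[ℂ] N) (Submodule.map M.subtype (F i)) =
        Submodule.map M.subtype (F' i))
    (h1 : ∀ i ∉ I₀, Submodule.map (g : N →ₗ[ℂ] N)
          (Submodule.map M.subtype (F i) ⊔ Submodule.span ℂ {e}) =
        Submodule.map M.subtype (F' i) ⊔ Submodule.span ℂ {e}) :
    ∃ h : ↥M ≃ₗ[ℂ] ↥M, ∀ i, Submodule.map (h : ↥M →ₗ[ℂ] ↥M) (F i) = F' i := by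
  have he0 : e ≠ 0 := fun h => he (h ▸ M.zero_mem)
  have hcompl : IsCompl M (span ℂ {e}) :=
    ⟨(disjoint_span_singleton' he0).mpr he, codisjoint_iff.mpr hspan⟩
  set π := M.linearProjOfIsCompl (span ℂ {e}) hcompl with hπ
  set h₀ : ↥M →ₗ[ℂ] ↥M := π ∘ₗ (g : N →ₗ[ℂ] N) ∘ₗ M.subtype with hh₀
  have hker : LinearMap.ker h₀ = ⊥ := by
    rw [eq_bot_iff]
    intro x hx
    have hx' : π (g ↑x) = 0 := hx
    have hq : (g ↑x : N) ∈ span ℂ {e} :=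
      (linearProjOfIsCompl_apply_eq_zero_iff hcompl).mp hx'
    rcases mem_span_singleton.mp hq with ⟨c, hc⟩
    rcases eq_or_ne c 0 with rfl | hcne
    · have hgx : g (↑x : N) = 0 := by simpa using hc.symm
      have hx0 : (x : N) = 0 := g.injective (by rw [hgx, map_zero])
      have : x = 0 := Subtype.coe_injective (by simpa using hx0)
      simp [this]
    · exfalso
      apply hge
      have h2 : g.symm (c • e) = (x : N) := by rw [hc]; exact g.symm_apply_apply _
      have h3 : g.symm e = c⁻¹ • (x : N) := by
        rw [map_smul] at h2
        rw [← h2, smul_smul, inv_mul_cancel₀ hcne, one_smul]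
      rw [h3]
      exact M.smul_mem _ x.2
  have hinj : Function.Injective h₀ := LinearMap.ker_eq_bot.mp hker
  have hsurj : Function.Surjective h₀ := (LinearMap.injective_iff_surjective).mp hinj
  set h : ↥M ≃ₗ[ℂ] ↥M := LinearEquiv.ofBijective h₀ ⟨hinj, hsurj⟩ with hh
  have hcoe : (h : ↥M →ₗ[ℂ] ↥M) = h₀ := rfl
  have hle : ∀ i, Submodule.map h₀ (F i) ≤ F' i := by
    intro i
    rintro _ ⟨x, hx, rfl⟩
    by_cases hi : i ∈ I₀
    · have hm : (g ↑x : N) ∈ Submodule.map M.subtype (F' i) := by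
        rw [← h0 i hi]
        exact mem_map_of_mem ((mem_map_subtype_iff' M (F i) x).mpr hx)
      rcases hm with ⟨z, hz, hez⟩
      have : h₀ x = z := by
        show π (g ↑x) = z
        rw [← hez]
        exact linearProjOfIsCompl_apply_left hcompl z
      rw [this]; exact hz
    · have hm : (g ↑x : N) ∈ Submodule.map M.subtype (F' i) ⊔ span ℂ {e} := by
        rw [← h1 i hi]
        exact mem_map_of_mem (mem_sup_left ((mem_map_subtype_iff' M (F i) x).mpr hx))
      rcases mem_sup.mp hm with ⟨a, ha, b, hb, hab⟩
      rcases ha with ⟨z, hz, rfl⟩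
      have : h₀ x = z := by
        show π (g ↑x) = z
        rw [← hab, map_add, show π b = 0 from linearProjOfIsCompl_apply_right' hcompl hb, add_zero]
        exact linearProjOfIsCompl_apply_left hcompl z
      rw [this]; exact hz
  have heq : ∀ i, Submodule.map h₀ (F i) = F' i := by
    intro i
    apply Submodule.eq_of_le_of_finrank_le (hle i)
    have h2 : finrank ℂ (Submodule.map h₀ (F i)) = finrank ℂ (F i) := by
      rw [← hcoe]; exact LinearEquiv.finrank_map_eq h (F i)
    rw [h2, finrank_eq_of_maps M e he I₀ F F' g h0 h1 i]
  exact ⟨h, fun i => by rw [hcoe]; exact heq i⟩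

end Key

/-- key lemma in type A.  Let `M = span Eₙ` be a hyperplane of the
finite-dimensional space `N = span Eₙ₊₁ = M ⊕ ℂe`.  A point of `X(n)` is a collection
`{F_i}` of subspaces of `M`; its image in `X(n+1)` is the collection with `i`-th member
`F_i` for `i ∈ I₀` and `F_i ⊕ ℂe` for `i ∉ I₀`.  If the images of two points `F, F'` lie in
the same `GL(N)`-orbit, then `F, F'` lie in the same `GL(M)`-orbit; consequently the induced
map of orbit sets `X(n)/G(n) → X(n+1)/G(n+1)` is injective. -/
theorem stmt15 {N : Type*} [AddCommGroup N] [Module ℂ N] [FiniteDimensional ℂ N]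
    (M : Submodule ℂ N) (e : N) (he : e ∉ M) (hspan : M ⊔ Submodule.span ℂ {e} = ⊤)
    {I : Type*} (I₀ : Set I) (F F' : I → Submodule ℂ ↥M)
    (hg : ∃ g : N ≃ₗ[ℂ] N,
      (∀ i ∈ I₀, Submodule.map (g : N →ₗ[ℂ] N) (Submodule.map M.subtype (F i)) =
        Submodule.map M.subtype (F' i)) ∧
      (∀ i ∉ I₀, Submodule.map (g : N →ₗ[ℂ] N)
          (Submodule.map M.subtype (F i) ⊔ Submodule.span ℂ {e}) =
        Submodule.map M.subtype (F' i) ⊔ Submodule.span ℂ {e})) :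
    ∃ h : ↥M ≃ₗ[ℂ] ↥M, ∀ i, Submodule.map (h : ↥M →ₗ[ℂ] ↥M) (F i) = F' i := by
  obtain ⟨g, hg0, hg1⟩ := hg
  have he0 : e ≠ 0 := fun h => he (h ▸ M.zero_mem)
  have hcompl : IsCompl M (span ℂ {e}) :=
    ⟨(disjoint_span_singleton' he0).mpr he, codisjoint_iff.mpr hspan⟩
  by_cases hs : g.symm e ∈ M
  · by_cases hgeM : g e ∈ M
    · -- both `g⁻¹ e` and `g e` lie in `M`: correct `g` by a transvection.
      set c : N →ₗ[ℂ] ℂ := (LinearEquiv.coord ℂ N e he0 : (span ℂ {e} : Submodule ℂ N) →ₗ[ℂ] ℂ)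
        ∘ₗ (span ℂ {e}).linearProjOfIsCompl M hcompl.symm with hc
      have cM : ∀ x ∈ M, c x = 0 := by
        intro x hx
        show (LinearEquiv.coord ℂ N e he0)
          ((span ℂ {e}).linearProjOfIsCompl M hcompl.symm x) = 0
        rw [show (span ℂ {e}).linearProjOfIsCompl M hcompl.symm x = 0 from
          linearProjOfIsCompl_apply_right' hcompl.symm hx, map_zero]
      have ce : c e = 1 := by
        show (LinearEquiv.coord ℂ N e he0)
          ((span ℂ {e}).linearProjOfIsCompl M hcompl.symm e) = 1
        rw [show (span ℂ {e}).linearProjOfIsCompl M hcompl.symm e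
            = ⟨e, mem_span_singleton_self e⟩ from
          linearProjOfIsCompl_apply_left hcompl.symm ⟨e, mem_span_singleton_self e⟩]
        exact LinearEquiv.coord_self ℂ N e he0
      set u := g e with hu
      have hcu : c u = 0 := cM u hgeM
      set τ := transvec c u hcu with hτ
      set g' : N ≃ₗ[ℂ] N := g.trans τ with hg'
      have hg'coe : (g' : N →ₗ[ℂ] N) = (τ : N →ₗ[ℂ] N) ∘ₗ (g : N →ₗ[ℂ] N) := rfl
      -- u lies in every F'_i for i ∉ I₀
      have huF : ∀ i ∉ I₀, u ∈ Submodule.map M.subtype (F' i) := by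
        intro i hi
        have : u ∈ Submodule.map M.subtype (F' i) ⊔ span ℂ {e} := by
          rw [← hg1 i hi]
          exact mem_map_of_mem (mem_sup_right (mem_span_singleton_self e))
        exact mem_of_mem_sup_span' he (map_subtype_le M (F' i)) this hgeM
      -- τ fixes subspaces of M pointwise
      have hτfix : ∀ P : Submodule ℂ ↥M,
          Submodule.map (τ : N →ₗ[ℂ] N) (Submodule.map M.subtype P) = Submodule.map M.subtype P := by
        intro P
        apply map_eq_self_of_fixed
        intro x hx
        rw [transvec_apply, cM x (map_subtype_le M P hx), zero_smul, add_zero]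
      -- τ preserves F'_i ⊕ ℂe for i ∉ I₀
      have hτsup : ∀ i ∉ I₀,
          Submodule.map (τ : N →ₗ[ℂ] N) (Submodule.map M.subtype (F' i) ⊔ span ℂ {e})
            = Submodule.map M.subtype (F' i) ⊔ span ℂ {e} := by
        intro i hi
        apply map_eq_self_of_invariant
        · intro x hx
          rw [transvec_apply]
          exact add_mem hx (Submodule.smul_mem _ _ (mem_sup_left (huF i hi)))
        · intro x hx
          rw [transvec_symm_apply]
          exact sub_mem hx (Submodule.smul_mem _ _ (mem_sup_left (huF i hi)))
      have hG0 : ∀ i ∈ I₀, Submodule.map (g' : N →ₗ[ℂ] N) (Submodule.map M.subtype (F i)) =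
          Submodule.map M.subtype (F' i) := by
        intro i hi
        rw [hg'coe, Submodule.map_comp, hg0 i hi, hτfix]
      have hG1 : ∀ i ∉ I₀, Submodule.map (g' : N →ₗ[ℂ] N)
          (Submodule.map M.subtype (F i) ⊔ span ℂ {e}) =
          Submodule.map M.subtype (F' i) ⊔ span ℂ {e} := by
        intro i hi
        rw [hg'coe, Submodule.map_comp, hg1 i hi, hτsup i hi]
      have hsymm : g'.symm e ∉ M := by
        have h1 : τ.symm e = e - u := by
          rw [transvec_symm_apply, ce, one_smul]
        have h2 : g'.symm e = g.symm e - e := by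
          show g.symm (τ.symm e) = g.symm e - e
          rw [h1, map_sub, hu, g.symm_apply_apply]
        rw [h2]
        intro hmem
        exact he (by simpa using M.sub_mem hs hmem)
      exact key_s15 M e he hspan I₀ F F' g' hsymm hG0 hG1
    · -- `g e ∉ M`: apply the key lemma to `g.symm` with `F` and `F'` interchanged.
      have hsymm : g.symm.symm e ∉ M := by simpa using hgeM
      have hG0 : ∀ i ∈ I₀, Submodule.map (g.symm : N →ₗ[ℂ] N) (Submodule.map M.subtype (F' i)) =
          Submodule.map M.subtype (F i) := by
        intro i hi
        rw [← hg0 i hi, map_symm_map']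
      have hG1 : ∀ i ∉ I₀, Submodule.map (g.symm : N →ₗ[ℂ] N)
          (Submodule.map M.subtype (F' i) ⊔ span ℂ {e}) =
          Submodule.map M.subtype (F i) ⊔ span ℂ {e} := by
        intro i hi
        rw [← hg1 i hi, map_symm_map']
      obtain ⟨h, hh⟩ := key_s15 M e he hspan I₀ F' F g.symm hsymm hG0 hG1
      refine ⟨h.symm, fun i => ?_⟩
      rw [← hh i]
      exact map_symm_map' (N := ↥M) h (F' i)
  · exact key_s15 M e he hspan I₀ F F' g hs hg0 hg1
end
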